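/- arXiv:2007.04468 — 9 statements merged into one kernel-verified Lean document; each statement's English description precedes it below -/
import Mathlib

section
/- Let H be a graph whose vertex set is partitioned into ℓ ≥ 1 classes V_1, …, V_ℓ, each of which induces a clique in H. Let G be the graph obtained from H by adding ℓ+1 new vertices v_0, v_1, …, v_ℓ, where for each i ∈ {1,…,ℓ} the vertex v_i is adjacent exactly to the vertices of V_i, the vertex v_0 is adjacent exactly to all vertices of H, and no other edges are added; let K = {v_0, v_1, …, v_ℓ}. Then there exists a set S with K ⊆ S ⊆ V(G) such that the induced subgraph G[S] is a tree if and only if H contains an independent set I with |I ∩ V_i| = 1 for every i ∈ {1,…,ℓ}. -/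
open SimpleGraph

/-- The graph `G` of the Multicolored Independent Set reduction: start from `H`
(whose vertex set is partitioned by `c` into `ℓ` clique classes), add `ℓ + 1`
new vertices `v_0, v_1, …, v_ℓ` (encoded as `Sum.inr j` for `j : Fin (ℓ+1)`),
where `v_i` (for `1 ≤ i ≤ ℓ`) is adjacent exactly to the class `V_i`, and `v_0`
is adjacent exactly to all of `V(H)`; no other edges are added. -/
def misReductionGraph (ℓ : ℕ) {V : Type} (H : SimpleGraph V) (c : V → Fin ℓ) :
    SimpleGraph (V ⊕ Fin (ℓ + 1)) :=
  SimpleGraph.fromRel (fun a b =>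
    match a, b with
    | Sum.inl u, Sum.inl w => H.Adj u w
    | Sum.inl u, Sum.inr j => j = 0 ∨ (j : ℕ) = (c u : ℕ) + 1
    | Sum.inr _, _ => False)


lemma tree_of_parent {W : Type} (G : SimpleGraph W) (r : W) (f : W → W) (d : W → ℕ)
    (hfr : f r = r)
    (hadj : ∀ x, x ≠ r → G.Adj x (f x))
    (hd : ∀ x, x ≠ r → d (f x) < d x)
    (hup : ∀ x y, G.Adj x y → f x = y ∨ f y = x) :
    G.IsTree := by
  have key : ∀ n, ∀ x : W, d x < n → G.Reachable x r := by
    intro n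
    induction n with
    | zero => intro x hx; omega
    | succ n ih =>
      intro x hx
      by_cases h : x = r
      · subst h; rfl
      · exact (hadj x h).reachable.trans (ih (f x) (by have := hd x h; omega))
  classical
  haveI : Nonempty W := ⟨r⟩
  refine ⟨⟨fun x y => ?_⟩, ?_⟩
  · exact (key (d x + 1) x (by omega)).trans (key (d y + 1) y (by omega)).symm
  · intro v p hp
    obtain ⟨m, hm, hmax⟩ := p.support.toFinset.exists_max_image d
      ⟨v, by simp [Walk.start_mem_support]⟩
    rw [List.mem_toFinset] at hm
    have hmax' : ∀ a ∈ p.support, d a ≤ d m := fun a ha =>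
      hmax a (List.mem_toFinset.mpr ha)
    -- rotate the cycle to start at m
    have hc' : (p.rotate m hm).IsCycle := hp.rotate hm
    have hsup : ∀ a ∈ (p.rotate m hm).support, d a ≤ d m := by
      intro a ha
      rw [Walk.support_eq_cons, List.mem_cons] at ha
      rcases ha with rfl | ha
      · exact le_refl _
      · exact hmax' a (List.mem_of_mem_tail
          (((Walk.support_rotate p m hm).mem_iff).mp ha))
    -- the parent of any point on the cycle adjacent to m must be f m
    have hpar : ∀ a ∈ (p.rotate m hm).support, G.Adj m a → f m = a := by
      intro a ha hadj'
      rcases hup m a hadj' with h | h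
      · exact h
      · exfalso
        by_cases har : a = r
        · subst har
          rw [hfr] at h
          subst h
          exact hadj'.ne rfl
        · have hlt := hd a har
          rw [h] at hlt
          exact absurd (hsup a ha) (by omega)
    generalize hq : p.rotate m hm = p' at hc' hsup hpar
    clear hq hmax hmax' hm hp
    cases p' with
    | nil => exact hc'.ne_nil rfl
    | cons h q =>
      obtain ⟨hqp, hqe⟩ := (Walk.cons_isCycle_iff q h).mp hc'
      obtain ⟨z, hz, q'', hq''⟩ := Walk.exists_eq_cons_of_ne (h.ne.symm ∘ Eq.symm) q.reverse
      have hw : f m = _ := hpar _ (by simp) h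
      have hzsup : z ∈ (Walk.cons h q).support := by
        have : z ∈ q.reverse.support := by rw [hq'']; simp
        rw [Walk.support_reverse, List.mem_reverse] at this
        simp [this]
      have hz' : f m = z := hpar z hzsup hz
      apply hqe
      have : s(m, z) ∈ q.reverse.edges := by rw [hq'']; simp
      rw [Walk.edges_reverse, List.mem_reverse] at this
      rw [← (hw.symm.trans hz')] at this
      exact this

lemma misAdj_ll (ℓ : ℕ) {V : Type} (H : SimpleGraph V) (c : V → Fin ℓ) (u w : V) :
    (misReductionGraph ℓ H c).Adj (Sum.inl u) (Sum.inl w) ↔ H.Adj u w := by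
  simp only [misReductionGraph, fromRel_adj, ne_eq, Sum.inl.injEq]
  constructor
  · rintro ⟨hne, h | h⟩
    · exact h
    · exact h.symm
  · exact fun h => ⟨h.ne, Or.inl h⟩

lemma misAdj_lr (ℓ : ℕ) {V : Type} (H : SimpleGraph V) (c : V → Fin ℓ) (u : V) (j : Fin (ℓ+1)) :
    (misReductionGraph ℓ H c).Adj (Sum.inl u) (Sum.inr j) ↔ (j = 0 ∨ (j : ℕ) = (c u : ℕ) + 1) := by
  simp [misReductionGraph, fromRel_adj]

lemma misAdj_rl (ℓ : ℕ) {V : Type} (H : SimpleGraph V) (c : V → Fin ℓ) (u : V) (j : Fin (ℓ+1)) :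
    (misReductionGraph ℓ H c).Adj (Sum.inr j) (Sum.inl u) ↔ (j = 0 ∨ (j : ℕ) = (c u : ℕ) + 1) := by
  rw [adj_comm]; exact misAdj_lr ℓ H c u j

lemma misAdj_rr (ℓ : ℕ) {V : Type} (H : SimpleGraph V) (c : V → Fin ℓ) (j j' : Fin (ℓ+1)) :
    ¬ (misReductionGraph ℓ H c).Adj (Sum.inr j) (Sum.inr j') := by
  simp [misReductionGraph, fromRel_adj]


/-- There is an induced tree of `G` containing all terminals `K = {v_0, …, v_ℓ}`
iff `H` has an independent set meeting every clique class exactly once. -/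
theorem stmt0 (ℓ : ℕ) (hℓ : 1 ≤ ℓ) (V : Type) [Fintype V]
    (H : SimpleGraph V) (c : V → Fin ℓ)
    (hclique : ∀ i : Fin ℓ, H.IsClique {v | c v = i}) :
    (∃ S : Set (V ⊕ Fin (ℓ + 1)),
        Set.range Sum.inr ⊆ S ∧ ((misReductionGraph ℓ H c).induce S).IsTree) ↔
    (∃ I : Set V, (∀ u ∈ I, ∀ w ∈ I, ¬ H.Adj u w) ∧
        ∀ i : Fin ℓ, ∃! u, u ∈ I ∧ c u = i) := by
  classical
  constructor
  · rintro ⟨S, hK, ht⟩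
    have h0 : (Sum.inr 0 : V ⊕ Fin (ℓ+1)) ∈ S := hK ⟨0, rfl⟩
    have hind : ∀ u, Sum.inl u ∈ S → ∀ w, Sum.inl w ∈ S → ¬ H.Adj u w := by
      intro u hu w hw hadj
      set Gi := (misReductionGraph ℓ H c).induce S with hGi
      have h1 : Gi.Adj ⟨Sum.inl u, hu⟩ ⟨Sum.inl w, hw⟩ := (misAdj_ll ℓ H c u w).mpr hadj
      have h2 : Gi.Adj ⟨Sum.inl u, hu⟩ ⟨Sum.inr 0, h0⟩ := (misAdj_lr ℓ H c u 0).mpr (Or.inl rfl)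
      have h3 : Gi.Adj ⟨Sum.inr 0, h0⟩ ⟨Sum.inl w, hw⟩ := (misAdj_rl ℓ H c w 0).mpr (Or.inl rfl)
      have hp1 : (Walk.cons h1 Walk.nil).IsPath := by
        simp [Walk.isPath_def, Subtype.ext_iff, hadj.ne]
      have hp2 : (Walk.cons h2 (Walk.cons h3 Walk.nil)).IsPath := by
        simp [Walk.isPath_def, Subtype.ext_iff, hadj.ne]
      have := isAcyclic_iff_path_unique.mp ht.IsAcyclic ⟨_, hp1⟩ ⟨_, hp2⟩
      have hlen := congrArg (fun P : Gi.Path _ _ => P.1.length) this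
      simp [Walk.length_cons] at hlen
    refine ⟨{u | Sum.inl u ∈ S}, fun u hu w hw => hind u hu w hw, fun i => ?_⟩
    have hi : (Sum.inr i.succ : V ⊕ Fin (ℓ+1)) ∈ S := hK ⟨i.succ, rfl⟩
    have hne : (⟨Sum.inr i.succ, hi⟩ : ↥S) ≠ ⟨Sum.inr 0, h0⟩ := by
      simp [Subtype.ext_iff, Fin.succ_ne_zero]
    obtain ⟨p⟩ := ht.isConnected.preconnected ⟨Sum.inr i.succ, hi⟩ ⟨Sum.inr 0, h0⟩
    obtain ⟨b, hb, q, -⟩ := Walk.exists_eq_cons_of_ne hne p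
    obtain ⟨bv, hbS⟩ := b
    have hb' : (misReductionGraph ℓ H c).Adj (Sum.inr i.succ) bv := hb
    obtain ⟨a, rfl⟩ : ∃ a, bv = Sum.inl a := by
      cases bv with
      | inl a => exact ⟨a, rfl⟩
      | inr j => exact absurd hb' (misAdj_rr ℓ H c _ _)
    have hca : c a = i := by
      rcases (misAdj_rl ℓ H c a i.succ).mp hb' with h | h
      · exact absurd h (Fin.succ_ne_zero i)
      · rw [Fin.val_succ] at h
        exact Fin.ext (by omega)
    refine ⟨a, ⟨hbS, hca⟩, ?_⟩
    rintro w ⟨hw, hcw⟩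
    by_contra hwa
    exact hind w hw a hbS (hclique i (by simp [hcw]) (by simp [hca]) hwa)
  · rintro ⟨I, hind, hmeet⟩
    choose u hu1 hu2 using fun i => (hmeet i).exists
    set S : Set (V ⊕ Fin (ℓ+1)) := (Sum.inl '' I) ∪ Set.range Sum.inr with hS
    have h0 : (Sum.inr 0 : V ⊕ Fin (ℓ+1)) ∈ S := Or.inr ⟨0, rfl⟩
    have hmemu : ∀ i, (Sum.inl (u i) : V ⊕ Fin (ℓ+1)) ∈ S := fun i => Or.inl ⟨u i, hu1 i, rfl⟩
    have hinI : ∀ w, (Sum.inl w : V ⊕ Fin (ℓ+1)) ∈ S → w ∈ I := by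
      rintro w (⟨w', hw', hww⟩ | ⟨j, hj⟩)
      · cases hww; exact hw'
      · exact absurd hj (by simp)
    refine ⟨S, ?_, ?_⟩
    · rintro x ⟨j, rfl⟩; exact Or.inr ⟨j, rfl⟩
    apply tree_of_parent _ (⟨Sum.inr 0, h0⟩ : ↥S)
      (fun x => match x with
        | ⟨Sum.inl _, _⟩ => ⟨Sum.inr 0, h0⟩
        | ⟨Sum.inr j, _⟩ => if h : j = 0 then ⟨Sum.inr 0, h0⟩
            else ⟨Sum.inl (u (j.pred h)), hmemu _⟩)
      (fun x => match x with
        | ⟨Sum.inl _, _⟩ => 1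
        | ⟨Sum.inr j, _⟩ => if j = 0 then 0 else 2)
    · simp
    · rintro ⟨val, hval⟩ hxr
      cases val with
      | inl w => exact (misAdj_lr ℓ H c w 0).mpr (Or.inl rfl)
      | inr j =>
        have hj : j ≠ 0 := fun h => hxr (Subtype.ext (by simp [h]))
        simp only [dif_neg hj]
        refine (misAdj_rl ℓ H c _ j).mpr (Or.inr ?_)
        rw [hu2]
        have : (j : ℕ) ≠ 0 := Fin.val_ne_zero_iff.mpr hj
        simp [Fin.coe_pred]
        omega
    · rintro ⟨val, hval⟩ hxr
      cases val with
      | inl w => simp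
      | inr j =>
        have hj : j ≠ 0 := fun h => hxr (Subtype.ext (by simp [h]))
        simp [dif_neg hj, hj]
    · have key : ∀ (a : V) (ha : Sum.inl a ∈ S) (j : Fin (ℓ+1)) (hjS : Sum.inr j ∈ S),
          (misReductionGraph ℓ H c).Adj (Sum.inl a) (Sum.inr j) →
          (if h : j = 0 then (⟨Sum.inr 0, h0⟩ : ↥S) else ⟨Sum.inl (u (j.pred h)), hmemu _⟩)
            = ⟨Sum.inl a, ha⟩ ∨ (⟨Sum.inr j, hjS⟩ : ↥S) = (⟨Sum.inr 0, h0⟩ : ↥S) := by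
        intro a ha j hjS hadj
        rcases (misAdj_lr ℓ H c a j).mp hadj with h | h
        · exact Or.inr (Subtype.ext (by simp [h]))
        · left
          have hj : j ≠ 0 := by
            rintro rfl; simp at h
          rw [dif_neg hj]
          refine Subtype.ext ?_
          have hpred : j.pred hj = c a := by
            have : (j : ℕ) ≠ 0 := Fin.val_ne_zero_iff.mpr hj
            refine Fin.ext ?_
            simp [Fin.coe_pred]
            omega
          rw [hpred]
          have : a = u (c a) := (hmeet (c a)).unique ⟨hinI a ha, rfl⟩ ⟨hu1 _, hu2 _⟩
          simp [← this]
      rintro ⟨xv, hx⟩ ⟨yv, hy⟩ hxy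
      cases xv with
      | inl a =>
        cases yv with
        | inl b =>
          exact absurd ((misAdj_ll ℓ H c a b).mp hxy) (hind a (hinI a hx) b (hinI b hy))
        | inr j =>
          rcases key a hx j hy hxy with h | h
          · exact Or.inr h
          · exact Or.inl (by simpa [Subtype.ext_iff] using h.symm)
      | inr j =>
        cases yv with
        | inl b =>
          rcases key b hy j hx hxy.symm with h | h
          · exact Or.inl h
          · exact Or.inr (by simpa [Subtype.ext_iff] using h.symm)
        | inr j' => exact absurd hxy (misAdj_rr ℓ H c j j')
end

section
/- Let H be a graph whose vertex set is partitioned into ℓ ≥ 1 classes V_1, …, V_ℓ, each of which induces a clique in H, and let G and K = {v_0, v_1, …, v_ℓ} be as in the Multicolored Independent Set reduction (v_i adjacent exactly to V_i for i ∈ {1,…,ℓ}, v_0 adjacent exactly to all of V(H)). Then: (1) every set S with K ⊆ S ⊆ V(G) such that G[S] is a tree satisfies that S ∩ V(H) is an independent set of H with |S ∩ V_i| = 1 for every i, and hence |S| = 2ℓ + 1; and (2) the ℓ+1 cliques {v_0}, V_1 ∪ {v_1}, …, V_ℓ ∪ {v_ℓ} partition V(G), so G admits a clique cover of size ℓ+1.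 -/
open SimpleGraph

def misCover (ℓ : ℕ) {V : Type} (c : V → Fin ℓ) (j : Fin (ℓ + 1)) :
    Set (V ⊕ Fin (ℓ + 1)) :=
  {w | w = Sum.inr j ∨ ∃ u : V, w = Sum.inl u ∧ (c u : ℕ) + 1 = (j : ℕ)}

private lemma misNeighbor {α : Type} (G : SimpleGraph α) (a b : α)
    (h : G.Reachable a b) (hne : a ≠ b) : ∃ x, G.Adj a x := by
  obtain ⟨p⟩ := h
  cases p with
  | nil => exact absurd rfl hne
  | cons h _ => exact ⟨_, h⟩

/-- (1) Every induced tree of `G` containing all terminals `K = {v_0, …, v_ℓ}`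
intersects `V(H)` in an independent set having exactly one vertex per clique
class, and hence has exactly `2ℓ + 1` vertices; and (2) the `ℓ + 1` cliques
`{v_0}, V_1 ∪ {v_1}, …, V_ℓ ∪ {v_ℓ}` partition `V(G)`. -/
theorem stmt1 (ℓ : ℕ) (hℓ : 1 ≤ ℓ) (V : Type) [Fintype V]
    (H : SimpleGraph V) (c : V → Fin ℓ)
    (hclique : ∀ i : Fin ℓ, H.IsClique {v | c v = i}) :
    (∀ S : Set (V ⊕ Fin (ℓ + 1)),
        Set.range Sum.inr ⊆ S → ((misReductionGraph ℓ H c).induce S).IsTree →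
        (∀ u, Sum.inl u ∈ S → ∀ w, Sum.inl w ∈ S → ¬ H.Adj u w) ∧
        (∀ i : Fin ℓ, ∃! u, Sum.inl u ∈ S ∧ c u = i) ∧
        S.ncard = 2 * ℓ + 1) ∧
    ((∀ j : Fin (ℓ + 1), (misReductionGraph ℓ H c).IsClique (misCover ℓ c j)) ∧
      ∀ w : V ⊕ Fin (ℓ + 1), ∃! j : Fin (ℓ + 1), w ∈ misCover ℓ c j) := by
  constructor
  · intro S hK hT
    set G' := (misReductionGraph ℓ H c).induce S with hG'
    have hz0 : Sum.inr (0 : Fin (ℓ+1)) ∈ S := hK ⟨0, rfl⟩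
    -- independence
    have hadj : ∀ u, Sum.inl u ∈ S → ∀ w, Sum.inl w ∈ S → ¬ H.Adj u w := by
      intro u hu w hw huw
      have hne : u ≠ w := huw.ne
      have hab : G'.Adj ⟨Sum.inl u, hu⟩ ⟨Sum.inl w, hw⟩ := by
        show (misReductionGraph ℓ H c).Adj (Sum.inl u) (Sum.inl w)
        rw [misReductionGraph, fromRel_adj]
        exact ⟨by simp [hne], Or.inl huw⟩
      have haz : G'.Adj ⟨Sum.inl u, hu⟩ ⟨Sum.inr 0, hz0⟩ := by
        show (misReductionGraph ℓ H c).Adj (Sum.inl u) (Sum.inr 0)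
        rw [misReductionGraph, fromRel_adj]
        exact ⟨by simp, Or.inl (Or.inl rfl)⟩
      have hzb : G'.Adj ⟨Sum.inr 0, hz0⟩ ⟨Sum.inl w, hw⟩ := by
        show (misReductionGraph ℓ H c).Adj (Sum.inr 0) (Sum.inl w)
        rw [misReductionGraph, fromRel_adj]
        exact ⟨by simp, Or.inr (Or.inl rfl)⟩
      have hp2 : (Walk.cons haz (Walk.cons hzb Walk.nil)).IsPath := by
        simp [Walk.isPath_def, Walk.support_cons]
        exact hne
      have heq := isAcyclic_iff_path_unique.mp hT.IsAcyclic
        (Path.singleton hab) ⟨Walk.cons haz (Walk.cons hzb Walk.nil), hp2⟩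
      have hl := congrArg (fun p => p.val.length) heq
      simp [Path.singleton] at hl
    -- existence and uniqueness per class
    have hex : ∀ i : Fin ℓ, ∃! u, Sum.inl u ∈ S ∧ c u = i := by
      intro i
      have hji : (i : ℕ) + 1 < ℓ + 1 := by omega
      set j : Fin (ℓ+1) := ⟨(i : ℕ) + 1, hji⟩ with hj
      have hjS : Sum.inr j ∈ S := hK ⟨j, rfl⟩
      obtain ⟨u, hu, hcu⟩ : ∃ u, Sum.inl u ∈ S ∧ c u = i := by
        obtain ⟨x, hx⟩ := misNeighbor G' ⟨Sum.inr j, hjS⟩ ⟨Sum.inr 0, hz0⟩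
          (hT.isConnected.preconnected _ _)
          (by simp [Subtype.ext_iff, hj, Fin.ext_iff])
        have hadj' : (misReductionGraph ℓ H c).Adj (Sum.inr j) x.1 := hx
        rw [misReductionGraph, fromRel_adj] at hadj'
        obtain ⟨hne', hrel⟩ := hadj'
        obtain ⟨u, hxu⟩ : ∃ u, x.1 = Sum.inl u := by
          cases hxx : x.1 with
          | inl u => exact ⟨u, rfl⟩
          | inr j' => rw [hxx] at hrel; simp at hrel
        rw [hxu] at hrel
        have hrel' : False ∨ (j = 0 ∨ (j : ℕ) = (c u : ℕ) + 1) := hrel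
        rcases hrel' with h | h
        · exact absurd h (by simp)
        rcases h with h0 | hcu1
        · exfalso
          have := congrArg Fin.val h0
          simp [hj] at this
        · refine ⟨u, ?_, ?_⟩
          · rw [← hxu]; exact x.2
          · have : (c u : ℕ) = (i : ℕ) := by
              have hjv : (j : ℕ) = (i : ℕ) + 1 := rfl
              omega
            exact Fin.ext this
      refine ⟨u, ⟨hu, hcu⟩, ?_⟩
      rintro u' ⟨hu', hcu'⟩
      by_contra hne
      exact hadj u' hu' u hu (hclique i (by simp [hcu']) (by simp [hcu]) hne)
    refine ⟨hadj, hex, ?_⟩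
    -- cardinality
    classical
    set f : Fin ℓ → V := fun i => (hex i).choose with hf
    have hfS : ∀ i, Sum.inl (f i) ∈ S := fun i => (hex i).choose_spec.1.1
    have hfc : ∀ i, c (f i) = i := fun i => (hex i).choose_spec.1.2
    have hfu : ∀ i u, Sum.inl u ∈ S → c u = i → u = f i := fun i u h1 h2 =>
      (hex i).choose_spec.2 u ⟨h1, h2⟩
    have hS : S = Set.range (Sum.inr : Fin (ℓ+1) → V ⊕ Fin (ℓ+1)) ∪
        Sum.inl '' Set.range f := by
      apply Set.Subset.antisymm
      · rintro (u | j) hx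
        · exact Or.inr ⟨u, ⟨c u, (hfu (c u) u hx rfl).symm⟩, rfl⟩
        · exact Or.inl ⟨j, rfl⟩
      · rintro x (⟨j, rfl⟩ | ⟨u, ⟨i, rfl⟩, rfl⟩)
        · exact hK ⟨j, rfl⟩
        · exact hfS i
    have hfinj : Function.Injective f := by
      intro i i' h
      rw [← hfc i, ← hfc i', h]
    have h1 : (Set.range (Sum.inr : Fin (ℓ+1) → V ⊕ Fin (ℓ+1))).ncard = ℓ + 1 := by
      rw [← Set.image_univ, Set.ncard_image_of_injective _ Sum.inr_injective,
        Set.ncard_univ]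
      simp
    have h2 : (Sum.inl '' Set.range f : Set (V ⊕ Fin (ℓ+1))).ncard = ℓ := by
      rw [Set.ncard_image_of_injective _ Sum.inl_injective, ← Set.image_univ,
        Set.ncard_image_of_injective _ hfinj, Set.ncard_univ]
      simp
    rw [hS, Set.ncard_union_eq (by simp [Set.disjoint_left]) (Set.toFinite _)
      (Set.toFinite _), h1, h2]
    omega
  · constructor
    · intro j a ha b hb hne
      rcases ha with ha | ⟨u, rfl, hu⟩ <;> rcases hb with hb | ⟨w, hw, hw2⟩
      · exact absurd (ha.trans hb.symm) hne
      · subst ha hw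
        rw [misReductionGraph, fromRel_adj]
        exact ⟨hne, Or.inr (Or.inr hw2.symm)⟩
      · subst hb
        rw [misReductionGraph, fromRel_adj]
        exact ⟨hne, Or.inl (Or.inr hu.symm)⟩
      · subst hw
        have hcc : c u = c w := Fin.ext (by omega)
        have hne' : u ≠ w := fun h => hne (by rw [h])
        rw [misReductionGraph, fromRel_adj]
        exact ⟨by simp [hne'], Or.inl (hclique (c u) rfl hcc.symm hne')⟩
    · rintro (u | j)
      · have hcl : (c u : ℕ) + 1 < ℓ + 1 := by have := (c u).2; omega
        refine ⟨⟨(c u : ℕ) + 1, hcl⟩, Or.inr ⟨u, rfl, rfl⟩, ?_⟩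
        rintro j' (h | ⟨u', h1, h2⟩)
        · exact absurd h (by simp)
        · obtain rfl : u = u' := Sum.inl_injective h1
          exact Fin.ext h2.symm
      · refine ⟨j, Or.inl rfl, ?_⟩
        rintro j' (h | ⟨u', h1, h2⟩)
        · exact (Sum.inr_injective h).symm
        · exact absurd h1 (by simp)
end

section
/- Let G be a graph, K ⊆ V(G), and let v be a vertex of G with degree exactly one, with unique neighbor u. Define K' = (K ∖ {v}) ∪ {u} if v ∈ K, and K' = K otherwise. Then there exists a set S with K ⊆ S ⊆ V(G) such that G[S] is a tree if and only if there exists a set S' with K' ⊆ S' ⊆ V(G) ∖ {v} such that (G − v)[S'] is a tree. -/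
open SimpleGraph

section Helpers

variable {V : Type} {G : SimpleGraph V}

/-- Restrict a walk in `G.induce A` whose support lies in `B ⊆ A` to a walk in `G.induce B`. -/
def restrictWalk {A B : Set V} (hAB : B ⊆ A) :
    ∀ {x y : ↑A} (p : (G.induce A).Walk x y) (hx : (x : V) ∈ B) (hy : (y : V) ∈ B)
      (_h : ∀ z ∈ p.support, (z : V) ∈ B), (G.induce B).Walk ⟨x, hx⟩ ⟨y, hy⟩
  | _, _, .nil, _, _, _ => .nil
  | _, _, .cons ha q, hx, hy, h =>
      .cons (by exact ha)
        (restrictWalk hAB q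
          (h _ (by rw [Walk.support_cons]; exact List.mem_cons_of_mem _ q.start_mem_support))
          hy
          (fun z hz => h z (by rw [Walk.support_cons]; exact List.mem_cons_of_mem _ hz)))

lemma restrictWalk_map {A B : Set V} (hAB : B ⊆ A) {x y : ↑A}
    (p : (G.induce A).Walk x y) (hx : (x : V) ∈ B) (hy : (y : V) ∈ B)
    (h : ∀ z ∈ p.support, (z : V) ∈ B) :
    (restrictWalk hAB p hx hy h).map (G.induceHomOfLE hAB).toHom = p := by
  induction p with
  | nil => rfl
  | cons ha q ih =>
    show Walk.cons _ (Walk.map _ (restrictWalk hAB q _ hy _)) = _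
    congr 1
    exact ih _ _ _

lemma singleton_isTree (G : SimpleGraph V) (x : V) : (G.induce {x}).IsTree := by
  have hbot : (G.induce {x}) = ⊥ := by
    ext a b
    simp only [comap_adj, Function.Embedding.coe_subtype, bot_adj, iff_false]
    intro hab
    have ha : (a : V) = x := a.2
    have hb : (b : V) = x := b.2
    rw [ha, hb] at hab
    exact G.loopless.irrefl x hab
  constructor
  · constructor
    · intro a b
      have : a = b := Subtype.ext (a.2.trans (Eq.symm b.2))
      exact this ▸ Reachable.refl _
  · rw [hbot]; exact isAcyclic_bot

variable {v u : V}

lemma adj_of_nbhd (hn : G.neighborSet v = {u}) : G.Adj v u := by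
  have : u ∈ G.neighborSet v := by rw [hn]; rfl
  exact this

lemma eq_of_adj_nbhd (hn : G.neighborSet v = {u}) {w : V} (hw : G.Adj v w) : w = u := by
  have : w ∈ G.neighborSet v := hw
  rwa [hn] at this

/-- No cycle through the leaf `v`. -/
lemma no_cycle_at_leaf (hn : G.neighborSet v = {u}) {T : Set V} (hvT : v ∈ T)
    (c : (G.induce T).Walk ⟨v, hvT⟩ ⟨v, hvT⟩) : ¬ c.IsCycle := by
  intro hc
  have h3 := hc.three_le_length
  cases c with
  | nil => exact hc.not_of_nil
  | @cons _ b _ ha q =>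
    rw [Walk.cons_isCycle_iff] at hc
    obtain ⟨hq, _⟩ := hc
    have hbu : (b : V) = u := eq_of_adj_nbhd hn ha
    have hqn : ¬ q.reverse.Nil := Walk.not_nil_of_ne ha.ne
    have ha2 : (G.induce T).Adj ⟨v, hvT⟩ (q.reverse.getVert 1) := Walk.adj_snd hqn
    have e1 : (q.reverse.getVert 1 : V) = u := eq_of_adj_nbhd hn ha2
    have hb1 : q.reverse.getVert 1 = b := Subtype.ext (e1.trans hbu.symm)
    have hp' : (q.reverse.tail.copy hb1 rfl).IsPath := by
      rw [Walk.isPath_copy]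
      exact hq.reverse.tail
    have hnil : q.reverse.tail.copy hb1 rfl = Walk.nil := by
      rwa [Walk.isPath_iff_eq_nil] at hp'
    have hlen : q.reverse.tail.length = 0 := by
      have := congrArg Walk.length hnil
      rwa [Walk.length_copy, Walk.length_nil] at this
    have := Walk.length_tail_add_one hqn
    rw [hlen] at this
    rw [Walk.length_reverse] at this
    simp [Walk.length_cons, ← this] at h3

/-- A path between non-`v` endpoints avoids the leaf `v`. -/
lemma leaf_not_mem_path_support (hn : G.neighborSet v = {u}) {T : Set V} (hvT : v ∈ T)
    {x y : ↑T} (p : (G.induce T).Walk x y) (hp : p.IsPath)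
    (hx : (x : V) ≠ v) (hy : (y : V) ≠ v) :
    (⟨v, hvT⟩ : ↑T) ∉ p.support := by
  classical
  intro hmem
  have hq : (p.takeUntil _ hmem).IsPath := hp.takeUntil hmem
  have hr : (p.dropUntil _ hmem).IsPath := hp.dropUntil hmem
  have hqn : ¬ (p.takeUntil _ hmem).reverse.Nil :=
    Walk.not_nil_of_ne (fun h => hx (congrArg Subtype.val h.symm))
  have hrn : ¬ (p.dropUntil _ hmem).Nil :=
    Walk.not_nil_of_ne (fun h => hy (congrArg Subtype.val h.symm))
  have ha1 : (G.induce T).Adj ⟨v, hvT⟩ ((p.takeUntil _ hmem).reverse.getVert 1) :=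
    Walk.adj_snd hqn
  have ha2 : (G.induce T).Adj ⟨v, hvT⟩ ((p.dropUntil _ hmem).getVert 1) :=
    Walk.adj_snd hrn
  have e1 : ((p.takeUntil _ hmem).reverse.getVert 1 : V) = u := eq_of_adj_nbhd hn ha1
  have e2 : ((p.dropUntil _ hmem).getVert 1 : V) = u := eq_of_adj_nbhd hn ha2
  have m1 : (p.takeUntil _ hmem).reverse.getVert 1 ∈ (p.takeUntil _ hmem).support := by
    have h1 : (p.takeUntil _ hmem).reverse.getVert 1 ∈ (p.takeUntil _ hmem).reverse.support := by
      rw [← Walk.cons_support_tail hqn]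
      exact List.mem_cons_of_mem _ (Walk.start_mem_support _)
    rwa [Walk.support_reverse, List.mem_reverse] at h1
  have m2 : (p.dropUntil _ hmem).getVert 1 ∈ (p.dropUntil _ hmem).support.tail := by
    rw [← Walk.cons_support_tail hrn, List.tail_cons]
    exact Walk.start_mem_support _
  have hnd := hp.support_nodup
  rw [← Walk.take_spec p hmem, Walk.support_append, List.nodup_append] at hnd
  refine hnd.2.2 _ m1 _ m2 ?_
  exact Subtype.ext (e1.trans e2.symm)

/-- Key lemma: attaching/removing the leaf `v` preserves being an induced tree. -/
lemma key_lemma (hn : G.neighborSet v = {u}) {S : Set V} (hv : v ∉ S) (hu : u ∈ S) :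
    (G.induce S).IsTree ↔ (G.induce (insert v S)).IsTree := by
  classical
  have hadj : G.Adj v u := adj_of_nbhd hn
  have hSins : S ⊆ insert v S := Set.subset_insert _ _
  have hinj : Function.Injective (G.induceHomOfLE hSins).toHom :=
    (G.induceHomOfLE hSins).injective
  constructor
  · rintro ⟨hconn, hacyc⟩
    constructor
    · have hset : S ∪ {v, u} = insert v S := by
        ext w
        simp only [Set.mem_union, Set.mem_insert_iff, Set.mem_singleton_iff]
        constructor
        · rintro (h | h | rfl)
          · exact Or.inr h
          · exact Or.inl h
          · exact Or.inr hu
        · rintro (h | h)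
          · exact Or.inr (Or.inl h)
          · exact Or.inl h
      rw [← hset]
      exact connected_induce_union hconn.preconnected
        (induce_pair_connected_of_adj hadj).preconnected hu (Set.mem_insert v {u}) hadj.symm
    · intro x c hc
      by_cases hmem : (⟨v, Set.mem_insert v S⟩ : ↑(insert v S)) ∈ c.support
      · exact no_cycle_at_leaf hn (Set.mem_insert v S) (c.rotate _ hmem) (hc.rotate hmem)
      · have hsupp : ∀ z ∈ c.support, (z : V) ∈ S := by
          intro z hz
          rcases z.2 with h | h
          · have hzv : z = ⟨v, Set.mem_insert v S⟩ := Subtype.ext h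
            rw [hzv] at hz
            exact (hmem hz).elim
          · exact h
        have hx : (x : V) ∈ S := hsupp x c.start_mem_support
        have hc2 : (restrictWalk hSins c hx hx hsupp).IsCycle := by
          rw [← Walk.map_isCycle_iff_of_injective hinj]
          rw [restrictWalk_map]
          exact hc
        exact hacyc _ hc2
  · rintro ⟨hconn, hacyc⟩
    constructor
    · have hne : Nonempty ↑S := ⟨⟨u, hu⟩⟩
      constructor
      rintro ⟨x, hx⟩ ⟨y, hy⟩
      obtain ⟨p0⟩ := hconn.preconnected ⟨x, hSins hx⟩ ⟨y, hSins hy⟩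
      have hp : p0.toPath.1.IsPath := p0.toPath.2
      have hnm := leaf_not_mem_path_support hn (Set.mem_insert v S)
        p0.toPath.1 hp
        (fun h => hv (h ▸ hx)) (fun h => hv (h ▸ hy))
      have hsupp : ∀ z ∈ p0.toPath.1.support,
          (z : V) ∈ S := by
        intro z hz
        rcases z.2 with h | h
        · have hzv : z = ⟨v, Set.mem_insert v S⟩ := Subtype.ext h
          rw [hzv] at hz
          exact (hnm hz).elim
        · exact h
      exact ⟨restrictWalk hSins _ hx hy hsupp⟩
    · intro x c hc
      exact hacyc _ (hc.map hinj)

end Helpers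

/-- Safeness of Reduction Rule 1 (removal of a degree-one vertex): if `v` has
`u` as its unique neighbor in `G`, then `(G, K)` has an induced tree containing
all terminals iff `(G - v, K')` has one, where `K' = (K \ {v}) ∪ {u}` if
`v ∈ K` and `K' = K` otherwise.  (A set `S'` with `v ∉ S'` induces the same
subgraph in `G` and in `G - v`.) -/
theorem stmt2 (V : Type) [Fintype V] (G : SimpleGraph V) (K : Set V)
    (v u : V) (hdeg : G.neighborSet v = {u}) :
    (∃ S : Set V, K ⊆ S ∧ (G.induce S).IsTree) ↔
    (∃ S' : Set V,
        {x | (x ∈ K ∧ x ≠ v) ∨ (x = u ∧ v ∈ K)} ⊆ S' ∧ v ∉ S' ∧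
        (G.induce S').IsTree) := by
  classical
  have hadj : G.Adj v u := adj_of_nbhd hdeg
  have hvu : v ≠ u := hadj.ne
  constructor
  · rintro ⟨S, hK, htree⟩
    by_cases hvS : v ∈ S
    · by_cases huS : u ∈ S
      · refine ⟨S \ {v}, ?_, fun h => h.2 rfl, ?_⟩
        · rintro x (⟨hxK, hxv⟩ | ⟨rfl, _⟩)
          · exact ⟨hK hxK, hxv⟩
          · exact ⟨huS, hvu.symm⟩
        · rw [key_lemma hdeg (fun h => h.2 rfl) (⟨huS, hvu.symm⟩ : u ∈ S \ {v})]
          rwa [Set.insert_diff_singleton, Set.insert_eq_of_mem hvS]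
      · have hSv : S = {v} := by
          apply Set.eq_singleton_iff_unique_mem.mpr
          refine ⟨hvS, fun w hwS => ?_⟩
          by_contra hne
          obtain ⟨p⟩ := htree.isConnected.preconnected ⟨v, hvS⟩ ⟨w, hwS⟩
          have hnn : ¬ p.Nil := Walk.not_nil_of_ne (fun h => hne (congrArg Subtype.val h.symm))
          have hadj1 := Walk.adj_snd hnn
          have hx : ((p.getVert 1 : ↑S) : V) = u := eq_of_adj_nbhd hdeg hadj1
          exact huS (hx ▸ (p.getVert 1).2)
        refine ⟨{u}, ?_, ?_, singleton_isTree G u⟩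
        · rintro x (⟨hxK, hxv⟩ | ⟨rfl, _⟩)
          · have hxS := hK hxK
            rw [hSv] at hxS
            exact absurd hxS hxv
          · rfl
        · intro h
          exact hvu h
    · refine ⟨S, ?_, hvS, htree⟩
      rintro x (⟨hxK, _⟩ | ⟨rfl, hvK⟩)
      · exact hK hxK
      · exact absurd (hK hvK) hvS
  · rintro ⟨S', hK', hvS', htree⟩
    by_cases hvK : v ∈ K
    · have huS' : u ∈ S' := hK' (Or.inr ⟨rfl, hvK⟩)
      refine ⟨insert v S', ?_, ?_⟩
      · intro x hxK
        by_cases hxv : x = v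
        · exact hxv ▸ Set.mem_insert v S'
        · exact Set.mem_insert_of_mem _ (hK' (Or.inl ⟨hxK, hxv⟩))
      · exact (key_lemma hdeg hvS' huS').mp htree
    · refine ⟨S', ?_, htree⟩
      intro x hxK
      have hxv : x ≠ v := fun h => hvK (h ▸ hxK)
      exact hK' (Or.inl ⟨hxK, hxv⟩)
end

section
/- Let G be a connected graph with minimum degree at least 2 and let F be a minimum feedback edge set of G with |F| = q. Then the spanning tree T(F) = G − F has at most 2q leaves, and the number of vertices of degree at least three in T(F) is at most the number of leaves of T(F). -/
open SimpleGraph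

/-- `F` is a feedback edge set of `G`: a set of edges of `G` whose removal
makes `G` acyclic. -/
def IsFES {V : Type} (G : SimpleGraph V) (F : Set (Sym2 V)) : Prop :=
  F ⊆ G.edgeSet ∧ (G.deleteEdges F).IsAcyclic

/-- `F` is a minimum feedback edge set of `G`. -/
def IsMinFES {V : Type} (G : SimpleGraph V) (F : Set (Sym2 V)) : Prop :=
  IsFES G F ∧ ∀ F' : Set (Sym2 V), IsFES G F' → F.ncard ≤ F'.ncard

/-- The set of leaves (degree-one vertices) of a graph. -/
def leavesOf {V : Type} (T : SimpleGraph V) : Set V :=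
  {v | (T.neighborSet v).ncard = 1}

/-- Deleting a minimum feedback edge set from a connected graph leaves a
connected graph. -/
lemma minFES_connected {V : Type} [Fintype V] {G : SimpleGraph V} {F : Set (Sym2 V)}
    (hconn : G.Connected) (hF : IsMinFES G F) :
    (G.deleteEdges F).Connected := by
  obtain ⟨⟨hsub, hacyc⟩, hmin⟩ := hF
  have hne : Nonempty V := hconn.nonempty
  rw [connected_iff]
  refine ⟨fun u v => ?_, hne⟩
  by_contra hr
  set S : Set V := {x | (G.deleteEdges F).Reachable u x} with hS
  obtain ⟨p⟩ := hconn.preconnected u v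
  obtain ⟨d, hd, hdS, hdS'⟩ := p.exists_boundary_dart S (Reachable.refl u) hr
  set a := d.fst with ha
  set b := d.snd with hb
  have hGab : G.Adj a b := d.adj
  have hTr : ¬ (G.deleteEdges F).Reachable a b := fun h => hdS' (hdS.trans h)
  have heF : s(a, b) ∈ F := by
    by_contra he
    exact hTr ((deleteEdges_adj (s := F)).mpr ⟨hGab, he⟩).reachable
  set F' := F \ {s(a, b)} with hF'
  have hkey : (G.deleteEdges F') \ fromEdgeSet {s(a, b)} = G.deleteEdges F := by
    ext x y
    simp only [sdiff_adj, deleteEdges_adj, fromEdgeSet_adj, Set.mem_diff,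
      Set.mem_singleton_iff, hF']
    constructor
    · rintro ⟨⟨hxy, hmem⟩, hnot⟩
      refine ⟨hxy, fun hmemF => ?_⟩
      by_cases hx : s(x, y) = s(a, b)
      · exact hnot ⟨hx, hxy.ne⟩
      · exact hmem ⟨hmemF, hx⟩
    · rintro ⟨hxy, hmem⟩
      refine ⟨⟨hxy, fun h => hmem h.1⟩, fun h => hmem (h.1 ▸ heF)⟩
  have hacyc' : (G.deleteEdges F').IsAcyclic := by
    intro x c hc
    by_cases he : s(a, b) ∈ c.edges
    · have h2 : (G.deleteEdges F').Adj a b ∧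
          ((G.deleteEdges F') \ fromEdgeSet {s(a, b)}).Reachable a b :=
        adj_and_reachable_delete_edges_iff_exists_cycle.mpr ⟨x, c, hc, he⟩
      rw [hkey] at h2
      exact hTr h2.2
    · have hsub' : ∀ e ∈ c.edges, e ∈ (G.deleteEdges F).edgeSet := by
        intro e hec
        have := c.edges_subset_edgeSet hec
        rw [edgeSet_deleteEdges] at this ⊢
        refine ⟨this.1, fun hmem => ?_⟩
        rcases this with ⟨-, h2⟩
        rw [hF', Set.mem_diff, Set.mem_singleton_iff] at h2
        push_neg at h2
        exact he ((h2 hmem) ▸ hec)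
      exact hacyc (c.transfer _ hsub') (hc.transfer hsub')
  have hle : F.ncard ≤ F'.ncard := hmin F' ⟨(Set.diff_subset).trans hsub, hacyc'⟩
  have hlt : F'.ncard < F.ncard :=
    Set.ncard_lt_ncard (Set.sdiff_singleton_ssubset.mpr heF) (Set.toFinite F)
  omega

/-- In a finite tree with all degrees positive, the number of vertices of
degree at least three is at most the number of leaves. -/
lemma tree_big_le_leaves {V : Type} [Fintype V] (T : SimpleGraph V) [DecidableRel T.Adj]
    (htree : T.IsTree) (hd1 : ∀ v : V, 0 < T.degree v) :
    {v : V | 3 ≤ (T.neighborSet v).ncard}.ncard ≤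
      {v | (T.neighborSet v).ncard = 1}.ncard := by
  classical
  have hdegeq : ∀ v, (T.neighborSet v).ncard = T.degree v := by
    intro v
    rw [← card_neighborFinset_eq_degree, neighborFinset_def, Set.ncard_eq_toFinset_card']
  have hE : T.edgeFinset.card + 1 = Fintype.card V := htree.card_edgeFinset
  have hsum : ∑ v, T.degree v = 2 * T.edgeFinset.card := T.sum_degrees_eq_twice_card_edges
  have hn : 1 ≤ Fintype.card V := by
    have := htree.isConnected.nonempty
    exact Fintype.card_pos
  set A : Finset V := Finset.univ.filter (fun v => T.degree v = 1) with hA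
  set B : Finset V := Finset.univ.filter (fun v => 3 ≤ T.degree v) with hB
  have hpt : ∀ v : V, (if 3 ≤ T.degree v then (1 : ℤ) else 0)
      - (if T.degree v = 1 then (1 : ℤ) else 0) ≤ (T.degree v : ℤ) - 2 := by
    intro v
    have := hd1 v
    by_cases h1 : T.degree v = 1 <;> by_cases h3 : 3 ≤ T.degree v <;>
      simp [h1, h3] <;> omega
  have hsumZ : ∑ v : V, (T.degree v : ℤ) = 2 * (T.edgeFinset.card : ℤ) := by
    exact_mod_cast congrArg (Nat.cast : ℕ → ℤ) hsum
  have hsum2 : ∑ v : V, ((T.degree v : ℤ) - 2) = -2 := by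
    rw [Finset.sum_sub_distrib, hsumZ]
    simp only [Finset.sum_const, Finset.card_univ, nsmul_eq_mul]
    omega
  have hBA : (B.card : ℤ) - A.card ≤ -2 := by
    calc (B.card : ℤ) - A.card
        = ∑ v : V, ((if 3 ≤ T.degree v then (1 : ℤ) else 0)
            - (if T.degree v = 1 then (1 : ℤ) else 0)) := by
          rw [Finset.sum_sub_distrib, Finset.sum_boole, Finset.sum_boole, hA, hB]
      _ ≤ ∑ v : V, ((T.degree v : ℤ) - 2) := Finset.sum_le_sum (fun v _ => hpt v)
      _ = -2 := hsum2
  have hBA' : B.card ≤ A.card := by omega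
  have hsetA : {v | (T.neighborSet v).ncard = 1}.ncard = A.card := by
    rw [Set.ncard_eq_toFinset_card', hA]
    congr 1
    ext v
    simp only [Set.mem_toFinset, Set.mem_setOf_eq, Finset.mem_filter, Finset.mem_univ,
      true_and, hdegeq v]
  have hsetB : {v : V | 3 ≤ (T.neighborSet v).ncard}.ncard = B.card := by
    rw [Set.ncard_eq_toFinset_card', hB]
    congr 1
    ext v
    simp only [Set.mem_toFinset, Set.mem_setOf_eq, Finset.mem_filter, Finset.mem_univ,
      true_and, hdegeq v]
  omega

/-- If `G` is connected with minimum degree at least 2 and `F` is a minimum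
feedback edge set of `G` with `|F| = q`, then the spanning tree `T(F) = G - F`
has at most `2q` leaves, and at most as many vertices of degree at least three
as leaves. -/
theorem stmt3 (V : Type) [Fintype V] (G : SimpleGraph V)
    (hconn : G.Connected) (hdeg : ∀ v : V, 2 ≤ (G.neighborSet v).ncard)
    (F : Set (Sym2 V)) (hF : IsMinFES G F) (q : ℕ) (hq : F.ncard = q) :
    (leavesOf (G.deleteEdges F)).ncard ≤ 2 * q ∧
    {v : V | 3 ≤ ((G.deleteEdges F).neighborSet v).ncard}.ncard ≤
      (leavesOf (G.deleteEdges F)).ncard := by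
  classical
  set T := G.deleteEdges F with hT
  have hTconn : T.Connected := minFES_connected hconn hF
  have htree : T.IsTree := ⟨hTconn, hF.1.2⟩
  -- positive degrees in T
  have hd1 : ∀ v : V, 0 < T.degree v := by
    intro v
    rw [degree_pos_iff_exists_adj]
    have hnb : (G.neighborSet v).Nonempty := by
      rw [← Set.ncard_pos (Set.toFinite _)]
      have := hdeg v; omega
    obtain ⟨w, hw⟩ := hnb
    have hvw : v ≠ w := fun h => G.irrefl (h ▸ hw)
    obtain ⟨p⟩ := hTconn.preconnected v w
    cases p with
    | nil => exact absurd rfl hvw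
    | cons h _ => exact ⟨_, h⟩
  constructor
  · -- at most 2q leaves
    have hinc : ∀ v ∈ leavesOf T, ∃ e ∈ F, v ∈ e := by
      intro v hv
      have hv' : (T.neighborSet v).ncard = 1 := hv
      have hlt : (T.neighborSet v).ncard < (G.neighborSet v).ncard := by
        have := hdeg v; omega
      obtain ⟨w, hwG, hwT⟩ := Set.diff_nonempty_of_ncard_lt_ncard hlt (Set.toFinite _)
      refine ⟨s(v, w), ?_, Sym2.mem_mk_left v w⟩
      by_contra hmem
      exact hwT ((deleteEdges_adj (s := F)).mpr ⟨hwG, hmem⟩)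
    have hFfin : F.Finite := Set.toFinite F
    have hLsub : (leavesOf T).toFinset ⊆ hFfin.toFinset.biUnion
        (fun e => ({x | x ∈ e} : Set V).toFinset) := by
      intro v hv
      rw [Set.mem_toFinset] at hv
      obtain ⟨e, heF, hve⟩ := hinc v hv
      simp only [Finset.mem_biUnion, Set.Finite.mem_toFinset, Set.mem_toFinset, Set.mem_setOf_eq]
      exact ⟨e, heF, hve⟩
    have hcard : ∀ e : Sym2 V, ({x | x ∈ e} : Set V).toFinset.card ≤ 2 := by
      intro e
      induction e with
      | _ x y =>
        have : ({z | z ∈ s(x, y)} : Set V).toFinset ⊆ {x, y} := by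
          intro z hz
          rw [Set.mem_toFinset, Set.mem_setOf_eq, Sym2.mem_iff] at hz
          simp [hz]
        calc _ ≤ ({x, y} : Finset V).card := Finset.card_le_card this
          _ ≤ 2 := Finset.card_insert_le _ _ |>.trans (by simp)
    calc (leavesOf T).ncard = (leavesOf T).toFinset.card :=
          Set.ncard_eq_toFinset_card' (leavesOf T)
      _ ≤ (hFfin.toFinset.biUnion (fun e => ({x | x ∈ e} : Set V).toFinset)).card :=
          Finset.card_le_card hLsub
      _ ≤ ∑ e ∈ hFfin.toFinset, ({x | x ∈ e} : Set V).toFinset.card := Finset.card_biUnion_le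
      _ ≤ ∑ _e ∈ hFfin.toFinset, 2 := Finset.sum_le_sum (fun e _ => hcard e)
      _ = 2 * q := by
          rw [Finset.sum_const, smul_eq_mul, ← hq, Set.ncard_eq_toFinset_card F hFfin]
          ring
  · exact tree_big_le_leaves T htree hd1
end

section
/- Let G be a connected graph, F a minimum feedback edge set of G, and let u, f, w_1, w_2 be vertices of G with w_1 ≠ w_2, w_2 ≠ u, and u ≠ w_1, such that u and f form an F-pair, w_2 is the unique neighbor of f in T(F) that F-links f to u, w_1 F-links w_2 to u, and the edge fw_1 belongs to F. Then F'' = (F ∖ {fw_1}) ∪ {fw_2} is a minimum feedback edge set of G, and the set of leaves of T(F) is a proper subset of the set of leaves of T(F''). -/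
open SimpleGraph

/-- The set `D_2` of (non-leaf) vertices of degree exactly two. -/
def D2 {V : Type} (T : SimpleGraph V) : Set V :=
  {v | (T.neighborSet v).ncard = 2}

/-- The set `D_*` of vertices of degree at least three. -/
def Dstar {V : Type} (T : SimpleGraph V) : Set V :=
  {v | 3 ≤ (T.neighborSet v).ncard}

/-- `u` `F`-links `v` to `f` (in the tree `T = T(F)`): either `v = u` or the
deletion of `u` from `T` leaves no `v–f` path; equivalently, every `v–f` walk
of `T` passes through `u`. -/
def FLinks {V : Type} (T : SimpleGraph V) (u v f : V) : Prop :=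
  ∀ p : T.Walk v f, u ∈ p.support

/-- `w` lies on the unique `u–f` path of the tree `T`; equivalently, every
`u–f` walk of `T` passes through `w`. -/
def OnPath {V : Type} (T : SimpleGraph V) (u f w : V) : Prop :=
  ∀ p : T.Walk u f, w ∈ p.support

/-- `w` is an internal vertex of the unique `u–f` path of the tree `T`,
i.e. `w ∈ P*_F(u,f)`. -/
def OnPathInt {V : Type} (T : SimpleGraph V) (u f w : V) : Prop :=
  OnPath T u f w ∧ w ≠ u ∧ w ≠ f

/-- `u, f` form an `F`-pair (for the tree `T = T(F)`): they are distinct,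
joined by a path, and every internal vertex of the unique `u–f` path of `T`
belongs to `D_2`. -/
def IsFPair {V : Type} (T : SimpleGraph V) (u f : V) : Prop :=
  u ≠ f ∧ T.Reachable u f ∧ ∀ w, OnPathInt T u f w → w ∈ D2 T

/- -------------------- auxiliary lemmas -------------------- -/

private lemma myAcyclicMono {V : Type} {H G : SimpleGraph V} (h : H ≤ G)
    (hG : G.IsAcyclic) : H.IsAcyclic :=
  fun _ c hc => hG (c.mapLe h) (hc.mapLe h)

private lemma myAcyclicInsert {V : Type} {H : SimpleGraph V} (hH : H.IsAcyclic) {a b : V}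
    (hr : ¬ H.Reachable a b) : (H ⊔ fromEdgeSet {s(a, b)}).IsAcyclic := by
  intro v c hc
  by_cases he : s(a, b) ∈ c.edges
  · have hab := (adj_and_reachable_delete_edges_iff_exists_cycle
      (G := H ⊔ fromEdgeSet {s(a, b)})).mpr ⟨v, c, hc, he⟩
    refine hr (hab.2.mono ?_)
    intro x y hxy
    rcases hxy with ⟨hxy1 | hxy2, hn⟩
    · exact hxy1
    · exact absurd hxy2 hn
  · have hce : ∀ e ∈ c.edges, e ∈ H.edgeSet := by
      intro e hec
      have h1 := c.edges_subset_edgeSet hec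
      rw [edgeSet_sup] at h1
      rcases h1 with h1 | h2
      · exact h1
      · rw [edgeSet_fromEdgeSet] at h2
        exact absurd (h2.1 ▸ hec) he
    exact hH (c.transfer H hce) (hc.transfer hce)

/-- Safeness of Reduction Rule 2: swapping the feedback edge `f w₁` for the
tree edge `f w₂` yields another minimum feedback edge set whose tree has
strictly more leaves (the old leaves are kept). -/
theorem stmt4 (V : Type) [Fintype V] (G : SimpleGraph V) (hconn : G.Connected)
    (F : Set (Sym2 V)) (hF : IsMinFES G F)
    (u f w₁ w₂ : V)
    (h12 : w₁ ≠ w₂) (h2u : w₂ ≠ u) (hu1 : u ≠ w₁)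
    (hpair : IsFPair (G.deleteEdges F) u f)
    (hw2adj : (G.deleteEdges F).Adj f w₂)
    (hw2link : FLinks (G.deleteEdges F) w₂ f u)
    (hw2uniq : ∀ w, (G.deleteEdges F).Adj f w → FLinks (G.deleteEdges F) w f u → w = w₂)
    (hw1link : FLinks (G.deleteEdges F) w₁ w₂ u)
    (hfw1 : s(f, w₁) ∈ F) :
    IsMinFES G (insert s(f, w₂) (F \ {s(f, w₁)})) ∧
    leavesOf (G.deleteEdges F) ⊂
      leavesOf (G.deleteEdges (insert s(f, w₂) (F \ {s(f, w₁)}))) := by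
  classical
  set T := G.deleteEdges F with hT
  obtain ⟨⟨hFsub, hTac⟩, hFmin⟩ := hF
  obtain ⟨huf, hreach, hD2⟩ := hpair
  have hGfw1 : G.Adj f w₁ := by rw [← mem_edgeSet]; exact hFsub hfw1
  have hGfw2 : G.Adj f w₂ := by
    have := hw2adj; rw [hT, deleteEdges_adj] at this; exact this.1
  have hf1 : f ≠ w₁ := hGfw1.ne
  have hf2 : f ≠ w₂ := hw2adj.ne
  have hw2F : s(f, w₂) ∉ F := by
    have := hw2adj; rw [hT, deleteEdges_adj] at this; exact this.2
  have hnTfw1 : ¬ T.Adj f w₁ := by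
    rw [hT, deleteEdges_adj]; rintro ⟨-, h⟩; exact h hfw1
  -- FLinks composition: w₁ links f to u
  have hw1linkf : FLinks T w₁ f u := by
    intro p
    have h2 : w₂ ∈ p.support := hw2link p
    exact p.support_dropUntil_subset h2 (hw1link (p.dropUntil w₂ h2))
  have honf : ∀ w : V, FLinks T w f u → OnPath T u f w := by
    intro w hw p
    have := hw p.reverse
    rwa [Walk.support_reverse, List.mem_reverse] at this
  have hD2w2 : (T.neighborSet w₂).ncard = 2 :=
    hD2 w₂ ⟨honf w₂ hw2link, h2u, hw2adj.ne'⟩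
  have hD2w1 : (T.neighborSet w₁).ncard = 2 :=
    hD2 w₁ ⟨honf w₁ hw1linkf, Ne.symm hu1, hGfw1.ne'⟩
  -- a path from w₂ to u avoiding f
  have hreach2u : T.Reachable w₂ u := (hw2adj.symm.reachable).trans hreach.symm
  obtain ⟨p0⟩ := hreach2u
  set p := p0.bypass with hp0
  have hp : p.IsPath := p0.bypass_isPath
  have hfp : f ∉ p.support := by
    intro hf
    have hw2d : w₂ ∈ (p.dropUntil f hf).support := hw2link (p.dropUntil f hf)
    have hw2tail : w₂ ∈ (p.dropUntil f hf).support.tail := by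
      rcases (Walk.mem_support_iff _).mp hw2d with h | h
      · exact absurd h hw2adj.ne'
      · exact h
    have hnd : ((p.takeUntil f hf).support ++ (p.dropUntil f hf).support.tail).Nodup := by
      rw [← Walk.support_append, Walk.take_spec]
      exact hp.support_nodup
    exact (List.disjoint_of_nodup_append hnd) (Walk.start_mem_support _) hw2tail
  have hw1p : w₁ ∈ p.support := hw1link p
  set q := p.takeUntil w₁ hw1p with hq
  have hqe : ∀ e ∈ q.edges, e ∈ (T.deleteEdges {s(f, w₂)}).edgeSet := by
    intro e heq
    rw [edgeSet_deleteEdges]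
    refine ⟨q.edges_subset_edgeSet heq, ?_⟩
    intro hmem
    rw [Set.mem_singleton_iff] at hmem
    have : f ∈ q.support := q.fst_mem_support_of_mem_edges (hmem ▸ heq)
    exact hfp (p.support_takeUntil_subset _ this)
  have hreach21 : (T.deleteEdges {s(f, w₂)}).Reachable w₂ w₁ := ⟨q.transfer _ hqe⟩
  have hbridge := (isAcyclic_iff_forall_adj_isBridge.mp hTac) hw2adj
  have hnr : ¬ (T.deleteEdges {s(f, w₂)}).Reachable f w₁ := by
    intro hr
    exact hbridge (hr.trans hreach21.symm)
  -- the new tree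
  set F'' := insert s(f, w₂) (F \ {s(f, w₁)}) with hFd
  have hTT : G.deleteEdges F'' = (T.deleteEdges {s(f, w₂)}) ⊔ fromEdgeSet {s(f, w₁)} := by
    ext a b
    simp only [deleteEdges_adj, sup_adj, fromEdgeSet_adj, Set.mem_insert_iff, Set.mem_diff,
      Set.mem_singleton_iff, hFd, hT]
    constructor
    · rintro ⟨hGab, hno⟩
      push_neg at hno
      obtain ⟨h1, h2⟩ := hno
      by_cases h3 : s(a, b) = s(f, w₁)
      · exact Or.inr ⟨h3, hGab.ne⟩
      · exact Or.inl ⟨⟨hGab, fun hmem => h3 (h2 hmem)⟩, h1⟩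
    · rintro (⟨⟨hGab, hnF⟩, hne⟩ | ⟨heq, hne⟩)
      · refine ⟨hGab, ?_⟩
        push_neg
        exact ⟨hne, fun h => absurd h hnF⟩
      · refine ⟨by rw [← mem_edgeSet, heq]; exact hFsub hfw1, ?_⟩
        push_neg
        constructor
        · rw [heq]
          intro hcontra
          rcases Sym2.eq_iff.mp hcontra with ⟨-, h⟩ | ⟨h, -⟩
          · exact h12 h
          · exact hf2 h
        · intro _; exact heq
  have hT''ac : (G.deleteEdges F'').IsAcyclic := by
    rw [hTT]
    exact myAcyclicInsert (myAcyclicMono (deleteEdges_le _) hTac) hnr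
  have hw2notin : s(f, w₂) ∉ F \ {s(f, w₁)} := fun h => hw2F h.1
  have hFne : F.Nonempty := ⟨_, hfw1⟩
  have hcard : F''.ncard = F.ncard := by
    rw [hFd, Set.ncard_insert_of_notMem hw2notin ((Set.toFinite F).diff),
      Set.ncard_diff_singleton_of_mem hfw1]
    have h1 : 0 < F.ncard := (Set.ncard_pos (Set.toFinite F)).mpr hFne
    omega
  have hFES'' : IsFES G F'' := by
    refine ⟨?_, hT''ac⟩
    intro e he
    rcases Set.mem_insert_iff.mp he with he | he
    · rw [he, mem_edgeSet]; exact hGfw2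
    · exact hFsub he.1
  have hmin : IsMinFES G F'' := ⟨hFES'', fun F' h => hcard ▸ hFmin F' h⟩
  -- adjacency in the new tree
  have hadj'' : ∀ a b : V, (G.deleteEdges F'').Adj a b ↔
      (T.Adj a b ∧ s(a, b) ≠ s(f, w₂)) ∨ (s(a, b) = s(f, w₁) ∧ a ≠ b) := by
    intro a b
    rw [hTT]
    simp [deleteEdges_adj, fromEdgeSet_adj]
  -- neighbor set computations
  have hNf : (G.deleteEdges F'').neighborSet f = insert w₁ (T.neighborSet f \ {w₂}) := by
    ext x
    simp only [mem_neighborSet, hadj'', Set.mem_insert_iff, Set.mem_diff, Set.mem_singleton_iff]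
    constructor
    · rintro (⟨h1, h2⟩ | ⟨h3, -⟩)
      · exact Or.inr ⟨h1, fun hx => h2 (by rw [hx])⟩
      · rcases Sym2.eq_iff.mp h3 with ⟨-, h⟩ | ⟨h, -⟩
        · exact Or.inl h
        · exact absurd h hf1
    · rintro (hx | ⟨h1, h2⟩)
      · subst hx; exact Or.inr ⟨rfl, hf1⟩
      · refine Or.inl ⟨h1, fun hc => h2 ?_⟩
        rcases Sym2.eq_iff.mp hc with ⟨-, h⟩ | ⟨h, -⟩
        · exact h
        · exact absurd h hf2
  have hNw2 : (G.deleteEdges F'').neighborSet w₂ = T.neighborSet w₂ \ {f} := by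
    ext x
    simp only [mem_neighborSet, hadj'', Set.mem_diff, Set.mem_singleton_iff]
    constructor
    · rintro (⟨h1, h2⟩ | ⟨h3, -⟩)
      · refine ⟨h1, fun hx => h2 ?_⟩
        subst hx
        rw [Sym2.eq_swap]
      · rcases Sym2.eq_iff.mp h3 with ⟨h, -⟩ | ⟨h, -⟩
        · exact absurd h hf2.symm
        · exact absurd h (Ne.symm h12)
    · rintro ⟨h1, h2⟩
      refine Or.inl ⟨h1, fun hc => ?_⟩
      rcases Sym2.eq_iff.mp hc with ⟨h, -⟩ | ⟨-, h⟩
      · exact hf2.symm h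
      · exact h2 h
  have hNother : ∀ v : V, v ≠ f → v ≠ w₁ → v ≠ w₂ →
      (G.deleteEdges F'').neighborSet v = T.neighborSet v := by
    intro v hvf hv1 hv2
    ext x
    simp only [mem_neighborSet, hadj'']
    constructor
    · rintro (⟨h1, -⟩ | ⟨h3, -⟩)
      · exact h1
      · rcases Sym2.eq_iff.mp h3 with ⟨h, -⟩ | ⟨h, -⟩
        · exact absurd h hvf
        · exact absurd h hv1
    · intro h1
      refine Or.inl ⟨h1, fun hc => ?_⟩
      rcases Sym2.eq_iff.mp hc with ⟨h, -⟩ | ⟨h, -⟩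
      · exact hvf h
      · exact hv2 h
  -- subset of leaves
  have hsub : leavesOf T ⊆ leavesOf (G.deleteEdges F'') := by
    intro v hv
    simp only [leavesOf, Set.mem_setOf_eq] at hv ⊢
    have hv1 : v ≠ w₁ := by rintro rfl; rw [hv] at hD2w1; omega
    have hv2 : v ≠ w₂ := by rintro rfl; rw [hv] at hD2w2; omega
    by_cases hvf : v = f
    · subst hvf
      obtain ⟨a, ha⟩ := Set.ncard_eq_one.mp hv
      have hw2mem := hw2adj
      rw [← mem_neighborSet, ha, Set.mem_singleton_iff] at hw2mem
      rw [hNf, ha, ← hw2mem]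
      simp
    · rw [hNother v hvf hv1 hv2]
      exact hv
  -- w₂ is a new leaf
  have hw2leaf : ((G.deleteEdges F'').neighborSet w₂).ncard = 1 := by
    rw [hNw2, Set.ncard_diff_singleton_of_mem (by exact hw2adj.symm), hD2w2]
  refine ⟨hmin, ?_⟩
  rw [Set.ssubset_def]
  refine ⟨hsub, fun hba => ?_⟩
  have : w₂ ∈ leavesOf T := hba (by simpa [leavesOf] using hw2leaf)
  simp only [leavesOf, Set.mem_setOf_eq] at this
  rw [this] at hD2w2
  omega
end

section
/- Let G be a connected graph, F a minimum feedback edge set of G, and let f, u, v, w_1, w_2 be vertices of G such that u and f form an F-pair with |P_F(u,f)| ≥ 4, v ∉ leaves(T(F)) ∪ P_F(u,f), w_1 and w_2 are adjacent vertices of P*_F(u,f), the edge vw_1 belongs to F, and w_2 F-links v and w_1. Then F'' = (F ∖ {vw_1}) ∪ {w_1w_2} is a minimum feedback edge set of G, and T(F'') has strictly more leaves than T(F). -/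
open SimpleGraph

/-- Safeness of Reduction Rule 3: swapping the feedback edge `v w₁` for the
tree edge `w₁ w₂` yields another minimum feedback edge set whose tree has
strictly more leaves. -/
theorem stmt5 (V : Type) [Fintype V] (G : SimpleGraph V) (hconn : G.Connected)
    (F : Set (Sym2 V)) (hF : IsMinFES G F)
    (f u v w₁ w₂ : V)
    (hpair : IsFPair (G.deleteEdges F) u f)
    (hlen : 4 ≤ {w : V | OnPath (G.deleteEdges F) u f w}.ncard)
    (hv : v ∉ leavesOf (G.deleteEdges F) ∪ {w : V | OnPath (G.deleteEdges F) u f w})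
    (hw₁ : OnPathInt (G.deleteEdges F) u f w₁)
    (hw₂ : OnPathInt (G.deleteEdges F) u f w₂)
    (hadj : (G.deleteEdges F).Adj w₁ w₂)
    (hvw1 : s(v, w₁) ∈ F)
    (hlink : FLinks (G.deleteEdges F) w₂ v w₁) :
    IsMinFES G (insert s(w₁, w₂) (F \ {s(v, w₁)})) ∧
    (leavesOf (G.deleteEdges F)).ncard <
      (leavesOf (G.deleteEdges (insert s(w₁, w₂) (F \ {s(v, w₁)})))).ncard := by
  classical
  obtain ⟨⟨hFE, hFA⟩, hFmin⟩ := hF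
  set T : SimpleGraph V := G.deleteEdges F with hTdef
  set F'' : Set (Sym2 V) := insert s(w₁, w₂) (F \ {s(v, w₁)}) with hF''def
  set T'' : SimpleGraph V := G.deleteEdges F'' with hT''def
  -- basic distinctness facts
  have hvnL : v ∉ leavesOf T := fun h => hv (Or.inl h)
  have hvnP : ¬ OnPath T u f v := fun h => hv (Or.inr h)
  have hne1 : v ≠ w₁ := by rintro rfl; exact hvnP hw₁.1
  have hne2 : v ≠ w₂ := by rintro rfl; exact hvnP hw₂.1
  have h12 : w₁ ≠ w₂ := hadj.ne
  have hD₁ : (T.neighborSet w₁).ncard = 2 := hpair.2.2 w₁ hw₁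
  have hD₂ : (T.neighborSet w₂).ncard = 2 := hpair.2.2 w₂ hw₂
  -- edge facts
  have hGvw₁ : G.Adj v w₁ := (SimpleGraph.mem_edgeSet G).mp (hFE hvw1)
  have h12nF : s(w₁, w₂) ∉ F := ((deleteEdges_adj).mp hadj).2
  have hG12 : G.Adj w₁ w₂ := ((deleteEdges_adj).mp hadj).1
  have hne_e : s(v, w₁) ≠ s(w₁, w₂) := by
    intro h
    rcases Sym2.eq_iff.mp h with ⟨h1, _⟩ | ⟨h1, _⟩
    · exact hne1 h1
    · exact hne2 h1
  -- membership in F'' characterization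
  have hmemF'' : ∀ e : Sym2 V, e ∈ F'' ↔ e = s(w₁, w₂) ∨ (e ∈ F ∧ e ≠ s(v, w₁)) := by
    intro e; simp [hF''def]
  -- Claim A: every walk in T from v to w₁ uses the edge s(w₁, w₂)
  have claimA : ∀ q : T.Walk v w₁, s(w₁, w₂) ∈ q.edges := by
    intro q
    set p : T.Walk v w₁ := (q.toPath : T.Walk v w₁) with hpdef
    have hp : p.IsPath := q.toPath.2
    have hw2p : w₂ ∈ p.support := hlink p
    have hd : (p.dropUntil w₂ hw2p).IsPath := hp.dropUntil hw2p
    have huniq := isAcyclic_iff_path_unique.mp hFA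
      (⟨p.dropUntil w₂ hw2p, hd⟩ : T.Path w₂ w₁) (SimpleGraph.Path.singleton hadj.symm)
    have hEq : p.dropUntil w₂ hw2p = Walk.cons hadj.symm Walk.nil := by
      have := congrArg (fun r : T.Path w₂ w₁ => (r : T.Walk w₂ w₁)) huniq
      simpa [SimpleGraph.Path.singleton] using this
    have hmem : s(w₁, w₂) ∈ (p.dropUntil w₂ hw2p).edges := by
      rw [hEq]; simp [Sym2.eq_swap]
    exact q.edges_toPath_subset (p.edges_dropUntil_subset hw2p hmem)
  -- T'' is acyclic
  have hacyc : T''.IsAcyclic := by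
    intro x c hc
    by_cases he : s(v, w₁) ∈ c.edges
    · -- get a walk v → w₁ in T'' avoiding s(v, w₁)
      have hreach : (T'' \ fromEdgeSet {s(v, w₁)}).Reachable v w₁ :=
        (adj_and_reachable_delete_edges_iff_exists_cycle.mpr ⟨x, c, hc, he⟩).2
      obtain ⟨q, hq⟩ := reachable_delete_edges_iff_exists_walk.mp hreach
      -- all edges of q are in T
      have hsub : ∀ e ∈ q.edges, e ∈ T.edgeSet := by
        intro e hee
        have heE : e ∈ T''.edgeSet := q.edges_subset_edgeSet hee
        rw [hT''def, edgeSet_deleteEdges] at heE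
        have hne : e ≠ s(v, w₁) := by rintro rfl; exact hq hee
        have henF'' := heE.2
        rw [hmemF'' e] at henF''
        push_neg at henF''
        have henF : e ∉ F := fun hmem => hne (henF''.2 hmem)
        rw [hTdef, edgeSet_deleteEdges]
        exact ⟨heE.1, henF⟩
      have h12q : s(w₁, w₂) ∈ q.edges := by
        have := claimA (q.transfer T hsub)
        rwa [Walk.edges_transfer] at this
      -- but s(w₁,w₂) is not an edge of T''
      have : s(w₁, w₂) ∈ T''.edgeSet := q.edges_subset_edgeSet h12q
      rw [hT''def, edgeSet_deleteEdges] at this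
      exact this.2 ((hmemF'' _).mpr (Or.inl rfl))
    · -- cycle avoiding s(v,w₁) transfers to T
      have hsub : ∀ e ∈ c.edges, e ∈ T.edgeSet := by
        intro e hee
        have heE : e ∈ T''.edgeSet := c.edges_subset_edgeSet hee
        rw [hT''def, edgeSet_deleteEdges] at heE
        have hne : e ≠ s(v, w₁) := by rintro rfl; exact he hee
        have henF'' := heE.2
        rw [hmemF'' e] at henF''
        push_neg at henF''
        have henF : e ∉ F := fun hmem => hne (henF''.2 hmem)
        rw [hTdef, edgeSet_deleteEdges]
        exact ⟨heE.1, henF⟩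
      exact hFA (c.transfer T hsub) (hc.transfer hsub)
  -- F'' is a feedback edge set
  have hFES'' : IsFES G F'' := by
    refine ⟨?_, hacyc⟩
    intro e he
    rcases (hmemF'' e).mp he with rfl | ⟨heF, _⟩
    · exact (SimpleGraph.mem_edgeSet G).mpr hG12
    · exact hFE heF
  -- cardinality
  have hFfin : F.Finite := Set.toFinite F
  have hpos : 0 < F.ncard := (Set.ncard_pos hFfin).mpr ⟨_, hvw1⟩
  have hcard : F''.ncard = F.ncard := by
    rw [hF''def, Set.ncard_insert_of_notMem (by simp [h12nF]) hFfin.diff,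
      Set.ncard_diff_singleton_of_mem hvw1]
    omega
  have hmin'' : IsMinFES G F'' := by
    refine ⟨hFES'', fun F' hF' => ?_⟩
    rw [hcard]; exact hFmin F' hF'
  refine ⟨hmin'', ?_⟩
  -- leaves
  have hsubL : leavesOf T ⊆ leavesOf T'' := by
    intro x hx
    have hx1 : x ≠ w₁ := by rintro rfl; rw [leavesOf, Set.mem_setOf_eq, hD₁] at hx; omega
    have hx2 : x ≠ w₂ := by rintro rfl; rw [leavesOf, Set.mem_setOf_eq, hD₂] at hx; omega
    have hxv : x ≠ v := by rintro rfl; exact hvnL hx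
    have hNS : T''.neighborSet x = T.neighborSet x := by
      ext y
      simp only [mem_neighborSet, hT''def, hTdef, deleteEdges_adj, hmemF'']
      constructor
      · rintro ⟨hGxy, hnm⟩
        refine ⟨hGxy, fun hmem => hnm (Or.inr ⟨hmem, fun h => ?_⟩)⟩
        rcases Sym2.eq_iff.mp h with ⟨h1, _⟩ | ⟨h1, _⟩
        · exact hxv h1
        · exact hx1 h1
      · rintro ⟨hGxy, hnm⟩
        refine ⟨hGxy, ?_⟩
        rintro (h | ⟨hmem, _⟩)
        · rcases Sym2.eq_iff.mp h with ⟨h1, _⟩ | ⟨_, h2⟩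
          · exact hx1 h1
          · exact hx2 ((Sym2.eq_iff.mp h).elim (fun h' => absurd h'.1 hx1) (fun h' => h'.1))
        · exact hnm hmem
    rw [leavesOf, Set.mem_setOf_eq, hNS]
    exact hx
  have hw₂leaf : w₂ ∈ leavesOf T'' := by
    have hNS : T''.neighborSet w₂ = T.neighborSet w₂ \ {w₁} := by
      ext y
      simp only [mem_neighborSet, hT''def, hTdef, deleteEdges_adj, hmemF'', Set.mem_diff,
        Set.mem_singleton_iff]
      constructor
      · rintro ⟨hGxy, hnm⟩
        refine ⟨⟨hGxy, fun hmem => hnm (Or.inr ⟨hmem, fun h => ?_⟩)⟩, fun hy => ?_⟩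
        · rcases Sym2.eq_iff.mp h with ⟨h1, _⟩ | ⟨h1, _⟩
          · exact hne2 h1.symm
          · exact h12 h1.symm
        · exact hnm (Or.inl (by rw [hy, Sym2.eq_swap]))
      · rintro ⟨⟨hGxy, hnm⟩, hy⟩
        refine ⟨hGxy, ?_⟩
        rintro (h | ⟨hmem, _⟩)
        · rcases Sym2.eq_iff.mp h with ⟨h1, _⟩ | ⟨_, h2⟩
          · exact h12 h1.symm
          · exact hy h2
        · exact hnm hmem
    have hw₁mem : w₁ ∈ T.neighborSet w₂ := hadj.symm
    rw [leavesOf, Set.mem_setOf_eq, hNS,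
      Set.ncard_diff_singleton_of_mem hw₁mem, hD₂]
  have hw₂not : w₂ ∉ leavesOf T := by
    rw [leavesOf, Set.mem_setOf_eq, hD₂]; omega
  exact Set.ncard_lt_ncard (Set.ssubset_iff_of_subset hsubL |>.mpr ⟨w₂, hw₂leaf, hw₂not⟩)
    (Set.toFinite _)
end

section
/- Let G be a connected graph, F a minimum feedback edge set of G, and let f, u, v, z, w_1, w_2 be vertices of G such that v ∈ leaves(T(F)) ∖ {f}, w_2 ∈ D_2 is the unique neighbor of v in T(F), u and f form an F-pair, z and v form an F-pair, u F-links f to z, w_1 ∈ P*_F(u,f), and the edge vw_1 belongs to F. Then F'' = (F ∖ {vw_1}) ∪ {vw_2} is a minimum feedback edge set of G, and the set of leaves of T(F) is a proper subset of the set of leaves of T(F''). -/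
open SimpleGraph

/-- No cycle passes through a vertex of degree one. -/
lemma no_cycle_through_leaf {V : Type} {T : SimpleGraph V} {v w : V}
    (hnbr : T.neighborSet v = {w}) {x : V} {c : T.Walk x x} (hc : c.IsCycle) :
    v ∉ c.support := by
  classical
  intro hv
  have hc' := hc.rotate hv
  generalize c.rotate v hv = c' at hc'
  cases c' with
  | nil => exact Walk.IsCycle.not_of_nil hc'
  | cons h q =>
    rename_i b
    have hbw : b = w := by
      have hb : b ∈ T.neighborSet v := h
      rwa [hnbr] at hb
    have hq : q.darts ≠ [] := by
      cases q with
      | nil => exact absurd rfl h.ne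
      | cons _ _ => simp
    have hlast : (q.darts.getLast hq).snd = v := by simp
    set d := q.darts.getLast hq with hd
    have hdadj : T.Adj d.fst d.snd := d.adj
    rw [hlast] at hdadj
    have hdfst : d.fst = w := by
      have hm : d.fst ∈ T.neighborSet v := hdadj.symm
      rwa [hnbr] at hm
    have hmem : d.edge ∈ q.edges := List.mem_map_of_mem (List.getLast_mem hq)
    have hedge : d.edge = s(v, b) := by
      have h0 : d.edge = s(d.fst, d.snd) := rfl
      rw [h0, hdfst, hlast, hbw, Sym2.eq_swap]
    have hnodup := hc'.edges_nodup
    rw [Walk.edges_cons] at hnodup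
    exact (List.nodup_cons.mp hnodup).1 (hedge ▸ hmem)

/-- Safeness of Reduction Rule 4: swapping the feedback edge `v w₁` for the
tree edge `v w₂` yields another minimum feedback edge set whose tree has a
strictly larger set of leaves. -/
theorem stmt6 (V : Type) [Fintype V] (G : SimpleGraph V) (hconn : G.Connected)
    (F : Set (Sym2 V)) (hF : IsMinFES G F)
    (f u v z w₁ w₂ : V)
    (hvleaf : v ∈ leavesOf (G.deleteEdges F)) (hvf : v ≠ f)
    (hw₂D2 : w₂ ∈ D2 (G.deleteEdges F))
    (hw₂nbr : (G.deleteEdges F).neighborSet v = {w₂})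
    (hpair : IsFPair (G.deleteEdges F) u f)
    (hpair' : IsFPair (G.deleteEdges F) z v)
    (hlink : FLinks (G.deleteEdges F) u f z)
    (hw₁ : OnPathInt (G.deleteEdges F) u f w₁)
    (hvw1 : s(v, w₁) ∈ F) :
    IsMinFES G (insert s(v, w₂) (F \ {s(v, w₁)})) ∧
    leavesOf (G.deleteEdges F) ⊂
      leavesOf (G.deleteEdges (insert s(v, w₂) (F \ {s(v, w₁)}))) := by
  obtain ⟨⟨hsub, hac⟩, hmin⟩ := hF
  set T := G.deleteEdges F with hT
  set F'' := insert s(v, w₂) (F \ {s(v, w₁)}) with hF''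
  set T'' := G.deleteEdges F'' with hT''
  -- basic facts
  have hTvw2 : T.Adj v w₂ := by
    have h0 : w₂ ∈ T.neighborSet v := by rw [hw₂nbr]; rfl
    exact h0
  have hvw2G : G.Adj v w₂ := (deleteEdges_adj.mp hTvw2).1
  have hvw2F : s(v, w₂) ∉ F := (deleteEdges_adj.mp hTvw2).2
  have hvw1G : G.Adj v w₁ := hsub hvw1
  have hne12 : w₁ ≠ w₂ := by rintro rfl; exact hvw2F hvw1
  have hnev1 : v ≠ w₁ := hvw1G.ne
  have hnev2 : v ≠ w₂ := hvw2G.ne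
  have hw1D2 : w₁ ∈ D2 T := hpair.2.2 w₁ hw₁
  have hedgene : s(v, w₁) ≠ s(v, w₂) := by
    intro h
    rcases Sym2.eq_iff.mp h with ⟨-, h2⟩ | ⟨h1, -⟩
    · exact hne12 h2
    · exact hnev2 h1
  -- T'' adjacency characterization
  have hT''adj : ∀ a b : V, T''.Adj a b ↔
      (G.Adj a b ∧ s(a, b) ≠ s(v, w₂) ∧ (s(a, b) ∈ F → s(a, b) = s(v, w₁))) := by
    intro a b
    rw [hT'', deleteEdges_adj, hF'']
    simp only [Set.mem_insert_iff, Set.mem_diff, Set.mem_singleton_iff]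
    tauto
  -- neighbor set of v in T''
  have hnbrv : T''.neighborSet v = {w₁} := by
    ext y
    simp only [mem_neighborSet, hT''adj, Set.mem_singleton_iff]
    constructor
    · rintro ⟨hadj, hne, himp⟩
      by_contra hy
      have hyF : s(v, y) ∉ F := fun h => hy (by
        have h1 := himp h
        rw [Sym2.eq_iff] at h1
        rcases h1 with ⟨_, h2⟩ | ⟨h1, h2⟩
        · exact h2
        · exact absurd h1 hnev1)
      have hm : y ∈ T.neighborSet v := by
        rw [hT]; exact deleteEdges_adj.mpr ⟨hadj, hyF⟩
      rw [hw₂nbr] at hm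
      apply hne
      rw [hm]
    · rintro rfl
      exact ⟨hvw1G, hedgene, fun _ => rfl⟩
  -- neighbor set of w₂ in T''
  have hnbrw2 : T''.neighborSet w₂ = T.neighborSet w₂ \ {v} := by
    ext y
    simp only [mem_neighborSet, hT''adj, Set.mem_diff, Set.mem_singleton_iff, hT,
      deleteEdges_adj]
    constructor
    · rintro ⟨hadj, hne, himp⟩
      refine ⟨⟨hadj, fun hf => ?_⟩, fun hy => ?_⟩
      · have h1 := himp hf
        rw [Sym2.eq_iff] at h1
        rcases h1 with ⟨h1, _⟩ | ⟨h1, _⟩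
        · exact hnev2 h1.symm
        · exact hne12 h1.symm
      · subst hy
        exact hne Sym2.eq_swap
    · rintro ⟨⟨hadj, hf⟩, hy⟩
      refine ⟨hadj, fun he => ?_, fun hin => absurd hin hf⟩
      rw [Sym2.eq_iff] at he
      rcases he with ⟨h1, h2⟩ | ⟨h1, h2⟩
      · exact hnev2 h1.symm
      · exact hy h2
  -- other vertices keep their neighborhoods
  have hnbrother : ∀ x, x ≠ v → x ≠ w₂ → x ≠ w₁ →
      T''.neighborSet x = T.neighborSet x := by
    intro x hxv hxw2 hxw1
    ext y
    simp only [mem_neighborSet, hT''adj, hT, deleteEdges_adj]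
    constructor
    · rintro ⟨hadj, hne, himp⟩
      refine ⟨hadj, fun hf => ?_⟩
      have h1 := himp hf
      rw [Sym2.eq_iff] at h1
      rcases h1 with ⟨h1, _⟩ | ⟨h1, _⟩
      · exact hxv h1
      · exact hxw1 h1
    · rintro ⟨hadj, hf⟩
      refine ⟨hadj, fun he => ?_, fun hin => absurd hin hf⟩
      rw [Sym2.eq_iff] at he
      rcases he with ⟨h1, _⟩ | ⟨h1, _⟩
      · exact hxv h1
      · exact hxw2 h1
  -- T'' is acyclic
  have hT''ac : T''.IsAcyclic := by
    intro x c hc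
    have hv : v ∉ c.support := no_cycle_through_leaf hnbrv hc
    have hq : ∀ e ∈ c.edges, e ∈ T.edgeSet := by
      intro e he
      have heG : e ∈ T''.edgeSet := c.edges_subset_edgeSet he
      rw [hT'', edgeSet_deleteEdges] at heG
      rw [hT, edgeSet_deleteEdges]
      refine ⟨heG.1, fun hf => ?_⟩
      have hne1 : e ≠ s(v, w₁) := by
        rintro rfl
        exact hv (c.fst_mem_support_of_mem_edges he)
      apply heG.2
      rw [hF'']
      exact Set.mem_insert_iff.mpr (Or.inr ⟨hf, by simpa using hne1⟩)
    exact hac (c.transfer T hq) (hc.transfer hq)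
  -- cardinality
  have hfin : F.Finite := Set.toFinite F
  have hcard : F''.ncard = F.ncard := by
    have h1 : s(v, w₂) ∉ F \ {s(v, w₁)} := fun h => hvw2F h.1
    rw [hF'', Set.ncard_insert_of_notMem h1 hfin.diff,
      Set.ncard_diff_singleton_of_mem hvw1]
    have h2 : 0 < F.ncard := (Set.ncard_pos hfin).mpr ⟨_, hvw1⟩
    omega
  -- leaves
  have hsubset : leavesOf T ⊆ leavesOf T'' := by
    intro x hx
    simp only [leavesOf, Set.mem_setOf_eq] at hx ⊢
    by_cases hxv : x = v
    · subst hxv; rw [hnbrv]; exact Set.ncard_singleton _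
    by_cases hxw2 : x = w₂
    · rw [hxw2] at hx
      have h2 : (T.neighborSet w₂).ncard = 2 := hw₂D2
      omega
    by_cases hxw1 : x = w₁
    · rw [hxw1] at hx
      have h2 : (T.neighborSet w₁).ncard = 2 := hw1D2
      omega
    · rw [hnbrother x hxv hxw2 hxw1]; exact hx
  have hw2leaf : w₂ ∈ leavesOf T'' := by
    simp only [leavesOf, Set.mem_setOf_eq]
    have hm : v ∈ T.neighborSet w₂ := hTvw2.symm
    rw [hnbrw2, Set.ncard_diff_singleton_of_mem hm]
    have h2 : (T.neighborSet w₂).ncard = 2 := hw₂D2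
    omega
  have hw2not : w₂ ∉ leavesOf T := by
    simp only [leavesOf, Set.mem_setOf_eq]
    have h2 : (T.neighborSet w₂).ncard = 2 := hw₂D2
    omega
  constructor
  · refine ⟨⟨?_, hT''ac⟩, fun F' hF' => ?_⟩
    · rw [hF'']
      intro e he
      rcases Set.mem_insert_iff.mp he with rfl | ⟨he', -⟩
      · exact hvw2G
      · exact hsub he'
    · rw [hcard]; exact hmin F' hF'
  · exact ⟨hsubset, fun h => hw2not (h hw2leaf)⟩
end

section
/- Let G be a connected graph and F a minimum feedback edge set of G such that no single-edge swap of the following four kinds is possible: (i) there are no vertices u, f, w_1, w_2 with w_1 ≠ w_2, w_2 ≠ u, u ≠ w_1, where u, f form an F-pair, w_2 is the unique neighbor of f in T(F) that F-links f to u, w_1 F-links w_2 to u, and fw_1 ∈ F; (ii) there are no vertices u, f, v, w_1, w_2 where u, f form an F-pair with |P_F(u,f)| ≥ 4, v ∉ leaves(T(F)) ∪ P_F(u,f), w_1 and w_2 are adjacent vertices of P*_F(u,f), vw_1 ∈ F, and w_2 F-links v and w_1; (iii) there are no vertices f, u, v, z, w_1, w_2 where v ∈ leaves(T(F)) ∖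 {f}, w_2 ∈ D_2 is the unique neighbor of v in T(F), u, f form an F-pair, z, v form an F-pair, u F-links f to z, w_1 ∈ P*_F(u,f), and vw_1 ∈ F; and (iv) there are no vertices f, u, v, z, w_1, w_2, w_3 where v ∈ leaves(T(F)), w_3 ∈ N_{T(F)}(u) ∩ P_F(u,f), w_2w_3 and vz are edges of T(F), u, f form an F-pair, z ∈ D_*, u F-links f to v, w_1 ∈ P_F(u,f) ∖ {w_2}, vw_1 ∈ F, and w_1 F-links w_2 to f. Then for every F-pair a, b with a, b ∉ D_2 and |P*_F(a,b)| ≥ 5, and every internal vertex w of P_F(a,b) at distance at least three in T(F) from both a and b, the degree of w in G equals the degree of w in T(F). -/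
open SimpleGraph

set_option linter.unusedSectionVars false
set_option maxHeartbeats 1000000

variable {V : Type} [DecidableEq V] {T : SimpleGraph V}

lemma aux_path_eq (hT : T.IsAcyclic) {u v : V} {p q : T.Walk u v}
    (hp : p.IsPath) (hq : q.IsPath) : p = q := by
  have := hT.path_unique ⟨p, hp⟩ ⟨q, hq⟩
  exact congrArg Subtype.val this

lemma aux_mem_all (hT : T.IsAcyclic) {u v z : V} {p : T.Walk u v}
    (hp : p.IsPath) (hz : z ∈ p.support) : ∀ q : T.Walk u v, z ∈ q.support := by
  intro q
  have : q.bypass = p := aux_path_eq hT q.bypass_isPath hp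
  exact q.support_bypass_subset (this ▸ hz)

lemma aux_onPath_iff (hT : T.IsAcyclic) {u v z : V} {p : T.Walk u v} (hp : p.IsPath) :
    OnPath T u v z ↔ z ∈ p.support :=
  ⟨fun h => h p, fun h => aux_mem_all hT hp h⟩

lemma aux_flinks_eq_onPath (u v f : V) : FLinks T u v f = OnPath T v f u := rfl

lemma aux_dist_eq (hT : T.IsAcyclic) {u v : V} {p : T.Walk u v} (hp : p.IsPath) :
    T.dist u v = p.length := by
  refine le_antisymm (SimpleGraph.dist_le p) ?_
  obtain ⟨q, hq⟩ := SimpleGraph.Reachable.exists_walk_length_eq_dist ⟨p⟩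
  have h1 : q.bypass = p := aux_path_eq hT q.bypass_isPath hp
  calc p.length = q.bypass.length := by rw [h1]
    _ ≤ q.length := SimpleGraph.Walk.length_bypass_le q
    _ = T.dist u v := hq

lemma aux_fpair_symm {u f : V} (h : IsFPair T u f) : IsFPair T f u := by
  obtain ⟨h1, h2, h3⟩ := h
  refine ⟨h1.symm, h2.symm, fun w hw => h3 w ⟨fun p => ?_, hw.2.2, hw.2.1⟩⟩
  have := hw.1 p.reverse
  simpa [SimpleGraph.Walk.support_reverse] using this
lemma aux_takeUntil_cons {u v w x : V} (h : T.Adj u v) (p : T.Walk v w)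
    (hne : u ≠ x) (hx : x ∈ (SimpleGraph.Walk.cons h p).support) (hx' : x ∈ p.support) :
    (SimpleGraph.Walk.cons h p).takeUntil x hx = SimpleGraph.Walk.cons h (p.takeUntil x hx') := by
  simp [SimpleGraph.Walk.takeUntil, dif_neg hne]

lemma aux_takeUntil_self {u v : V} (p : T.Walk u v) (h : u ∈ p.support) :
    p.takeUntil u h = SimpleGraph.Walk.nil := by
  cases p <;> simp [SimpleGraph.Walk.takeUntil]

lemma aux_order {u v c d : V} (p : T.Walk u v)
    (hc : c ∈ p.support) (hd : d ∈ p.support)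
    (h1 : c ∈ (p.takeUntil d hd).support) (h2 : d ∈ (p.takeUntil c hc).support) : c = d := by
  induction p with
  | nil =>
    simp only [SimpleGraph.Walk.mem_support_nil_iff] at hc hd
    rw [hc, hd]
  | @cons a a₂ v h q ih =>
    rcases eq_or_ne a d with rfl | had
    · rw [aux_takeUntil_self] at h1
      simp at h1
      exact h1
    · rcases eq_or_ne a c with rfl | hac
      · rw [aux_takeUntil_self] at h2
        simp at h2
        exact h2.symm
      · have hc' : c ∈ q.support := by
          rcases (by simpa using hc : c = a ∨ c ∈ q.support) with h' | h'
          · exact absurd h'.symm hac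
          · exact h'
        have hd' : d ∈ q.support := by
          rcases (by simpa using hd : d = a ∨ d ∈ q.support) with h' | h'
          · exact absurd h'.symm had
          · exact h'
        rw [aux_takeUntil_cons h q had _ hd'] at h1
        rw [aux_takeUntil_cons h q hac _ hc'] at h2
        simp only [SimpleGraph.Walk.support_cons, List.mem_cons] at h1 h2
        rcases h1 with h1 | h1
        · exact absurd h1.symm hac
        · rcases h2 with h2 | h2
          · exact absurd h2.symm had
          · exact ih hc' hd' h1 h2
lemma aux_disj {u v z y : V} (p : T.Walk u v) (hp : p.IsPath) (hz : z ∈ p.support)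
    (h1 : y ∈ (p.takeUntil z hz).support) (h2 : y ∈ (p.dropUntil z hz).support) : y = z := by
  by_contra hne
  have np := hp.support_nodup
  rw [← p.take_spec hz, SimpleGraph.Walk.support_append, List.nodup_append] at np
  have h2' : y ∈ (p.dropUntil z hz).support.tail := by
    rw [SimpleGraph.Walk.support_eq_cons, List.mem_cons] at h2
    rcases h2 with h2 | h2
    · exact absurd h2 hne
    · exact h2
  exact np.2.2 y h1 y h2' rfl

lemma aux_adj_eq_second (hT : T.IsAcyclic) {x c u w' : V} (h : T.Adj x c) (d' : T.Walk c u)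
    (hd : (SimpleGraph.Walk.cons h d').IsPath) (hadj : T.Adj x w')
    (hw' : w' ∈ (SimpleGraph.Walk.cons h d').support) : w' = c := by
  have hxw : x ≠ w' := hadj.ne
  have hw'' : w' ∈ d'.support := by
    rcases (by simpa using hw' : w' = x ∨ w' ∈ d'.support) with h' | h'
    · exact absurd h'.symm hxw
    · exact h'
  have hP2 : (SimpleGraph.Walk.cons h (d'.takeUntil w' hw'')).IsPath := by
    have := hd.takeUntil hw'
    rwa [aux_takeUntil_cons h d' hxw hw' hw''] at this
  have hP1 : (SimpleGraph.Walk.cons hadj SimpleGraph.Walk.nil).IsPath := by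
    simp [hxw]
  have heq := aux_path_eq hT hP1 hP2
  have hs := congrArg SimpleGraph.Walk.support heq
  simp only [SimpleGraph.Walk.support_cons, SimpleGraph.Walk.support_nil] at hs
  have : [w'] = (d'.takeUntil w' hw'').support := by
    injection hs
  rw [SimpleGraph.Walk.support_eq_cons] at this
  injection this.symm with h1 _
  exact h1.symm

lemma aux_nbr (hT : T.IsAcyclic) {a b z : V} (p : T.Walk a b) (hp : p.IsPath)
    (hz : z ∈ p.support) (hza : z ≠ a) (hzb : z ≠ b)
    (hz2 : (T.neighborSet z).ncard = 2) :
    ∃ y₁ y₂, T.neighborSet z = {y₁, y₂} ∧ T.Adj z y₁ ∧ T.Adj z y₂ ∧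
      y₁ ∈ (p.takeUntil z hz).support ∧ y₂ ∈ (p.dropUntil z hz).support ∧
      y₁ ≠ y₂ := by
  obtain ⟨y₁, h1, t1, ht1⟩ := SimpleGraph.Walk.exists_eq_cons_of_ne (by exact hza)
    (p.takeUntil z hz).reverse
  obtain ⟨y₂, h2, t2, ht2⟩ := SimpleGraph.Walk.exists_eq_cons_of_ne hzb (p.dropUntil z hz)
  have hy1 : y₁ ∈ (p.takeUntil z hz).support := by
    have : y₁ ∈ (p.takeUntil z hz).reverse.support := by
      rw [ht1]; simp
    simpa [SimpleGraph.Walk.support_reverse] using this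
  have hy2 : y₂ ∈ (p.dropUntil z hz).support := by
    rw [ht2]; simp
  have hne : y₁ ≠ y₂ := by
    intro hcon
    have := aux_disj p hp hz hy1 (hcon ▸ hy2)
    exact h1.ne' this
  obtain ⟨c, d, hcd, hNcd⟩ := Set.ncard_eq_two.mp hz2
  have m1 : y₁ ∈ ({c, d} : Set V) := hNcd ▸ h1
  have m2 : y₂ ∈ ({c, d} : Set V) := hNcd ▸ h2
  have : T.neighborSet z = {y₁, y₂} := by
    rw [hNcd]
    rcases m1 with rfl | rfl <;> rcases m2 with rfl | rfl
    · exact absurd rfl hne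
    · rfl
    · exact Set.pair_comm _ _
    · exact absurd rfl hne
  exact ⟨y₁, y₂, this, h1, h2, hy1, hy2, hne⟩
lemma aux_fes_reachable {V : Type} [Fintype V] [DecidableEq V] {G : SimpleGraph V}
    {F : Set (Sym2 V)} (hF : IsMinFES G F) {u v : V} (he : s(u, v) ∈ F) :
    (G.deleteEdges F).Reachable u v := by
  by_contra hreach
  set e : Sym2 V := s(u, v) with hedef
  set F' : Set (Sym2 V) := F \ {e} with hF'def
  have hFfin : F.Finite := Set.Finite.subset (Set.finite_univ) (Set.subset_univ F)
  have hsub : F' ⊆ G.edgeSet := fun x hx => hF.1.1 hx.1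
  have hTeq : (G.deleteEdges F').deleteEdges {e} = G.deleteEdges F := by
    rw [SimpleGraph.deleteEdges_deleteEdges]
    congr 1
    rw [hF'def, Set.diff_union_self]
    exact Set.union_eq_self_of_subset_right (Set.singleton_subset_iff.mpr he)
  have hbridge : (G.deleteEdges F').IsBridge e := by
    show (G.deleteEdges F').IsBridge s(u, v)
    rw [SimpleGraph.isBridge_iff]
    intro hc
    apply hreach
    have hc' : ((G.deleteEdges F').deleteEdges {e}).Reachable u v := hc
    rwa [hTeq] at hc'
  have hacy : (G.deleteEdges F').IsAcyclic := by
    intro z c hc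
    by_cases hec : e ∈ c.edges
    · exact hbridge.notMem_edges_of_isCycle hc hec
    · have hsub2 : ∀ x ∈ c.edges, x ∈ (G.deleteEdges F).edgeSet := by
        intro x hx
        have hx1 : x ∈ (G.deleteEdges F').edgeSet := c.edges_subset_edgeSet hx
        rw [SimpleGraph.edgeSet_deleteEdges] at hx1 ⊢
        refine ⟨hx1.1, fun hxF => ?_⟩
        have : x ∈ F' := ⟨hxF, fun hxe => hec (by simpa using hxe ▸ hx)⟩
        exact hx1.2 this
      exact hF.1.2 (c.transfer _ hsub2) (hc.transfer hsub2)
  have hless : F'.ncard < F.ncard := by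
    apply Set.ncard_lt_ncard _ hFfin
    constructor
    · exact Set.diff_subset
    · intro hcon
      have : e ∈ F' := hcon he
      exact this.2 rfl
  exact absurd (hF.2 F' ⟨hsub, hacy⟩) (by omega)
lemma aux_rule2 {V : Type} [DecidableEq V] {G : SimpleGraph V} {F : Set (Sym2 V)}
    (hT : (G.deleteEdges F).IsAcyclic)
    (hrule2 : ¬ ∃ u f w₁ w₂ : V,
        w₁ ≠ w₂ ∧ w₂ ≠ u ∧ u ≠ w₁ ∧
        IsFPair (G.deleteEdges F) u f ∧
        (G.deleteEdges F).Adj f w₂ ∧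
        FLinks (G.deleteEdges F) w₂ f u ∧
        (∀ w, (G.deleteEdges F).Adj f w → FLinks (G.deleteEdges F) w f u → w = w₂) ∧
        FLinks (G.deleteEdges F) w₁ w₂ u ∧
        s(f, w₁) ∈ F)
    {x u w : V} (hpair : IsFPair (G.deleteEdges F) u x)
    (d : (G.deleteEdges F).Walk x u) (hd : d.IsPath)
    (hwd : w ∈ d.support) (hwx : w ≠ x) (hwu : w ≠ u)
    (hnadj : ¬ (G.deleteEdges F).Adj x w) (hwF : s(x, w) ∈ F) : False := by
  obtain ⟨c, h, d', rfl⟩ := SimpleGraph.Walk.exists_eq_cons_of_ne hpair.1.symm d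
  have hwd' : w ∈ d'.support := by
    rcases (by simpa using hwd : w = x ∨ w ∈ d'.support) with h' | h'
    · exact absurd h' hwx
    · exact h'
  apply hrule2
  refine ⟨u, x, w, c, ?_, ?_, hwu.symm, hpair, h, ?_, ?_, ?_, hwF⟩
  · intro hcon
    exact hnadj (hcon ▸ h)
  · intro hcon
    subst hcon
    have : d' = SimpleGraph.Walk.nil := (SimpleGraph.Walk.isPath_iff_eq_nil (p := d')).mp hd.of_cons
    rw [this] at hwd'
    simp at hwd'
    exact hwu hwd'
  · intro q
    exact aux_mem_all hT hd (by simp) q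
  · intro w' hadj hlink
    exact aux_adj_eq_second hT h d' hd hadj (hlink (SimpleGraph.Walk.cons h d'))
  · intro q
    exact aux_mem_all hT hd.of_cons hwd' q
lemma aux_append_path {u v w : V} {p : T.Walk u v} {q : T.Walk v w}
    (hp : p.IsPath) (hq : q.IsPath)
    (hdisj : ∀ y, y ∈ p.support → y ∈ q.support → y = v) : (p.append q).IsPath := by
  rw [SimpleGraph.Walk.isPath_def, SimpleGraph.Walk.support_append, List.nodup_append]
  refine ⟨hp.support_nodup, ?_, ?_⟩
  · have := hq.support_nodup
    rw [SimpleGraph.Walk.support_eq_cons] at this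
    exact this.of_cons
  · intro y hy1 y' hy2 hyy'
    rw [← hyy'] at hy2
    have hyq : y ∈ q.support := by
      rw [SimpleGraph.Walk.support_eq_cons]
      exact List.mem_cons_of_mem _ hy2
    have hyv : y = v := hdisj y hy1 hyq
    have := hq.support_nodup
    rw [SimpleGraph.Walk.support_eq_cons] at this
    rw [List.nodup_cons] at this
    exact this.1 (hyv ▸ hy2)

lemma aux_W (hT : T.IsAcyclic) {a b : V} (p : T.Walk a b) (hp : p.IsPath)
    (hD2 : ∀ z ∈ p.support, z ≠ a → z ≠ b → (T.neighborSet z).ncard = 2) {w : V} :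
    ∀ {z} (t : T.Walk z w), w ∈ p.support → z ∉ p.support →
      a ∈ t.support ∨ b ∈ t.support := by
  intro z t
  induction t with
  | nil => intro hwp hzp; exact absurd hwp hzp
  | @cons z z₂ _ h t' ih =>
    intro hwp hzp
    by_cases hz₂ : z₂ ∈ p.support
    · rcases eq_or_ne z₂ a with rfl | hz₂a
      · exact Or.inl (by simp [SimpleGraph.Walk.start_mem_support])
      · rcases eq_or_ne z₂ b with rfl | hz₂b
        · exact Or.inr (by simp [SimpleGraph.Walk.start_mem_support])
        · exfalso
          obtain ⟨y₁, y₂, hN, _, _, hy₁, hy₂, _⟩ :=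
            aux_nbr hT p hp hz₂ hz₂a hz₂b (hD2 z₂ hz₂ hz₂a hz₂b)
          have hzN : z ∈ T.neighborSet z₂ := h.symm
          rw [hN] at hzN
          rcases hzN with rfl | rfl
          · exact hzp (p.support_takeUntil_subset hz₂ hy₁)
          · exact hzp (p.support_dropUntil_subset hz₂ hy₂)
    · rcases ih hwp hz₂ with h' | h'
      · exact Or.inl (by simp [h'])
      · exact Or.inr (by simp [h'])

lemma aux_first :
    ∀ {z a : V} (t : T.Walk z a), (T.neighborSet a).ncard ≠ 2 → ∃ (z' : V) (hz' : z' ∈ t.support),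
      (T.neighborSet z').ncard ≠ 2 ∧
      ∀ y ∈ (t.takeUntil z' hz').support, y ≠ z' → (T.neighborSet y).ncard = 2 := by
  intro z a t
  induction t with
  | nil =>
    intro hnd
    refine ⟨_, by simp, hnd, ?_⟩
    intro y hy hyne
    replace hy := SimpleGraph.Walk.support_takeUntil_subset _ _ hy
    simp at hy
    exact absurd hy hyne
  | @cons z c _ h t' ih =>
    intro hnd
    by_cases hz : (T.neighborSet z).ncard = 2
    · obtain ⟨z', hz', hnd', hall⟩ := ih hnd
      have hzz' : z ≠ z' := fun hc => hnd' (hc ▸ hz)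
      have hz'c : z' ∈ (SimpleGraph.Walk.cons h t').support := by simp [hz']
      refine ⟨z', hz'c, hnd', ?_⟩
      intro y hy hyne
      rw [aux_takeUntil_cons h t' hzz' hz'c hz'] at hy
      rcases (by simpa using hy : y = z ∨ y ∈ (t'.takeUntil z' hz').support) with rfl | hy'
      · exact hz
      · exact hall y hy' hyne
    · refine ⟨z, SimpleGraph.Walk.start_mem_support _, hz, ?_⟩
      intro y hy hyne
      rw [aux_takeUntil_self] at hy
      simp at hy
      exact absurd hy hyne
lemma aux_side {V : Type} [Fintype V] [DecidableEq V] {G : SimpleGraph V} {F : Set (Sym2 V)}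
    (hT : (G.deleteEdges F).IsAcyclic)
    (hrule3 : ¬ ∃ u f v w₁ w₂ : V,
        IsFPair (G.deleteEdges F) u f ∧
        4 ≤ {w : V | OnPath (G.deleteEdges F) u f w}.ncard ∧
        v ∉ leavesOf (G.deleteEdges F) ∪ {w : V | OnPath (G.deleteEdges F) u f w} ∧
        OnPathInt (G.deleteEdges F) u f w₁ ∧
        OnPathInt (G.deleteEdges F) u f w₂ ∧
        (G.deleteEdges F).Adj w₁ w₂ ∧
        s(v, w₁) ∈ F ∧
        FLinks (G.deleteEdges F) w₂ v w₁)
    (hrule4 : ¬ ∃ f u v z w₁ w₂ : V,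
        v ∈ leavesOf (G.deleteEdges F) ∧ v ≠ f ∧
        w₂ ∈ D2 (G.deleteEdges F) ∧
        (G.deleteEdges F).neighborSet v = {w₂} ∧
        IsFPair (G.deleteEdges F) u f ∧
        IsFPair (G.deleteEdges F) z v ∧
        FLinks (G.deleteEdges F) u f z ∧
        OnPathInt (G.deleteEdges F) u f w₁ ∧
        s(v, w₁) ∈ F)
    (hrule5 : ¬ ∃ f u v z w₁ w₂ w₃ : V,
        v ∈ leavesOf (G.deleteEdges F) ∧
        (G.deleteEdges F).Adj u w₃ ∧
        OnPath (G.deleteEdges F) u f w₃ ∧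
        (G.deleteEdges F).Adj w₂ w₃ ∧
        (G.deleteEdges F).Adj v z ∧
        IsFPair (G.deleteEdges F) u f ∧
        z ∈ Dstar (G.deleteEdges F) ∧
        FLinks (G.deleteEdges F) u f v ∧
        OnPath (G.deleteEdges F) u f w₁ ∧ w₁ ≠ w₂ ∧
        s(v, w₁) ∈ F ∧
        FLinks (G.deleteEdges F) w₁ w₂ f)
    {a b w x : V}
    (hpair : IsFPair (G.deleteEdges F) a b)
    (ha2 : a ∉ D2 (G.deleteEdges F))
    (p : (G.deleteEdges F).Walk a b) (hp : p.IsPath)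
    (hwp : w ∈ p.support) (hwa : w ≠ a) (hwb : w ≠ b)
    (hd1 : 3 ≤ (G.deleteEdges F).dist a w) (hd2 : 3 ≤ (G.deleteEdges F).dist b w)
    (hxp : x ∉ p.support) (hxF : s(w, x) ∈ F)
    (s' : (G.deleteEdges F).Walk x w) (hs' : s'.IsPath)
    (has' : a ∈ s'.support) : False := by
  have hD2all : ∀ z ∈ p.support, z ≠ a → z ≠ b →
      ((G.deleteEdges F).neighborSet z).ncard = 2 := by
    intro z hz hza hzb
    exact hpair.2.2 z ⟨fun t => aux_mem_all hT hp hz t, hza, hzb⟩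
  set q := p.takeUntil w hwp with hqdef
  set r := p.dropUntil w hwp with hrdef
  have hq : q.IsPath := hp.takeUntil hwp
  have hr : r.IsPath := hp.dropUntil hwp
  have hlenq : 3 ≤ q.length := by
    have := aux_dist_eq hT hq
    omega
  have hlenr : 3 ≤ r.length := by
    have h1 := aux_dist_eq hT hr.reverse
    rw [SimpleGraph.Walk.length_reverse] at h1
    omega
  have hbq : b ∉ q.support := by
    intro hbqs
    exact hwb (aux_disj p hp hwp hbqs r.end_mem_support).symm
  have har : a ∉ r.support := by
    intro hars
    exact hwa (aux_disj p hp hwp q.start_mem_support hars).symm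
  have hs'da : s'.dropUntil a has' = q := aux_path_eq hT (hs'.dropUntil has') hq
  have hws1 : w ∉ (s'.takeUntil a has').support := by
    intro hcon
    refine hwa (aux_disj s' hs' has' hcon ?_)
    rw [hs'da]
    exact q.end_mem_support
  -- key disjointness
  have hK : ∀ z, z ∈ (s'.takeUntil a has').support → z ∈ p.support → z = a := by
    intro z hz1 hz2
    by_contra hza
    have hzs' : z ∈ s'.support := s'.support_takeUntil_subset has' hz1
    have hzq : z ∉ q.support := by
      intro hcon
      apply hza
      refine aux_disj s' hs' has' hz1 ?_
      rw [hs'da]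
      exact hcon
    have hzr : z ∈ r.support := by
      have := hz2
      rw [← p.take_spec hwp, SimpleGraph.Walk.mem_support_append_iff] at this
      rcases this with h' | h'
      · exact absurd h' hzq
      · exact h'
    rcases eq_or_ne z b with rfl | hzb
    · -- z = b : then b before a and a before b on s'
      have hs'db : s'.dropUntil z hzs' = r.reverse :=
        aux_path_eq hT (hs'.dropUntil hzs') hr.reverse
      have hatake : a ∈ (s'.takeUntil z hzs').support := by
        have := has'
        rw [← s'.take_spec hzs', SimpleGraph.Walk.mem_support_append_iff] at this
        rcases this with h' | h'
        · exact h'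
        · rw [hs'db] at h'
          rw [SimpleGraph.Walk.support_reverse, List.mem_reverse] at h'
          exact absurd h' har
      exact hpair.1 (aux_order s' has' hzs' hatake hz1)
    · -- z interior, z in r
      have hrz : (r.takeUntil z hzr).reverse.IsPath := (hr.takeUntil hzr).reverse
      have hs'dz : s'.dropUntil z hzs' = (r.takeUntil z hzr).reverse :=
        aux_path_eq hT (hs'.dropUntil hzs') hrz
      have hatake : a ∈ (s'.takeUntil z hzs').support := by
        have := has'
        rw [← s'.take_spec hzs', SimpleGraph.Walk.mem_support_append_iff] at this
        rcases this with h' | h'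
        · exact h'
        · rw [hs'dz] at h'
          rw [SimpleGraph.Walk.support_reverse, List.mem_reverse] at h'
          exact absurd (r.support_takeUntil_subset hzr h') har
      exact hza (aux_order s' hzs' has' hz1 hatake)
  have hxa : x ≠ a := fun hcon => hxp (hcon ▸ p.start_mem_support)
  have hs₁ : (s'.takeUntil a has').IsPath := hs'.takeUntil has'
  have hxFs : s(x, w) ∈ F := by rw [Sym2.eq_swap]; exact hxF
  have honw : OnPath (G.deleteEdges F) a b w := fun t => aux_mem_all hT hp hwp t
  by_cases hleaf : x ∈ leavesOf (G.deleteEdges F)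
  · -- x is a leaf : rules 4 and 5
    obtain ⟨z₀, h0, t₀, ht₀⟩ := SimpleGraph.Walk.exists_eq_cons_of_ne hxa (s'.takeUntil a has')
    have hNx : (G.deleteEdges F).neighborSet x = {z₀} := by
      obtain ⟨c, hc⟩ := Set.ncard_eq_one.mp hleaf
      have hz : z₀ ∈ (G.deleteEdges F).neighborSet x := h0
      rw [hc] at hz
      rw [hc, hz]
    have hz₀s₁ : z₀ ∈ (s'.takeUntil a has').support := by rw [ht₀]; simp
    have hz₀s' : z₀ ∈ s'.support := s'.support_takeUntil_subset has' hz₀s₁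
    have hz₀w : z₀ ≠ w := fun hcon => hws1 (hcon ▸ hz₀s₁)
    obtain ⟨u₁, hadu₁, t₁, ht₁⟩ :=
      SimpleGraph.Walk.exists_eq_cons_of_ne hz₀w (s'.dropUntil z₀ hz₀s')
    have hu₁x : x ≠ u₁ := by
      intro hcon
      refine h0.ne (aux_disj s' hs' hz₀s' (s'.takeUntil z₀ hz₀s').start_mem_support ?_)
      rw [ht₁, hcon]
      simp
    have h2le : 2 ≤ ((G.deleteEdges F).neighborSet z₀).ncard := by
      have hsub : ({x, u₁} : Set V) ⊆ (G.deleteEdges F).neighborSet z₀ := by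
        rintro y (rfl | rfl)
        · exact h0.symm
        · exact hadu₁
      calc 2 = ({x, u₁} : Set V).ncard := (Set.ncard_pair hu₁x).symm
        _ ≤ _ := Set.ncard_le_ncard hsub (Set.toFinite _)
    have hxt₀ : x ∉ t₀.support := by
      have hcp : (SimpleGraph.Walk.cons h0 t₀).IsPath := ht₀ ▸ hs₁
      have := hcp.support_nodup
      simp only [SimpleGraph.Walk.support_cons, List.nodup_cons] at this
      exact this.1
    by_cases hz₀2 : ((G.deleteEdges F).neighborSet z₀).ncard = 2
    · -- rule 4
      obtain ⟨zs, hzst₀, hzsnd, hzsall⟩ := aux_first t₀ ha2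
      have hzsx : zs ≠ x := fun hcon => hxt₀ (hcon ▸ hzst₀)
      have hzss₁ : zs ∈ (s'.takeUntil a has').support := by rw [ht₀]; simp [hzst₀]
      have htup : (SimpleGraph.Walk.cons h0 (t₀.takeUntil zs hzst₀)).IsPath := by
        refine SimpleGraph.Walk.IsPath.cons ((ht₀ ▸ hs₁ :
          (SimpleGraph.Walk.cons h0 t₀).IsPath).of_cons.takeUntil hzst₀) ?_
        exact fun hcon => hxt₀ (t₀.support_takeUntil_subset hzst₀ hcon)
      have heqTU : (s'.takeUntil a has').takeUntil zs hzss₁ =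
          SimpleGraph.Walk.cons h0 (t₀.takeUntil zs hzst₀) :=
        aux_path_eq hT (hs₁.takeUntil hzss₁) htup
      have hfpzs : IsFPair (G.deleteEdges F) zs x := by
        refine ⟨hzsx, ⟨((s'.takeUntil a has').takeUntil zs hzss₁).reverse⟩, ?_⟩
        intro y hy
        have hyy := (aux_onPath_iff hT (hs₁.takeUntil hzss₁).reverse).mp hy.1
        rw [SimpleGraph.Walk.support_reverse, List.mem_reverse, heqTU] at hyy
        rcases (by simpa using hyy : y = x ∨ y ∈ (t₀.takeUntil zs hzst₀).support) with rfl | hy'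
        · exact absurd rfl hy.2.2
        · exact hzsall y hy' hy.2.1
      have hCpath : (p.reverse.append ((s'.takeUntil a has').dropUntil zs hzss₁).reverse).IsPath := by
        refine aux_append_path hp.reverse (hs₁.dropUntil hzss₁).reverse ?_
        intro y hy1 hy2
        rw [SimpleGraph.Walk.support_reverse, List.mem_reverse] at hy1 hy2
        exact hK y ((s'.takeUntil a has').support_dropUntil_subset hzss₁ hy2) hy1
      have hflzs : FLinks (G.deleteEdges F) a b zs := by
        intro t
        refine aux_mem_all hT hCpath ?_ t
        rw [SimpleGraph.Walk.mem_support_append_iff]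
        left
        rw [SimpleGraph.Walk.support_reverse, List.mem_reverse]
        exact p.start_mem_support
      exact hrule4 ⟨b, a, x, zs, w, z₀, hleaf,
        fun hcon => hxp (hcon ▸ p.end_mem_support), hz₀2, hNx, hpair, hfpzs, hflzs,
        ⟨honw, hwa, hwb⟩, hxFs⟩
    · -- rule 5
      have hz₀3 : z₀ ∈ Dstar (G.deleteEdges F) := by
        have : 3 ≤ ((G.deleteEdges F).neighborSet z₀).ncard := by omega
        exact this
      obtain ⟨c2, hac2, p2, hp2⟩ := SimpleGraph.Walk.exists_eq_cons_of_ne hpair.1 p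
      have hc2p : c2 ∈ p.support := by rw [hp2]; simp
      have hC'path : (p.reverse.append (s'.takeUntil a has').reverse).IsPath := by
        refine aux_append_path hp.reverse hs₁.reverse ?_
        intro y hy1 hy2
        rw [SimpleGraph.Walk.support_reverse, List.mem_reverse] at hy1 hy2
        exact hK y hy2 hy1
      have hflx : FLinks (G.deleteEdges F) a b x := by
        intro t
        refine aux_mem_all hT hC'path ?_ t
        rw [SimpleGraph.Walk.mem_support_append_iff]
        left
        rw [SimpleGraph.Walk.support_reverse, List.mem_reverse]
        exact p.start_mem_support
      exact hrule5 ⟨b, a, x, z₀, w, a, c2, hleaf, hac2,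
        fun t => aux_mem_all hT hp hc2p t, hac2, h0, hpair, hz₀3, hflx, honw, hwa, hxFs,
        fun t => aux_mem_all hT hp hwp t⟩
  · -- x is not a leaf : rule 3
    obtain ⟨y₁, y₂, hN, hady₁, _, hy₁q, _, _⟩ :=
      aux_nbr hT p hp hwp hwa hwb (hD2all w hwp hwa hwb)
    have hy₁p : y₁ ∈ p.support := p.support_takeUntil_subset hwp hy₁q
    have hy₁a : y₁ ≠ a := by
      intro hcon
      have hadj : (G.deleteEdges F).Adj a w := by
        rw [← hcon]; exact hady₁.symm
      have hPp : (SimpleGraph.Walk.cons hadj SimpleGraph.Walk.nil).IsPath := by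
        simp [Ne.symm hwa]
      have := congrArg SimpleGraph.Walk.length (aux_path_eq hT hPp hq)
      simp at this
      omega
    have hy₁b : y₁ ≠ b := fun hcon => hbq (hcon ▸ hy₁q)
    have hy₁s' : y₁ ∈ s'.support := by
      refine s'.support_dropUntil_subset has' ?_
      rw [hs'da]
      exact hy₁q
    have hncard : 4 ≤ {y : V | OnPath (G.deleteEdges F) a b y}.ncard := by
      have hsetp : {y : V | OnPath (G.deleteEdges F) a b y} = ↑p.support.toFinset := by
        ext y
        simp only [Set.mem_setOf_eq, Finset.mem_coe, List.mem_toFinset]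
        exact aux_onPath_iff hT hp
      rw [hsetp, Set.ncard_coe_finset, List.toFinset_card_of_nodup hp.support_nodup,
        SimpleGraph.Walk.length_support]
      have := congrArg SimpleGraph.Walk.length (p.take_spec hwp)
      rw [SimpleGraph.Walk.length_append] at this
      rw [← hrdef, ← hqdef] at this
      omega
    refine hrule3 ⟨a, b, x, w, y₁, hpair, hncard, ?_, ⟨honw, hwa, hwb⟩,
      ⟨fun t => aux_mem_all hT hp hy₁p t, hy₁a, hy₁b⟩, hady₁.symm.symm, hxFs,
      fun t => aux_mem_all hT hs' hy₁s' t⟩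
    intro hcon
    rcases hcon with hcon | hcon
    · exact hleaf hcon
    · exact hxp ((aux_onPath_iff hT hp).mp hcon)

/-- If none of the single-edge swaps of Reduction Rules 2–5 is applicable to
the minimum feedback edge set `F`, then every internal vertex `w` of the path
between an `F`-pair `a, b` (with `a, b ∉ D_2` and at least five internal
vertices) lying at distance at least three in `T(F)` from both endpoints has
the same degree in `G` as in `T(F)`. -/
theorem stmt8 (V : Type) [Fintype V] (G : SimpleGraph V) (hconn : G.Connected)
    (F : Set (Sym2 V)) (hF : IsMinFES G F)
    (hrule2 : ¬ ∃ u f w₁ w₂ : V,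
        w₁ ≠ w₂ ∧ w₂ ≠ u ∧ u ≠ w₁ ∧
        IsFPair (G.deleteEdges F) u f ∧
        (G.deleteEdges F).Adj f w₂ ∧
        FLinks (G.deleteEdges F) w₂ f u ∧
        (∀ w, (G.deleteEdges F).Adj f w → FLinks (G.deleteEdges F) w f u → w = w₂) ∧
        FLinks (G.deleteEdges F) w₁ w₂ u ∧
        s(f, w₁) ∈ F)
    (hrule3 : ¬ ∃ u f v w₁ w₂ : V,
        IsFPair (G.deleteEdges F) u f ∧
        4 ≤ {w : V | OnPath (G.deleteEdges F) u f w}.ncard ∧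
        v ∉ leavesOf (G.deleteEdges F) ∪ {w : V | OnPath (G.deleteEdges F) u f w} ∧
        OnPathInt (G.deleteEdges F) u f w₁ ∧
        OnPathInt (G.deleteEdges F) u f w₂ ∧
        (G.deleteEdges F).Adj w₁ w₂ ∧
        s(v, w₁) ∈ F ∧
        FLinks (G.deleteEdges F) w₂ v w₁)
    (hrule4 : ¬ ∃ f u v z w₁ w₂ : V,
        v ∈ leavesOf (G.deleteEdges F) ∧ v ≠ f ∧
        w₂ ∈ D2 (G.deleteEdges F) ∧
        (G.deleteEdges F).neighborSet v = {w₂} ∧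
        IsFPair (G.deleteEdges F) u f ∧
        IsFPair (G.deleteEdges F) z v ∧
        FLinks (G.deleteEdges F) u f z ∧
        OnPathInt (G.deleteEdges F) u f w₁ ∧
        s(v, w₁) ∈ F)
    (hrule5 : ¬ ∃ f u v z w₁ w₂ w₃ : V,
        v ∈ leavesOf (G.deleteEdges F) ∧
        (G.deleteEdges F).Adj u w₃ ∧
        OnPath (G.deleteEdges F) u f w₃ ∧
        (G.deleteEdges F).Adj w₂ w₃ ∧
        (G.deleteEdges F).Adj v z ∧
        IsFPair (G.deleteEdges F) u f ∧
        z ∈ Dstar (G.deleteEdges F) ∧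
        FLinks (G.deleteEdges F) u f v ∧
        OnPath (G.deleteEdges F) u f w₁ ∧ w₁ ≠ w₂ ∧
        s(v, w₁) ∈ F ∧
        FLinks (G.deleteEdges F) w₁ w₂ f) :
    ∀ a b : V, IsFPair (G.deleteEdges F) a b →
      a ∉ D2 (G.deleteEdges F) → b ∉ D2 (G.deleteEdges F) →
      5 ≤ {w : V | OnPathInt (G.deleteEdges F) a b w}.ncard →
      ∀ w : V, OnPathInt (G.deleteEdges F) a b w →
        3 ≤ (G.deleteEdges F).dist a w → 3 ≤ (G.deleteEdges F).dist b w →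
        (G.neighborSet w).ncard = ((G.deleteEdges F).neighborSet w).ncard := by
  classical
  intro a b hab ha2 hb2 hcard5 w hw hda hdb
  have hT : (G.deleteEdges F).IsAcyclic := hF.1.2
  obtain ⟨pw⟩ := hab.2.1
  set p := pw.bypass with hpdef
  have hp : p.IsPath := pw.bypass_isPath
  have hwp : w ∈ p.support := hw.1 p
  have hwa : w ≠ a := hw.2.1
  have hwb : w ≠ b := hw.2.2
  have hD2all : ∀ z ∈ p.support, z ≠ a → z ≠ b →
      ((G.deleteEdges F).neighborSet z).ncard = 2 := by
    intro z hz hza hzb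
    exact hab.2.2 z ⟨fun t => aux_mem_all hT hp hz t, hza, hzb⟩
  have hmain : ∀ x : V, G.Adj w x → s(w, x) ∈ F → False := by
    intro x hGadj hxF
    have hnadj : ¬ (G.deleteEdges F).Adj w x := by
      intro hc
      exact (SimpleGraph.deleteEdges_adj.mp hc).2 hxF
    have hxw : x ≠ w := hGadj.ne'
    have hxaF : s(x, w) ∈ F := by rw [Sym2.eq_swap]; exact hxF
    have hreach : (G.deleteEdges F).Reachable w x := aux_fes_reachable hF hxF
    by_cases hxp : x ∈ p.support
    · -- x on the path : rule 2
      rcases eq_or_ne x a with rfl | hxa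
      · exact aux_rule2 hT hrule2 (aux_fpair_symm hab) p hp hwp hwa hwb
          (fun hc => hnadj hc.symm) hxaF
      · rcases eq_or_ne x b with rfl | hxb
        · refine aux_rule2 hT hrule2 hab p.reverse hp.reverse ?_ hwb hwa
            (fun hc => hnadj hc.symm) hxaF
          rw [SimpleGraph.Walk.support_reverse, List.mem_reverse]
          exact hwp
        · have hsplit : w ∈ (p.takeUntil x hxp).support ∨ w ∈ (p.dropUntil x hxp).support := by
            rw [← SimpleGraph.Walk.mem_support_append_iff, p.take_spec hxp]
            exact hwp
          rcases hsplit with hcase | hcase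
          · -- w between a and x
            have hbt : b ∉ (p.takeUntil x hxp).support := by
              intro hcon
              exact hxb (aux_disj p hp hxp hcon (p.dropUntil x hxp).end_mem_support).symm
            have hfp : IsFPair (G.deleteEdges F) a x := by
              refine ⟨Ne.symm hxa, ⟨p.takeUntil x hxp⟩, ?_⟩
              intro y hy
              have hyy := (aux_onPath_iff hT (hp.takeUntil hxp)).mp hy.1
              refine hD2all y (p.support_takeUntil_subset hxp hyy) hy.2.1 ?_
              exact fun hcon => hbt (hcon ▸ hyy)
            refine aux_rule2 hT hrule2 hfp (p.takeUntil x hxp).reverse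
              (hp.takeUntil hxp).reverse ?_ (Ne.symm hxw) hwa
              (fun hc => hnadj hc.symm) hxaF
            rw [SimpleGraph.Walk.support_reverse, List.mem_reverse]
            exact hcase
          · -- w between x and b
            have hat : a ∉ (p.dropUntil x hxp).support := by
              intro hcon
              exact hxa (aux_disj p hp hxp (p.takeUntil x hxp).start_mem_support hcon).symm
            have hfp : IsFPair (G.deleteEdges F) b x := by
              refine ⟨Ne.symm hxb, ⟨(p.dropUntil x hxp).reverse⟩, ?_⟩
              intro y hy
              have hyy := (aux_onPath_iff hT (hp.dropUntil hxp).reverse).mp hy.1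
              rw [SimpleGraph.Walk.support_reverse, List.mem_reverse] at hyy
              refine hD2all y (p.support_dropUntil_subset hxp hyy) ?_ hy.2.1
              exact fun hcon => hat (hcon ▸ hyy)
            exact aux_rule2 hT hrule2 hfp (p.dropUntil x hxp) (hp.dropUntil hxp)
              hcase (Ne.symm hxw) hwb (fun hc => hnadj hc.symm) hxaF
    · -- x off the path : rules 3, 4, 5
      obtain ⟨s0⟩ := hreach
      set s' := s0.reverse.bypass with hs'def
      have hs' : s'.IsPath := s0.reverse.bypass_isPath
      rcases aux_W hT p hp hD2all s' hwp hxp with has' | hbs'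
      · exact aux_side hT hrule3 hrule4 hrule5 hab ha2 p hp hwp hwa hwb hda hdb
          hxp hxF s' hs' has'
      · refine aux_side hT hrule3 hrule4 hrule5 (aux_fpair_symm hab) hb2 p.reverse
          hp.reverse ?_ hwb hwa hdb hda ?_ hxF s' hs' hbs'
        · rw [SimpleGraph.Walk.support_reverse, List.mem_reverse]
          exact hwp
        · rw [SimpleGraph.Walk.support_reverse, List.mem_reverse]
          exact hxp
  have hset : G.neighborSet w = (G.deleteEdges F).neighborSet w := by
    ext y
    constructor
    · intro hy
      by_contra hny
      have hyF : s(w, y) ∈ F := by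
        by_contra hc
        exact hny (SimpleGraph.deleteEdges_adj.mpr ⟨hy, hc⟩)
      exact hmain y hy hyF
    · intro hy
      exact (SimpleGraph.deleteEdges_adj.mp hy).1
  rw [hset]
end

section
/- Let G be a connected graph, K ⊆ V(G), F a minimum feedback edge set of G, and let u, f be a strict F-pair, i.e., an F-pair such that every vertex of P*_F(u,f) has degree 2 in G. Suppose w_1 and w_2 are adjacent vertices of P*_F(u,f) with either {w_1, w_2} ⊆ K or {w_1, w_2} ∩ K = ∅. Let G' be the graph obtained from G by deleting w_1 and w_2 and adding a new vertex w* adjacent to all vertices of (N_G(w_1) ∪ N_G(w_2)) ∖ {w_1, w_2}, and let K' = (K ∖ {w_1, w_2}) ∪ {w*} if w_1, w_2 ∈ K and K' = K otherwise. Then there exists a set S with K ⊆ S ⊆ V(G) and G[S] a tree if and only if there exists a set S' with K' ⊆ S' ⊆ V(G') and G'[S'] a tree. -/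
open SimpleGraph

/-- `u, f` form a strict `F`-pair: an `F`-pair all of whose internal path
vertices have degree exactly two in `G` itself. -/
def IsStrictFPair {V : Type} (G : SimpleGraph V) (F : Set (Sym2 V)) (u f : V) : Prop :=
  IsFPair (G.deleteEdges F) u f ∧
    ∀ w, OnPathInt (G.deleteEdges F) u f w → (G.neighborSet w).ncard = 2

/-- The graph `G'` of Reduction Rule 6: delete `w₁` and `w₂` and add a new
vertex `w*` (the `Sum.inr` vertex) adjacent to all vertices of
`(N_G(w₁) ∪ N_G(w₂)) \ {w₁, w₂}`. -/
def glueGraph {V : Type} (G : SimpleGraph V) (w₁ w₂ : V) :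
    SimpleGraph ({x : V // x ≠ w₁ ∧ x ≠ w₂} ⊕ Unit) :=
  SimpleGraph.fromRel (fun a b =>
    match a, b with
    | Sum.inl x, Sum.inl y => G.Adj x.1 y.1
    | Sum.inl x, Sum.inr _ => G.Adj x.1 w₁ ∨ G.Adj x.1 w₂
    | Sum.inr _, _ => False)

lemma reachTransfer {α β : Type} {G : SimpleGraph α} {H : SimpleGraph β} (d : α → β)
    (h : ∀ x y, G.Adj x y → H.Reachable (d x) (d y)) {x y : α} (hr : G.Reachable x y) :
    H.Reachable (d x) (d y) := by
  obtain ⟨p⟩ := hr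
  induction p with
  | nil => exact Reachable.refl _
  | cons h' _ ih => exact (h _ _ h').trans ih

lemma acyclicComap {α β : Type} {G : SimpleGraph α} {H : SimpleGraph β} (f : G →g H)
    (hf : Function.Injective f) (hH : H.IsAcyclic) : G.IsAcyclic :=
  fun _ c hc => hH (c.map f) ((Walk.map_isCycle_iff_of_injective hf).2 hc)

lemma isTreeMap {α β : Type} {G : SimpleGraph α} {H : SimpleGraph β} (e : G ≃g H)
    (h : G.IsTree) : H.IsTree :=
  ⟨h.1.map e.toHom e.toEquiv.surjective, acyclicComap e.symm.toHom e.symm.toEquiv.injective h.2⟩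

lemma delAdj {α : Type} (X : SimpleGraph α) (e : Sym2 α) (u v : α) :
    (X \ fromEdgeSet {e}).Adj u v ↔ X.Adj u v ∧ s(u,v) ≠ e := by
  classical
  simp only [sdiff_adj, fromEdgeSet_adj, Set.mem_singleton_iff, not_and, not_ne_iff]
  constructor
  · rintro ⟨h1, h2⟩
    refine ⟨h1, fun he => h1.ne (h2 he)⟩
  · rintro ⟨h1, h2⟩
    exact ⟨h1, fun he => absurd he h2⟩


lemma delAdjS {α : Type} (X : SimpleGraph α) (E : Set (Sym2 α)) (u v : α) :
    (X \ fromEdgeSet E).Adj u v ↔ X.Adj u v ∧ s(u,v) ∉ E := by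
  simp only [sdiff_adj, fromEdgeSet_adj]
  constructor
  · rintro ⟨h1, h2⟩
    exact ⟨h1, fun he => h2 ⟨he, h1.ne⟩⟩
  · rintro ⟨h1, h2⟩
    exact ⟨h1, fun he => h2 he.1⟩

lemma firstStepPath {α : Type} {X : SimpleGraph α} {u v : α} (h : X.Reachable u v)
    (hne : u ≠ v) : ∃ (z : α) (q : X.Walk z v), X.Adj u z ∧ u ∉ q.support := by
  classical
  obtain ⟨p, hp⟩ : ∃ p : X.Walk u v, p.IsPath := ⟨h.some.toPath.1, h.some.toPath.2⟩
  cases p with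
  | nil => exact absurd rfl hne
  | cons h' q =>
    rw [Walk.cons_isPath_iff] at hp
    exact ⟨_, q, h', hp.2⟩

lemma singletonTree {α : Type} (X : SimpleGraph α) (v : α) :
    (X.induce {v}).IsTree := by
  haveI : Subsingleton (({v} : Set α)) := ⟨fun x y => Subtype.ext (x.2.trans y.2.symm)⟩
  constructor
  · exact Connected.mk (fun x y => by rw [Subsingleton.elim x y])
  · intro x c hc
    cases c with
    | nil => exact hc.not_of_nil
    | cons h' q => exact h'.ne (Subsingleton.elim _ _)


section Glue
variable {V : Type} (G : SimpleGraph V) (w₁ w₂ : V)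

lemma glue_adj_inl_inl (x y : {x : V // x ≠ w₁ ∧ x ≠ w₂}) :
    (glueGraph G w₁ w₂).Adj (Sum.inl x) (Sum.inl y) ↔ G.Adj x.1 y.1 := by
  simp only [glueGraph, fromRel_adj, ne_eq, Sum.inl.injEq]
  constructor
  · rintro ⟨-, h | h⟩
    · exact h
    · exact h.symm
  · intro h
    exact ⟨fun he => h.ne (congrArg Subtype.val he), Or.inl h⟩

lemma glue_adj_inl_inr (x : {x : V // x ≠ w₁ ∧ x ≠ w₂}) (u : Unit) :
    (glueGraph G w₁ w₂).Adj (Sum.inl x) (Sum.inr u) ↔ (G.Adj x.1 w₁ ∨ G.Adj x.1 w₂) := by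
  simp [glueGraph, fromRel_adj]

lemma glue_adj_inr_inr (u u' : Unit) :
    ¬ (glueGraph G w₁ w₂).Adj (Sum.inr u) (Sum.inr u') := by
  simp [glueGraph, fromRel_adj]

def glueSet (S : Set V) : Set ({x : V // x ≠ w₁ ∧ x ≠ w₂} ⊕ Unit) :=
  {z | (∃ x, z = Sum.inl x ∧ x.1 ∈ S) ∨ z = Sum.inr ()}

lemma mem_glueSet_inl (S : Set V) (x : {x : V // x ≠ w₁ ∧ x ≠ w₂}) :
    Sum.inl x ∈ glueSet w₁ w₂ S ↔ x.1 ∈ S := by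
  constructor
  · rintro (⟨x', he, hm⟩ | h)
    · cases Sum.inl.inj he; exact hm
    · exact absurd h (by simp)
  · intro h; exact Or.inl ⟨x, rfl, h⟩

lemma mem_glueSet_inr (S : Set V) : Sum.inr () ∈ glueSet w₁ w₂ S := Or.inr rfl

def inlSet (S : Set V) : Set ({x : V // x ≠ w₁ ∧ x ≠ w₂} ⊕ Unit) :=
  {z | ∃ x, z = Sum.inl x ∧ x.1 ∈ S}

/-- iso when w₁, w₂ not in S -/
noncomputable def isoNone (S : Set V) (h1 : w₁ ∉ S) (h2 : w₂ ∉ S) :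
    (G.induce S) ≃g ((glueGraph G w₁ w₂).induce (inlSet w₁ w₂ S)) := by
  refine ⟨Equiv.ofBijective
    (fun x => ⟨Sum.inl ⟨x.1, ⟨fun h => h1 (h ▸ x.2), fun h => h2 (h ▸ x.2)⟩⟩,
      ⟨_, rfl, x.2⟩⟩) ⟨?_, ?_⟩, ?_⟩
  · intro p q h
    simp only [Subtype.mk.injEq, Sum.inl.injEq] at h
    injection h with h; injection h with h; injection h with h; exact Subtype.ext h
  · rintro ⟨z, hz⟩
    obtain ⟨x, rfl, hx⟩ := hz
    exact ⟨⟨x.1, hx⟩, Subtype.ext (by simp)⟩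
  · intro p q
    simp only [Equiv.ofBijective_apply, comap_adj, Function.Embedding.coe_subtype]
    exact glue_adj_inl_inl G w₁ w₂ _ _
end Glue
section Glue
variable {V : Type} (G : SimpleGraph V) (w₁ w₂ : V)

open scoped Classical in
noncomputable def cmap (S : Set V) (x : ↥S) : ↥(glueSet w₁ w₂ S) :=
  if h : x.1 = w₁ ∨ x.1 = w₂ then ⟨Sum.inr (), mem_glueSet_inr w₁ w₂ S⟩
  else ⟨Sum.inl ⟨x.1, not_or.1 h⟩, (mem_glueSet_inl w₁ w₂ S _).2 x.2⟩

lemma cmap_pair {S : Set V} (x : ↥S) (h : x.1 = w₁ ∨ x.1 = w₂) :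
    cmap w₁ w₂ S x = ⟨Sum.inr (), mem_glueSet_inr w₁ w₂ S⟩ := by
  simp [cmap, h]

lemma cmap_npair {S : Set V} (x : ↥S) (h1 : x.1 ≠ w₁) (h2 : x.1 ≠ w₂) :
    cmap w₁ w₂ S x = ⟨Sum.inl ⟨x.1, h1, h2⟩, (mem_glueSet_inl w₁ w₂ S _).2 x.2⟩ := by
  simp [cmap, h1, h2]

def dmap (S : Set V) (h1 : w₁ ∈ S) (z : ↥(glueSet w₁ w₂ S)) : ↥S :=
  ⟨Sum.elim Subtype.val (fun _ => w₁) z.1, by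
    obtain ⟨z, hz⟩ := z
    rcases z with x | u
    · rcases hz with ⟨x', he, hm⟩ | h
      · cases Sum.inl.inj he; exact hm
      · exact absurd h (by simp)
    · exact h1⟩

@[simp] lemma dmap_inl (S : Set V) (h1 : w₁ ∈ S) (x) (hz) :
    dmap w₁ w₂ S h1 ⟨Sum.inl x, hz⟩ = ⟨x.1, (mem_glueSet_inl w₁ w₂ S x).1 hz⟩ := rfl

@[simp] lemma dmap_inr (S : Set V) (h1 : w₁ ∈ S) (u) (hz) :
    dmap w₁ w₂ S h1 ⟨Sum.inr u, hz⟩ = ⟨w₁, h1⟩ := rfl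

end Glue

lemma pairNeighbors {V : Type} {G : SimpleGraph V} {u v : V} (h : (G.neighborSet u).ncard = 2)
    (hv : G.Adj u v) : ∃ t, t ≠ v ∧ G.neighborSet u = {v, t} := by
  rcases Set.ncard_eq_two.1 h with ⟨x, y, hxy, hset⟩
  have hmem : v ∈ ({x, y} : Set V) := hset ▸ hv
  rcases Set.mem_insert_iff.1 hmem with rfl | hy
  · exact ⟨y, Ne.symm hxy, hset⟩
  · have : v = y := hy
    subst this
    exact ⟨x, hxy, hset.trans (Set.pair_comm x v)⟩

lemma leafRemoval {V : Type} {G : SimpleGraph V} {S : Set V} (hTree : (G.induce S).IsTree)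
    {v a₀ : V} (ha₀ : a₀ ∈ S) (hne : a₀ ≠ v)
    (honly : ∀ x ∈ S, G.Adj v x → x = a₀) :
    (G.induce (S \ {v})).IsTree := by
  classical
  obtain ⟨hc, ha⟩ := (isTree_iff _).1 hTree
  rw [isTree_iff]
  constructor
  · haveI : Nonempty ↥(S \ {v}) := ⟨⟨a₀, ha₀, hne⟩⟩
    set d : ↥S → ↥(S \ {v}) := fun x =>
      if h : x.1 = v then ⟨a₀, ha₀, hne⟩ else ⟨x.1, x.2, h⟩ with hd
    have hdv : ∀ (x : ↥S) (h : x.1 = v), d x = ⟨a₀, ha₀, hne⟩ := by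
      intro x h; rw [hd]; exact dif_pos h
    have hdn : ∀ (x : ↥S) (h : ¬ x.1 = v), d x = ⟨x.1, x.2, h⟩ := by
      intro x h; rw [hd]; exact dif_neg h
    have hstep : ∀ x y : ↥S, (G.induce S).Adj x y →
        (G.induce (S \ {v})).Reachable (d x) (d y) := by
      intro x y hxy
      have hxy' : G.Adj x.1 y.1 := hxy
      by_cases hx : x.1 = v <;> by_cases hy : y.1 = v
      · exfalso; rw [hx, hy] at hxy'; exact G.loopless.irrefl v hxy'
      · have hy' : y.1 = a₀ := honly y.1 y.2 (hx ▸ hxy')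
        rw [hdv x hx, hdn y hy,
          show (⟨y.1, y.2, hy⟩ : ↥(S \ {v})) = ⟨a₀, ha₀, hne⟩ from Subtype.ext hy']
      · have hx' : x.1 = a₀ := honly x.1 x.2 (hy ▸ hxy'.symm)
        rw [hdv y hy, hdn x hx,
          show (⟨x.1, x.2, hx⟩ : ↥(S \ {v})) = ⟨a₀, ha₀, hne⟩ from Subtype.ext hx']
      · rw [hdn x hx, hdn y hy]
        exact Adj.reachable
          (show (G.induce (S \ {v})).Adj ⟨x.1, x.2, hx⟩ ⟨y.1, y.2, hy⟩ from hxy')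
    refine Connected.mk ?_
    intro p q
    have hre := reachTransfer d hstep
      (hc.preconnected ⟨p.1, p.2.1⟩ ⟨q.1, q.2.1⟩)
    rw [hdn ⟨p.1, p.2.1⟩ p.2.2, hdn ⟨q.1, q.2.1⟩ q.2.2] at hre
    exact hre
  · exact acyclicComap
      (⟨fun x => ⟨x.1, x.2.1⟩, fun h => h⟩ : (G.induce (S \ {v})) →g (G.induce S))
      (fun x y h => by
        have h2 := Subtype.ext_iff.1 h
        exact Subtype.ext h2) ha

section Core
variable {V : Type} {G : SimpleGraph V} {w₁ w₂ a b : V}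

lemma glue_core (hGadj : G.Adj w₁ w₂)
    (hNa : G.neighborSet w₁ = {w₂, a}) (hNb : G.neighborSet w₂ = {w₁, b})
    (haw2 : a ≠ w₂) (hbw1 : b ≠ w₁) (hab : a ≠ b)
    (S : Set V) (h1 : w₁ ∈ S) (h2 : w₂ ∈ S) :
    (G.induce S).IsTree ↔ ((glueGraph G w₁ w₂).induce (glueSet w₁ w₂ S)).IsTree := by
  have hne : w₁ ≠ w₂ := hGadj.ne
  have hadj1a : G.Adj w₁ a := by
    have : a ∈ G.neighborSet w₁ := by rw [hNa]; simp
    exact this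
  have hadj2b : G.Adj w₂ b := by
    have : b ∈ G.neighborSet w₂ := by rw [hNb]; simp
    exact this
  have haw1 : a ≠ w₁ := fun h => G.loopless.irrefl _ (h ▸ hadj1a)
  have hbw2 : b ≠ w₂ := fun h => G.loopless.irrefl _ (h ▸ hadj2b)
  have hclass1 : ∀ x, G.Adj w₁ x → x = w₂ ∨ x = a := by
    intro x hx
    have : x ∈ G.neighborSet w₁ := hx
    rw [hNa] at this; simpa using this
  have hclass2 : ∀ x, G.Adj w₂ x → x = w₁ ∨ x = b := by
    intro x hx
    have : x ∈ G.neighborSet w₂ := hx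
    rw [hNb] at this; simpa using this
  have hval1 : ∀ (p : {x : V // x ≠ w₁ ∧ x ≠ w₂}), G.Adj p.1 w₁ → p.1 = a :=
    fun p h => (hclass1 p.1 h.symm).resolve_left p.2.2
  have hval2 : ∀ (p : {x : V // x ≠ w₁ ∧ x ≠ w₂}), G.Adj p.1 w₂ → p.1 = b :=
    fun p h => (hclass2 p.1 h.symm).resolve_left p.2.1
  set T : SimpleGraph ↥S := G.induce S with hT
  set T' := (glueGraph G w₁ w₂).induce (glueSet w₁ w₂ S) with hT'
  set c := cmap w₁ w₂ S with hc
  set d := dmap w₁ w₂ S h1 with hd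
  have mkDel : ∀ (e : Sym2 ↥S) (u v : ↥S), G.Adj u.1 v.1 → s(u,v) ≠ e →
      (T \ fromEdgeSet {e}).Adj u v := fun e u v h hn => (delAdj T e u v).2 ⟨h, hn⟩
  have mkDel' : ∀ (e : Sym2 ↥(glueSet w₁ w₂ S)) (u v : ↥(glueSet w₁ w₂ S)),
      (glueGraph G w₁ w₂).Adj u.1 v.1 → s(u,v) ≠ e →
      (T' \ fromEdgeSet {e}).Adj u v := fun e u v h hn => (delAdj T' e u v).2 ⟨h, hn⟩
  have hextract : ∀ (u v : {x : V // x ≠ w₁ ∧ x ≠ w₂}) (hu : Sum.inl u ∈ glueSet w₁ w₂ S)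
      (hv : Sum.inl v ∈ glueSet w₁ w₂ S),
      (⟨Sum.inl u, hu⟩ : ↥(glueSet w₁ w₂ S)) = ⟨Sum.inl v, hv⟩ → u.1 = v.1 :=
    fun u v hu hv h => Subtype.ext_iff.1 (Sum.inl.inj (Subtype.ext_iff.1 h))
  -- basic adjacency transfer, no deleted edges
  have hcadj : ∀ p q : ↥S, T.Adj p q → T'.Reachable (c p) (c q) := by
    intro p q hpq
    have hpq' : G.Adj p.1 q.1 := hpq
    by_cases hp : p.1 = w₁ ∨ p.1 = w₂ <;> by_cases hq : q.1 = w₁ ∨ q.1 = w₂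
    · rw [hc, cmap_pair _ _ _ hp, cmap_pair _ _ _ hq]
    · rw [hc, cmap_pair _ _ _ hp, cmap_npair _ _ _ (not_or.1 hq).1 (not_or.1 hq).2]
      refine Adj.reachable ?_
      show (glueGraph G w₁ w₂).Adj (Sum.inr ()) (Sum.inl _)
      refine ((glue_adj_inl_inr G w₁ w₂ _ ()).2 ?_).symm
      rcases hp with hp | hp
      · exact Or.inl (hp ▸ hpq'.symm)
      · exact Or.inr (hp ▸ hpq'.symm)
    · rw [hc, cmap_pair _ _ _ hq, cmap_npair _ _ _ (not_or.1 hp).1 (not_or.1 hp).2]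
      refine Adj.reachable ?_
      show (glueGraph G w₁ w₂).Adj (Sum.inl _) (Sum.inr ())
      refine (glue_adj_inl_inr G w₁ w₂ _ ()).2 ?_
      rcases hq with hq | hq
      · exact Or.inl (hq ▸ hpq')
      · exact Or.inr (hq ▸ hpq')
    · rw [hc, cmap_npair _ _ _ (not_or.1 hp).1 (not_or.1 hp).2,
        cmap_npair _ _ _ (not_or.1 hq).1 (not_or.1 hq).2]
      refine Adj.reachable ?_
      show (glueGraph G w₁ w₂).Adj (Sum.inl _) (Sum.inl _)
      exact (glue_adj_inl_inl G w₁ w₂ _ _).2 hpq'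
  have hdadj : ∀ z z' : ↥(glueSet w₁ w₂ S), T'.Adj z z' → T.Reachable (d z) (d z') := by
    rintro ⟨zv, hz⟩ ⟨zv', hz'⟩ hzz'
    have h2' : (glueGraph G w₁ w₂).Adj zv zv' := hzz'
    rcases zv with x | u <;> rcases zv' with y | u'
    · exact Adj.reachable
        (show T.Adj (d ⟨Sum.inl x, hz⟩) (d ⟨Sum.inl y, hz'⟩) from
          (glue_adj_inl_inl G w₁ w₂ _ _).1 h2')
    · rcases (glue_adj_inl_inr G w₁ w₂ _ _).1 h2' with h | h
      · exact Adj.reachable (show T.Adj (d ⟨Sum.inl x, hz⟩) (d ⟨Sum.inr u', hz'⟩) from h)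
      · exact (Adj.reachable (show T.Adj (d ⟨Sum.inl x, hz⟩) ⟨w₂, h2⟩ from h)).trans
          (Adj.reachable (show T.Adj ⟨w₂, h2⟩ (d ⟨Sum.inr u', hz'⟩) from hGadj.symm))
    · rcases (glue_adj_inl_inr G w₁ w₂ _ _).1 h2'.symm with h | h
      · exact (Adj.reachable (show T.Adj (d ⟨Sum.inl y, hz'⟩) (d ⟨Sum.inr u, hz⟩) from h)).symm
      · exact ((Adj.reachable (show T.Adj (d ⟨Sum.inl y, hz'⟩) ⟨w₂, h2⟩ from h)).trans
          (Adj.reachable (show T.Adj ⟨w₂, h2⟩ (d ⟨Sum.inr u, hz⟩) from hGadj.symm))).symm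
    · exact absurd h2' (glue_adj_inr_inr G w₁ w₂ _ _)
  constructor
  · intro hTree
    obtain ⟨hTc, hTa⟩ := (isTree_iff _).1 hTree
    rw [isTree_iff]
    constructor
    · -- connectivity
      have hsurj : ∀ z : ↥(glueSet w₁ w₂ S), ∃ p : ↥S, c p = z := by
        rintro ⟨zv, hz⟩
        rcases zv with x | ⟨⟩
        · have hmem := (mem_glueSet_inl w₁ w₂ S x).1 hz
          refine ⟨⟨x.1, hmem⟩, ?_⟩
          rw [hc, cmap_npair w₁ w₂ (S := S) ⟨x.1, hmem⟩ x.2.1 x.2.2]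

        · refine ⟨⟨w₁, h1⟩, ?_⟩
          rw [hc, cmap_pair w₁ w₂ (S := S) ⟨w₁, h1⟩ (Or.inl rfl)]
      haveI : Nonempty ↥(glueSet w₁ w₂ S) := ⟨⟨Sum.inr (), mem_glueSet_inr w₁ w₂ S⟩⟩
      refine Connected.mk ?_
      intro z z'
      obtain ⟨p, rfl⟩ := hsurj z
      obtain ⟨q, rfl⟩ := hsurj z'
      exact reachTransfer c hcadj (hTc.preconnected p q)
    · -- acyclicity of T'
      have hbridgeT : ∀ p q : ↥S, T.Adj p q →
          ¬ (T \ fromEdgeSet {s(p,q)}).Reachable p q := fun p q hpq =>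
        ((isBridge_iff).1 (isAcyclic_iff_forall_adj_isBridge.1 hTa hpq))
      have main2 : ∀ (x y : {x : V // x ≠ w₁ ∧ x ≠ w₂}) (hx : Sum.inl x ∈ glueSet w₁ w₂ S)
          (hy : Sum.inl y ∈ glueSet w₁ w₂ S),
          T'.Adj ⟨Sum.inl x, hx⟩ ⟨Sum.inl y, hy⟩ →
          ¬ (T' \ fromEdgeSet
              {s((⟨Sum.inl x, hx⟩ : ↥(glueSet w₁ w₂ S)), ⟨Sum.inl y, hy⟩)}).Reachable
            ⟨Sum.inl x, hx⟩ ⟨Sum.inl y, hy⟩ := by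
        intro x y hx hy hxy hr
        have hxy' : G.Adj x.1 y.1 := (glue_adj_inl_inl G w₁ w₂ x y).1 hxy
        have hxS : x.1 ∈ S := (mem_glueSet_inl w₁ w₂ S x).1 hx
        have hyS : y.1 ∈ S := (mem_glueSet_inl w₁ w₂ S y).1 hy
        refine hbridgeT ⟨x.1, hxS⟩ ⟨y.1, hyS⟩ hxy' (reachTransfer d ?_ hr)
        rintro ⟨zv, hzv⟩ ⟨zv', hzv'⟩ hzz
        rw [delAdj] at hzz
        obtain ⟨hadj0, hne0⟩ := hzz
        have hadj0' : (glueGraph G w₁ w₂).Adj zv zv' := hadj0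
        rcases zv with p | ⟨⟩ <;> rcases zv' with q | ⟨⟩
        · refine Adj.reachable (mkDel _ _ _ ((glue_adj_inl_inl G w₁ w₂ p q).1 hadj0') ?_)
          intro hcon
          apply hne0
          rcases Sym2.eq_iff.1 hcon with ⟨e1, e2⟩ | ⟨e1, e2⟩ <;>
            [skip; skip] <;>
          · have e1' := Subtype.ext_iff.1 e1
            have e2' := Subtype.ext_iff.1 e2
            first
            | exact Sym2.eq_iff.2 (Or.inl ⟨Subtype.ext (congrArg Sum.inl (Subtype.ext e1')),
                Subtype.ext (congrArg Sum.inl (Subtype.ext e2'))⟩)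
            | exact Sym2.eq_iff.2 (Or.inr ⟨Subtype.ext (congrArg Sum.inl (Subtype.ext e1')),
                Subtype.ext (congrArg Sum.inl (Subtype.ext e2'))⟩)
        · rcases (glue_adj_inl_inr G w₁ w₂ p ()).1 hadj0' with h | h
          · refine Adj.reachable (mkDel _ _ ⟨w₁, h1⟩ h ?_)
            intro hcon
            rcases Sym2.eq_iff.1 hcon with ⟨-, e2⟩ | ⟨-, e2⟩
            · exact y.2.1 (Subtype.ext_iff.1 e2).symm
            · exact x.2.1 (Subtype.ext_iff.1 e2).symm
          · refine (Adj.reachable (mkDel _ _ ⟨w₂, h2⟩ h ?_)).trans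
              (Adj.reachable (mkDel _ ⟨w₂, h2⟩ ⟨w₁, h1⟩ hGadj.symm ?_))
            · intro hcon
              rcases Sym2.eq_iff.1 hcon with ⟨-, e2⟩ | ⟨-, e2⟩
              · exact y.2.2 (Subtype.ext_iff.1 e2).symm
              · exact x.2.2 (Subtype.ext_iff.1 e2).symm
            · intro hcon
              rcases Sym2.eq_iff.1 hcon with ⟨e1, -⟩ | ⟨e1, -⟩
              · exact x.2.2 (Subtype.ext_iff.1 e1).symm
              · exact y.2.2 (Subtype.ext_iff.1 e1).symm
        · rcases (glue_adj_inl_inr G w₁ w₂ q ()).1 hadj0'.symm with h | h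
          · refine (Adj.reachable (mkDel _ _ ⟨w₁, h1⟩ h ?_)).symm
            intro hcon
            rcases Sym2.eq_iff.1 hcon with ⟨-, e2⟩ | ⟨-, e2⟩
            · exact y.2.1 (Subtype.ext_iff.1 e2).symm
            · exact x.2.1 (Subtype.ext_iff.1 e2).symm
          · refine ((Adj.reachable (mkDel _ _ ⟨w₂, h2⟩ h ?_)).trans
              (Adj.reachable (mkDel _ ⟨w₂, h2⟩ ⟨w₁, h1⟩ hGadj.symm ?_))).symm
            · intro hcon
              rcases Sym2.eq_iff.1 hcon with ⟨-, e2⟩ | ⟨-, e2⟩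
              · exact y.2.2 (Subtype.ext_iff.1 e2).symm
              · exact x.2.2 (Subtype.ext_iff.1 e2).symm
            · intro hcon
              rcases Sym2.eq_iff.1 hcon with ⟨e1, -⟩ | ⟨e1, -⟩
              · exact x.2.2 (Subtype.ext_iff.1 e1).symm
              · exact y.2.2 (Subtype.ext_iff.1 e1).symm
        · exact absurd hadj0' (glue_adj_inr_inr G w₁ w₂ () ())
      have main : ∀ (x : {x : V // x ≠ w₁ ∧ x ≠ w₂}) (hx : Sum.inl x ∈ glueSet w₁ w₂ S)
          (hz' : Sum.inr () ∈ glueSet w₁ w₂ S),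
          T'.Adj ⟨Sum.inl x, hx⟩ ⟨Sum.inr (), hz'⟩ →
          ¬ (T' \ fromEdgeSet
              {s((⟨Sum.inl x, hx⟩ : ↥(glueSet w₁ w₂ S)), ⟨Sum.inr (), hz'⟩)}).Reachable
            ⟨Sum.inl x, hx⟩ ⟨Sum.inr (), hz'⟩ := by
        intro x hx hz' hxy hr
        have hxS : x.1 ∈ S := (mem_glueSet_inl w₁ w₂ S x).1 hx
        rcases (glue_adj_inl_inr G w₁ w₂ x ()).1 hxy with h | h
        · -- x.1 = a : deleted edge of T is s(x, w₁)
          have hxa : x.1 = a := hval1 x h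
          refine hbridgeT ⟨x.1, hxS⟩ ⟨w₁, h1⟩ (show G.Adj x.1 w₁ from h)
            (reachTransfer d ?_ hr)
          rintro ⟨zv, hzv⟩ ⟨zv', hzv'⟩ hzz
          rw [delAdj] at hzz
          obtain ⟨hadj0, hne0⟩ := hzz
          have hadj0' : (glueGraph G w₁ w₂).Adj zv zv' := hadj0
          rcases zv with p | ⟨⟩ <;> rcases zv' with q | ⟨⟩
          · refine Adj.reachable (mkDel _ _ _ ((glue_adj_inl_inl G w₁ w₂ p q).1 hadj0') ?_)
            intro hcon
            rcases Sym2.eq_iff.1 hcon with ⟨-, e2⟩ | ⟨e1, -⟩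
            · exact q.2.1 (Subtype.ext_iff.1 e2)
            · exact p.2.1 (Subtype.ext_iff.1 e1)
          · rcases (glue_adj_inl_inr G w₁ w₂ p ()).1 hadj0' with h' | h'
            · exact absurd (Sym2.eq_iff.2 (Or.inl
                ⟨Subtype.ext (congrArg Sum.inl (Subtype.ext ((hval1 p h').trans hxa.symm))),
                 Subtype.ext (congrArg Sum.inr (Subsingleton.elim _ _))⟩)) hne0
            · refine (Adj.reachable (mkDel _ _ ⟨w₂, h2⟩ h' ?_)).trans
                (Adj.reachable (mkDel _ ⟨w₂, h2⟩ ⟨w₁, h1⟩ hGadj.symm ?_))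
              · intro hcon
                rcases Sym2.eq_iff.1 hcon with ⟨-, e2⟩ | ⟨e1, -⟩
                · exact hne (Subtype.ext_iff.1 e2).symm
                · exact p.2.1 (Subtype.ext_iff.1 e1)
              · intro hcon
                rcases Sym2.eq_iff.1 hcon with ⟨e1, -⟩ | ⟨e1, -⟩
                · exact haw2 ((Subtype.ext_iff.1 e1).trans hxa).symm
                · exact hne (Subtype.ext_iff.1 e1).symm
          · rcases (glue_adj_inl_inr G w₁ w₂ q ()).1 hadj0'.symm with h' | h'
            · exact absurd (Sym2.eq_iff.2 (Or.inr
                ⟨Subtype.ext (congrArg Sum.inr (Subsingleton.elim _ _)),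
                 Subtype.ext (congrArg Sum.inl (Subtype.ext ((hval1 q h').trans hxa.symm)))⟩)) hne0
            · refine ((Adj.reachable (mkDel _ _ ⟨w₂, h2⟩ h' ?_)).trans
                (Adj.reachable (mkDel _ ⟨w₂, h2⟩ ⟨w₁, h1⟩ hGadj.symm ?_))).symm
              · intro hcon
                rcases Sym2.eq_iff.1 hcon with ⟨-, e2⟩ | ⟨e1, -⟩
                · exact hne (Subtype.ext_iff.1 e2).symm
                · exact q.2.1 (Subtype.ext_iff.1 e1)
              · intro hcon
                rcases Sym2.eq_iff.1 hcon with ⟨e1, -⟩ | ⟨e1, -⟩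
                · exact haw2 ((Subtype.ext_iff.1 e1).trans hxa).symm
                · exact hne (Subtype.ext_iff.1 e1).symm
          · exact absurd hadj0' (glue_adj_inr_inr G w₁ w₂ () ())
        · -- x.1 = b : deleted edge of T is s(x, w₂); extend by edge w₁w₂
          have hxb : x.1 = b := hval2 x h
          have htrans : (T \ fromEdgeSet {s((⟨x.1, hxS⟩ : ↥S), ⟨w₂, h2⟩)}).Reachable
              ⟨x.1, hxS⟩ ⟨w₁, h1⟩ := by
            refine reachTransfer d ?_ hr
            rintro ⟨zv, hzv⟩ ⟨zv', hzv'⟩ hzz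
            rw [delAdj] at hzz
            obtain ⟨hadj0, hne0⟩ := hzz
            have hadj0' : (glueGraph G w₁ w₂).Adj zv zv' := hadj0
            rcases zv with p | ⟨⟩ <;> rcases zv' with q | ⟨⟩
            · refine Adj.reachable (mkDel _ _ _ ((glue_adj_inl_inl G w₁ w₂ p q).1 hadj0') ?_)
              intro hcon
              rcases Sym2.eq_iff.1 hcon with ⟨-, e2⟩ | ⟨e1, -⟩
              · exact q.2.2 (Subtype.ext_iff.1 e2)
              · exact p.2.2 (Subtype.ext_iff.1 e1)
            · rcases (glue_adj_inl_inr G w₁ w₂ p ()).1 hadj0' with h' | h'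
              · refine Adj.reachable (mkDel _ _ ⟨w₁, h1⟩ h' ?_)
                intro hcon
                rcases Sym2.eq_iff.1 hcon with ⟨-, e2⟩ | ⟨e1, -⟩
                · exact hne (Subtype.ext_iff.1 e2)
                · exact p.2.2 (Subtype.ext_iff.1 e1)
              · exact absurd (Sym2.eq_iff.2 (Or.inl
                  ⟨Subtype.ext (congrArg Sum.inl (Subtype.ext ((hval2 p h').trans hxb.symm))),
                   Subtype.ext (congrArg Sum.inr (Subsingleton.elim _ _))⟩)) hne0
            · rcases (glue_adj_inl_inr G w₁ w₂ q ()).1 hadj0'.symm with h' | h'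
              · refine (Adj.reachable (mkDel _ _ ⟨w₁, h1⟩ h' ?_)).symm
                intro hcon
                rcases Sym2.eq_iff.1 hcon with ⟨-, e2⟩ | ⟨e1, -⟩
                · exact hne (Subtype.ext_iff.1 e2)
                · exact q.2.2 (Subtype.ext_iff.1 e1)
              · exact absurd (Sym2.eq_iff.2 (Or.inr
                  ⟨Subtype.ext (congrArg Sum.inr (Subsingleton.elim _ _)),
                   Subtype.ext (congrArg Sum.inl (Subtype.ext ((hval2 q h').trans hxb.symm)))⟩)) hne0
            · exact absurd hadj0' (glue_adj_inr_inr G w₁ w₂ () ())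
          refine hbridgeT ⟨x.1, hxS⟩ ⟨w₂, h2⟩ (show G.Adj x.1 w₂ from h) ?_
          refine htrans.trans (Adj.reachable (mkDel _ ⟨w₁, h1⟩ ⟨w₂, h2⟩ hGadj ?_))
          intro hcon
          rcases Sym2.eq_iff.1 hcon with ⟨e1, -⟩ | ⟨e1, -⟩
          · exact x.2.1 (Subtype.ext_iff.1 e1).symm
          · exact hne (Subtype.ext_iff.1 e1)
      rw [isAcyclic_iff_forall_adj_isBridge]
      rintro ⟨zv, hz⟩ ⟨zv', hz'⟩ hzz'
      rcases zv with x | ⟨⟩ <;> rcases zv' with y | ⟨⟩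
      · exact (isBridge_iff).2 (main2 x y hz hz' hzz')
      · exact (isBridge_iff).2 (main x hz hz' hzz')
      · rw [Sym2.eq_swap]
        exact (isBridge_iff).2 (fun hr => main y hz' hz hzz'.symm hr)
      · exact absurd (show (glueGraph G w₁ w₂).Adj (Sum.inr ()) (Sum.inr ()) from hzz')
          (glue_adj_inr_inr G w₁ w₂ () ())
  · intro hTree
    obtain ⟨hTc, hTa⟩ := (isTree_iff _).1 hTree
    rw [isTree_iff]
    constructor
    · have hto : ∀ p : ↥S, T.Reachable p ⟨w₁, h1⟩ := by
        intro p
        by_cases hp1 : p.1 = w₁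
        · rw [show p = ⟨w₁, h1⟩ from Subtype.ext hp1]
        by_cases hp2 : p.1 = w₂
        · exact Adj.reachable (show G.Adj p.1 w₁ from hp2 ▸ hGadj.symm)
        · have hz : Sum.inl ⟨p.1, hp1, hp2⟩ ∈ glueSet w₁ w₂ S :=
            (mem_glueSet_inl w₁ w₂ S _).2 p.2
          have := reachTransfer d hdadj
            (hTc.preconnected ⟨Sum.inl ⟨p.1, hp1, hp2⟩, hz⟩ ⟨Sum.inr (), mem_glueSet_inr w₁ w₂ S⟩)
          rw [hd, dmap_inl, dmap_inr] at this
          exact (show T.Reachable p _ from (Subtype.ext (rfl : p.1 = p.1) : p = ⟨p.1, _⟩) ▸ this)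
      haveI : Nonempty ↥S := ⟨⟨w₁, h1⟩⟩
      exact Connected.mk fun p q => (hto p).trans (hto q).symm
    · -- acyclicity of T
      have hbridgeT' : ∀ z z' : ↥(glueSet w₁ w₂ S), T'.Adj z z' →
          ¬ (T' \ fromEdgeSet {s(z,z')}).Reachable z z' := fun z z' h =>
        ((isBridge_iff).1 (isAcyclic_iff_forall_adj_isBridge.1 hTa h))
      have hA : ∀ p q : ↥S, T.Adj p q → p.1 = w₁ → q.1 ≠ w₁ → q.1 ≠ w₂ →
          ¬ (T \ fromEdgeSet {s(p,q)}).Reachable p q := by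
        intro p q hpq hp1 hq1 hq2 hr
        have hpq' : G.Adj p.1 q.1 := hpq
        have hqa : q.1 = a := hval1 ⟨q.1, hq1, hq2⟩ (hp1 ▸ hpq'.symm)
        have hstep : ∀ x y : ↥S, (T \ fromEdgeSet {s(p,q)}).Adj x y →
            (T' \ fromEdgeSet {s(c p, c q)}).Reachable (c x) (c y) := by
          intro x y hxy
          rw [delAdj] at hxy
          obtain ⟨hadj0, hne0⟩ := hxy
          have hadj0' : G.Adj x.1 y.1 := hadj0
          rw [hc, cmap_pair w₁ w₂ (S := S) p (Or.inl hp1),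
            cmap_npair w₁ w₂ (S := S) q hq1 hq2]
          by_cases hx : x.1 = w₁ ∨ x.1 = w₂ <;> by_cases hy : y.1 = w₁ ∨ y.1 = w₂
          · rw [cmap_pair w₁ w₂ (S := S) x hx, cmap_pair w₁ w₂ (S := S) y hy]
          · obtain ⟨hy1, hy2⟩ := not_or.1 hy
            rw [cmap_pair w₁ w₂ (S := S) x hx, cmap_npair w₁ w₂ (S := S) y hy1 hy2]
            refine Adj.reachable (mkDel' _ _ _
              (((glue_adj_inl_inr G w₁ w₂ ⟨y.1, hy1, hy2⟩ ()).2 ?_).symm) ?_)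
            · rcases hx with hx | hx
              · exact Or.inl (hx ▸ hadj0'.symm)
              · exact Or.inr (hx ▸ hadj0'.symm)
            · intro hcon
              rcases Sym2.eq_iff.1 hcon with ⟨-, e2⟩ | ⟨e1, -⟩
              · have hyq : y.1 = q.1 := hextract _ _ _ _ e2
                rcases hx with hx | hx
                · exact hne0 (Sym2.eq_iff.2 (Or.inl
                    ⟨Subtype.ext (hx.trans hp1.symm), Subtype.ext hyq⟩))
                · rcases hclass2 y.1 (hx ▸ hadj0') with h' | h'
                  · exact hy1 h'
                  · exact hab ((hyq.trans hqa).symm.trans h')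
              · exact nomatch (Subtype.ext_iff.1 e1)
          · obtain ⟨hx1, hx2⟩ := not_or.1 hx
            rw [cmap_npair w₁ w₂ (S := S) x hx1 hx2, cmap_pair w₁ w₂ (S := S) y hy]
            refine (Adj.reachable (mkDel' _ _ _
              (((glue_adj_inl_inr G w₁ w₂ ⟨x.1, hx1, hx2⟩ ()).2 ?_).symm) ?_)).symm
            · rcases hy with hy | hy
              · exact Or.inl (hy ▸ hadj0')
              · exact Or.inr (hy ▸ hadj0')
            · intro hcon
              rcases Sym2.eq_iff.1 hcon with ⟨-, e2⟩ | ⟨e1, -⟩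
              · have hxq : x.1 = q.1 := hextract _ _ _ _ e2
                rcases hy with hy | hy
                · exact hne0 (Sym2.eq_iff.2 (Or.inr
                    ⟨Subtype.ext hxq, Subtype.ext (hy.trans hp1.symm)⟩))
                · rcases hclass2 x.1 (hy ▸ hadj0'.symm) with h' | h'
                  · exact hx1 h'
                  · exact hab ((hxq.trans hqa).symm.trans h')
              · exact nomatch (Subtype.ext_iff.1 e1)
          · obtain ⟨hx1, hx2⟩ := not_or.1 hx
            obtain ⟨hy1, hy2⟩ := not_or.1 hy
            rw [cmap_npair w₁ w₂ (S := S) x hx1 hx2, cmap_npair w₁ w₂ (S := S) y hy1 hy2]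
            refine Adj.reachable (mkDel' _ _ _
              ((glue_adj_inl_inl G w₁ w₂ _ _).2 hadj0') ?_)
            intro hcon
            rcases Sym2.eq_iff.1 hcon with ⟨e1, -⟩ | ⟨-, e2⟩
            · exact nomatch (Subtype.ext_iff.1 e1)
            · exact nomatch (Subtype.ext_iff.1 e2)
        have hres := reachTransfer c hstep hr
        rw [hc, cmap_pair w₁ w₂ (S := S) p (Or.inl hp1),
          cmap_npair w₁ w₂ (S := S) q hq1 hq2] at hres
        exact hbridgeT' ⟨Sum.inr (), mem_glueSet_inr w₁ w₂ S⟩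
          ⟨Sum.inl ⟨q.1, hq1, hq2⟩, (mem_glueSet_inl w₁ w₂ S _).2 q.2⟩
          (((glue_adj_inl_inr G w₁ w₂ ⟨q.1, hq1, hq2⟩ ()).2
            (Or.inl (hp1 ▸ hpq'.symm))).symm) hres
      have hB : ∀ p q : ↥S, T.Adj p q → p.1 = w₂ → q.1 ≠ w₁ → q.1 ≠ w₂ →
          ¬ (T \ fromEdgeSet {s(p,q)}).Reachable p q := by
        intro p q hpq hp2 hq1 hq2 hr
        have hpq' : G.Adj p.1 q.1 := hpq
        have hqb : q.1 = b := hval2 ⟨q.1, hq1, hq2⟩ (hp2 ▸ hpq'.symm)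
        have hstep : ∀ x y : ↥S, (T \ fromEdgeSet {s(p,q)}).Adj x y →
            (T' \ fromEdgeSet {s(c p, c q)}).Reachable (c x) (c y) := by
          intro x y hxy
          rw [delAdj] at hxy
          obtain ⟨hadj0, hne0⟩ := hxy
          have hadj0' : G.Adj x.1 y.1 := hadj0
          rw [hc, cmap_pair w₁ w₂ (S := S) p (Or.inr hp2),
            cmap_npair w₁ w₂ (S := S) q hq1 hq2]
          by_cases hx : x.1 = w₁ ∨ x.1 = w₂ <;> by_cases hy : y.1 = w₁ ∨ y.1 = w₂
          · rw [cmap_pair w₁ w₂ (S := S) x hx, cmap_pair w₁ w₂ (S := S) y hy]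
          · obtain ⟨hy1, hy2⟩ := not_or.1 hy
            rw [cmap_pair w₁ w₂ (S := S) x hx, cmap_npair w₁ w₂ (S := S) y hy1 hy2]
            refine Adj.reachable (mkDel' _ _ _
              (((glue_adj_inl_inr G w₁ w₂ ⟨y.1, hy1, hy2⟩ ()).2 ?_).symm) ?_)
            · rcases hx with hx | hx
              · exact Or.inl (hx ▸ hadj0'.symm)
              · exact Or.inr (hx ▸ hadj0'.symm)
            · intro hcon
              rcases Sym2.eq_iff.1 hcon with ⟨-, e2⟩ | ⟨e1, -⟩
              · have hyq : y.1 = q.1 := hextract _ _ _ _ e2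
                rcases hx with hx | hx
                · rcases hclass1 y.1 (hx ▸ hadj0') with h' | h'
                  · exact hy2 h'
                  · exact hab (h'.symm.trans (hyq.trans hqb))
                · exact hne0 (Sym2.eq_iff.2 (Or.inl
                    ⟨Subtype.ext (hx.trans hp2.symm), Subtype.ext hyq⟩))
              · exact nomatch (Subtype.ext_iff.1 e1)
          · obtain ⟨hx1, hx2⟩ := not_or.1 hx
            rw [cmap_npair w₁ w₂ (S := S) x hx1 hx2, cmap_pair w₁ w₂ (S := S) y hy]
            refine (Adj.reachable (mkDel' _ _ _
              (((glue_adj_inl_inr G w₁ w₂ ⟨x.1, hx1, hx2⟩ ()).2 ?_).symm) ?_)).symm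
            · rcases hy with hy | hy
              · exact Or.inl (hy ▸ hadj0')
              · exact Or.inr (hy ▸ hadj0')
            · intro hcon
              rcases Sym2.eq_iff.1 hcon with ⟨-, e2⟩ | ⟨e1, -⟩
              · have hxq : x.1 = q.1 := hextract _ _ _ _ e2
                rcases hy with hy | hy
                · rcases hclass1 x.1 (hy ▸ hadj0'.symm) with h' | h'
                  · exact hx2 h'
                  · exact hab (h'.symm.trans (hxq.trans hqb))
                · exact hne0 (Sym2.eq_iff.2 (Or.inr
                    ⟨Subtype.ext hxq, Subtype.ext (hy.trans hp2.symm)⟩))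
              · exact nomatch (Subtype.ext_iff.1 e1)
          · obtain ⟨hx1, hx2⟩ := not_or.1 hx
            obtain ⟨hy1, hy2⟩ := not_or.1 hy
            rw [cmap_npair w₁ w₂ (S := S) x hx1 hx2, cmap_npair w₁ w₂ (S := S) y hy1 hy2]
            refine Adj.reachable (mkDel' _ _ _
              ((glue_adj_inl_inl G w₁ w₂ _ _).2 hadj0') ?_)
            intro hcon
            rcases Sym2.eq_iff.1 hcon with ⟨e1, -⟩ | ⟨-, e2⟩
            · exact nomatch (Subtype.ext_iff.1 e1)
            · exact nomatch (Subtype.ext_iff.1 e2)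
        have hres := reachTransfer c hstep hr
        rw [hc, cmap_pair w₁ w₂ (S := S) p (Or.inr hp2),
          cmap_npair w₁ w₂ (S := S) q hq1 hq2] at hres
        exact hbridgeT' ⟨Sum.inr (), mem_glueSet_inr w₁ w₂ S⟩
          ⟨Sum.inl ⟨q.1, hq1, hq2⟩, (mem_glueSet_inl w₁ w₂ S _).2 q.2⟩
          (((glue_adj_inl_inr G w₁ w₂ ⟨q.1, hq1, hq2⟩ ()).2
            (Or.inr (hp2 ▸ hpq'.symm))).symm) hres
      have hC : ∀ p q : ↥S, T.Adj p q → p.1 ≠ w₁ → p.1 ≠ w₂ → q.1 ≠ w₁ → q.1 ≠ w₂ →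
          ¬ (T \ fromEdgeSet {s(p,q)}).Reachable p q := by
        intro p q hpq hp1 hp2 hq1 hq2 hr
        have hpq' : G.Adj p.1 q.1 := hpq
        have hstep : ∀ x y : ↥S, (T \ fromEdgeSet {s(p,q)}).Adj x y →
            (T' \ fromEdgeSet {s(c p, c q)}).Reachable (c x) (c y) := by
          intro x y hxy
          rw [delAdj] at hxy
          obtain ⟨hadj0, hne0⟩ := hxy
          have hadj0' : G.Adj x.1 y.1 := hadj0
          rw [hc, cmap_npair w₁ w₂ (S := S) p hp1 hp2,
            cmap_npair w₁ w₂ (S := S) q hq1 hq2]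
          by_cases hx : x.1 = w₁ ∨ x.1 = w₂ <;> by_cases hy : y.1 = w₁ ∨ y.1 = w₂
          · rw [cmap_pair w₁ w₂ (S := S) x hx, cmap_pair w₁ w₂ (S := S) y hy]
          · obtain ⟨hy1, hy2⟩ := not_or.1 hy
            rw [cmap_pair w₁ w₂ (S := S) x hx, cmap_npair w₁ w₂ (S := S) y hy1 hy2]
            refine Adj.reachable (mkDel' _ _ _
              (((glue_adj_inl_inr G w₁ w₂ ⟨y.1, hy1, hy2⟩ ()).2 ?_).symm) ?_)
            · rcases hx with hx | hx
              · exact Or.inl (hx ▸ hadj0'.symm)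
              · exact Or.inr (hx ▸ hadj0'.symm)
            · intro hcon
              rcases Sym2.eq_iff.1 hcon with ⟨e1, -⟩ | ⟨e1, -⟩
              · exact nomatch (Subtype.ext_iff.1 e1)
              · exact nomatch (Subtype.ext_iff.1 e1)
          · obtain ⟨hx1, hx2⟩ := not_or.1 hx
            rw [cmap_npair w₁ w₂ (S := S) x hx1 hx2, cmap_pair w₁ w₂ (S := S) y hy]
            refine (Adj.reachable (mkDel' _ _ _
              (((glue_adj_inl_inr G w₁ w₂ ⟨x.1, hx1, hx2⟩ ()).2 ?_).symm) ?_)).symm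
            · rcases hy with hy | hy
              · exact Or.inl (hy ▸ hadj0')
              · exact Or.inr (hy ▸ hadj0')
            · intro hcon
              rcases Sym2.eq_iff.1 hcon with ⟨e1, -⟩ | ⟨e1, -⟩
              · exact nomatch (Subtype.ext_iff.1 e1)
              · exact nomatch (Subtype.ext_iff.1 e1)
          · obtain ⟨hx1, hx2⟩ := not_or.1 hx
            obtain ⟨hy1, hy2⟩ := not_or.1 hy
            rw [cmap_npair w₁ w₂ (S := S) x hx1 hx2, cmap_npair w₁ w₂ (S := S) y hy1 hy2]
            refine Adj.reachable (mkDel' _ _ _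
              ((glue_adj_inl_inl G w₁ w₂ _ _).2 hadj0') ?_)
            intro hcon
            apply hne0
            rcases Sym2.eq_iff.1 hcon with ⟨e1, e2⟩ | ⟨e1, e2⟩
            · exact Sym2.eq_iff.2 (Or.inl
                ⟨Subtype.ext (hextract _ _ _ _ e1), Subtype.ext (hextract _ _ _ _ e2)⟩)
            · exact Sym2.eq_iff.2 (Or.inr
                ⟨Subtype.ext (hextract _ _ _ _ e1), Subtype.ext (hextract _ _ _ _ e2)⟩)
        have hres := reachTransfer c hstep hr
        rw [hc, cmap_npair w₁ w₂ (S := S) p hp1 hp2,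
          cmap_npair w₁ w₂ (S := S) q hq1 hq2] at hres
        exact hbridgeT' ⟨Sum.inl ⟨p.1, hp1, hp2⟩, (mem_glueSet_inl w₁ w₂ S _).2 p.2⟩
          ⟨Sum.inl ⟨q.1, hq1, hq2⟩, (mem_glueSet_inl w₁ w₂ S _).2 q.2⟩
          ((glue_adj_inl_inl G w₁ w₂ ⟨p.1, hp1, hp2⟩ ⟨q.1, hq1, hq2⟩).2 hpq') hres
      have hspecial : ¬ (T \ fromEdgeSet
          {s((⟨w₁, h1⟩ : ↥S), ⟨w₂, h2⟩)}).Reachable ⟨w₁, h1⟩ ⟨w₂, h2⟩ := by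
        intro hr
        obtain ⟨z, qw, hadjz, hzsup⟩ := firstStepPath hr
          (fun h => hne (Subtype.ext_iff.1 h))
        rw [delAdj] at hadjz
        obtain ⟨hadjz0, hnez⟩ := hadjz
        have hadjz0' : G.Adj w₁ z.1 := hadjz0
        have hz2 : z.1 ≠ w₂ := by
          intro h
          exact hnez (by rw [show z = (⟨w₂, h2⟩ : ↥S) from Subtype.ext h])
        have hza : z.1 = a := (hclass1 z.1 hadjz0').resolve_left hz2
        have hz1 : z.1 ≠ w₁ := by rw [hza]; exact haw1
        have hedges : ∀ f ∈ qw.edges, f ∈ (T \ fromEdgeSet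
            ({s((⟨w₁, h1⟩ : ↥S), ⟨w₂, h2⟩), s((⟨w₁, h1⟩ : ↥S), z)} :
              Set (Sym2 ↥S))).edgeSet := by
          intro f hf
          revert hf
          refine Sym2.ind (fun u v => ?_) f
          intro hf
          have hadje := qw.adj_of_mem_edges hf
          rw [delAdj] at hadje
          obtain ⟨hadje0, hnee⟩ := hadje
          have hu1 : u ≠ (⟨w₁, h1⟩ : ↥S) :=
            fun h => hzsup (h ▸ Walk.fst_mem_support_of_mem_edges qw hf)
          have hv1 : v ≠ (⟨w₁, h1⟩ : ↥S) :=
            fun h => hzsup (h ▸ Walk.snd_mem_support_of_mem_edges qw hf)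
          rw [SimpleGraph.mem_edgeSet, delAdjS]
          refine ⟨hadje0, ?_⟩
          intro hmem
          rcases Set.mem_insert_iff.1 hmem with h | h
          · exact hnee h
          · rcases Sym2.eq_iff.1 (Set.mem_singleton_iff.1 h) with ⟨e1, -⟩ | ⟨-, e2⟩
            · exact hu1 e1
            · exact hv1 e2
        have hreach2 : (T \ fromEdgeSet
            ({s((⟨w₁, h1⟩ : ↥S), ⟨w₂, h2⟩), s((⟨w₁, h1⟩ : ↥S), z)} :
              Set (Sym2 ↥S))).Reachable z ⟨w₂, h2⟩ := ⟨qw.transfer _ hedges⟩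
        have hstep : ∀ x y : ↥S, (T \ fromEdgeSet
            ({s((⟨w₁, h1⟩ : ↥S), ⟨w₂, h2⟩), s((⟨w₁, h1⟩ : ↥S), z)} :
              Set (Sym2 ↥S))).Adj x y →
            (T' \ fromEdgeSet {s(c z, c ⟨w₂, h2⟩)}).Reachable (c x) (c y) := by
          intro x y hxy
          rw [delAdjS] at hxy
          obtain ⟨hadj0, hnotin⟩ := hxy
          have hadj0' : G.Adj x.1 y.1 := hadj0
          rw [hc, cmap_npair w₁ w₂ (S := S) z hz1 hz2,
            cmap_pair w₁ w₂ (S := S) ⟨w₂, h2⟩ (Or.inr rfl)]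
          by_cases hx : x.1 = w₁ ∨ x.1 = w₂ <;> by_cases hy : y.1 = w₁ ∨ y.1 = w₂
          · rw [cmap_pair w₁ w₂ (S := S) x hx, cmap_pair w₁ w₂ (S := S) y hy]
          · obtain ⟨hy1, hy2⟩ := not_or.1 hy
            rcases hx with hx | hx
            · exfalso
              apply hnotin
              have hx' : x = (⟨w₁, h1⟩ : ↥S) := Subtype.ext hx
              have hy' : y = z := Subtype.ext
                (((hclass1 y.1 (hx ▸ hadj0')).resolve_left hy2).trans hza.symm)
              rw [hx', hy']
              exact Set.mem_insert_of_mem _ rfl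
            · rw [cmap_pair w₁ w₂ (S := S) x (Or.inr hx),
                cmap_npair w₁ w₂ (S := S) y hy1 hy2]
              refine Adj.reachable (mkDel' _ _ _
                (((glue_adj_inl_inr G w₁ w₂ ⟨y.1, hy1, hy2⟩ ()).2
                  (Or.inr (hx ▸ hadj0'.symm))).symm) ?_)
              intro hcon
              rcases Sym2.eq_iff.1 hcon with ⟨e1, -⟩ | ⟨-, e2⟩
              · exact nomatch (Subtype.ext_iff.1 e1)
              · have hyz : y.1 = z.1 := hextract _ _ _ _ e2
                exact hab (((hclass2 y.1 (hx ▸ hadj0')).resolve_left hy1 |>.symm).trans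
                  (hyz.trans hza)).symm
          · obtain ⟨hx1, hx2⟩ := not_or.1 hx
            rcases hy with hy | hy
            · exfalso
              apply hnotin
              have hy' : y = (⟨w₁, h1⟩ : ↥S) := Subtype.ext hy
              have hx' : x = z := Subtype.ext
                (((hclass1 x.1 (hy ▸ hadj0'.symm)).resolve_left hx2).trans hza.symm)
              rw [hx', hy']
              exact Set.mem_insert_of_mem _ Sym2.eq_swap
            · rw [cmap_npair w₁ w₂ (S := S) x hx1 hx2,
                cmap_pair w₁ w₂ (S := S) y (Or.inr hy)]
              refine (Adj.reachable (mkDel' _ _ _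
                (((glue_adj_inl_inr G w₁ w₂ ⟨x.1, hx1, hx2⟩ ()).2
                  (Or.inr (hy ▸ hadj0'))).symm) ?_)).symm
              intro hcon
              rcases Sym2.eq_iff.1 hcon with ⟨e1, -⟩ | ⟨-, e2⟩
              · exact nomatch (Subtype.ext_iff.1 e1)
              · have hxz : x.1 = z.1 := hextract _ _ _ _ e2
                exact hab (((hclass2 x.1 (hy ▸ hadj0'.symm)).resolve_left hx1 |>.symm).trans
                  (hxz.trans hza)).symm
          · obtain ⟨hx1, hx2⟩ := not_or.1 hx
            obtain ⟨hy1, hy2⟩ := not_or.1 hy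
            rw [cmap_npair w₁ w₂ (S := S) x hx1 hx2, cmap_npair w₁ w₂ (S := S) y hy1 hy2]
            refine Adj.reachable (mkDel' _ _ _
              ((glue_adj_inl_inl G w₁ w₂ _ _).2 hadj0') ?_)
            intro hcon
            rcases Sym2.eq_iff.1 hcon with ⟨-, e2⟩ | ⟨e1, -⟩
            · exact nomatch (Subtype.ext_iff.1 e2)
            · exact nomatch (Subtype.ext_iff.1 e1)
        have hres := reachTransfer c hstep hreach2
        rw [hc, cmap_npair w₁ w₂ (S := S) z hz1 hz2,
          cmap_pair w₁ w₂ (S := S) ⟨w₂, h2⟩ (Or.inr rfl)] at hres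
        exact hbridgeT' ⟨Sum.inl ⟨z.1, hz1, hz2⟩, (mem_glueSet_inl w₁ w₂ S _).2 z.2⟩
          ⟨Sum.inr (), mem_glueSet_inr w₁ w₂ S⟩
          ((glue_adj_inl_inr G w₁ w₂ ⟨z.1, hz1, hz2⟩ ()).2
            (Or.inl hadjz0'.symm)) hres
      rw [isAcyclic_iff_forall_adj_isBridge]
      intro p q hpq
      rw [isBridge_iff]
      show ¬ (T \ fromEdgeSet {s(p,q)}).Reachable p q
      by_cases hp1 : p.1 = w₁
      · by_cases hq2 : q.1 = w₂
        · have hP : p = (⟨w₁, h1⟩ : ↥S) := Subtype.ext hp1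
          have hQ : q = (⟨w₂, h2⟩ : ↥S) := Subtype.ext hq2
          rw [hP, hQ]
          exact hspecial
        · have hq1 : q.1 ≠ w₁ := fun h => hpq.ne (Subtype.ext (hp1.trans h.symm))
          exact hA p q hpq hp1 hq1 hq2
      · by_cases hp2 : p.1 = w₂
        · by_cases hq1 : q.1 = w₁
          · have hP : p = (⟨w₂, h2⟩ : ↥S) := Subtype.ext hp2
            have hQ : q = (⟨w₁, h1⟩ : ↥S) := Subtype.ext hq1
            rw [hP, hQ, Sym2.eq_swap]
            intro hr
            exact hspecial hr.symm
          · have hq2 : q.1 ≠ w₂ := fun h => hpq.ne (Subtype.ext (hp2.trans h.symm))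
            exact hB p q hpq hp2 hq1 hq2
        · by_cases hq1 : q.1 = w₁
          · rw [Sym2.eq_swap]
            intro hr
            exact hA q p hpq.symm hq1 hp1 hp2 hr.symm
          · by_cases hq2 : q.1 = w₂
            · rw [Sym2.eq_swap]
              intro hr
              exact hB q p hpq.symm hq2 hp1 hp2 hr.symm
            · exact hC p q hpq hp1 hp2 hq1 hq2
end Core

/-- Safeness of Reduction Rule 6 (glueing): if `w₁, w₂` are adjacent internal
vertices of the path of a strict `F`-pair `u, f`, both terminals or both
non-terminals, then `(G, K)` has an induced tree containing all terminals iff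
the glued instance `(G', K')` has one, where `w*` is a terminal of `K'` iff
`w₁, w₂ ∈ K`. -/
theorem stmt9 (V : Type) [Fintype V] (G : SimpleGraph V) (hconn : G.Connected)
    (K : Set V) (F : Set (Sym2 V)) (hF : IsMinFES G F)
    (u f w₁ w₂ : V)
    (hpair : IsStrictFPair G F u f)
    (hw₁ : OnPathInt (G.deleteEdges F) u f w₁)
    (hw₂ : OnPathInt (G.deleteEdges F) u f w₂)
    (hadj : (G.deleteEdges F).Adj w₁ w₂)
    (hK : (w₁ ∈ K ∧ w₂ ∈ K) ∨ (w₁ ∉ K ∧ w₂ ∉ K)) :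
    (∃ S : Set V, K ⊆ S ∧ (G.induce S).IsTree) ↔
    (∃ S' : Set ({x : V // x ≠ w₁ ∧ x ≠ w₂} ⊕ Unit),
        {z | (∃ x, z = Sum.inl x ∧ x.1 ∈ K) ∨ (z = Sum.inr () ∧ w₁ ∈ K)} ⊆ S' ∧
        ((glueGraph G w₁ w₂).induce S').IsTree) := by
  classical
  obtain ⟨⟨hFsub, hTacyc⟩, -⟩ := hF
  have hGadj : G.Adj w₁ w₂ := hadj.1
  have hne : w₁ ≠ w₂ := hGadj.ne
  have hdeg1 : (G.neighborSet w₁).ncard = 2 := hpair.2 w₁ hw₁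
  have hdeg2 : (G.neighborSet w₂).ncard = 2 := hpair.2 w₂ hw₂
  obtain ⟨a, haw2, hNa⟩ := pairNeighbors hdeg1 hGadj
  obtain ⟨b, hbw1, hNb⟩ := pairNeighbors hdeg2 hGadj.symm
  have hGadj1a : G.Adj w₁ a := by
    have : a ∈ G.neighborSet w₁ := by rw [hNa]; exact Set.mem_insert_of_mem _ rfl
    exact this
  have hGadj2b : G.Adj w₂ b := by
    have : b ∈ G.neighborSet w₂ := by rw [hNb]; exact Set.mem_insert_of_mem _ rfl
    exact this
  have haw1 : a ≠ w₁ := fun h => G.loopless.irrefl w₁ (h ▸ hGadj1a)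
  have hbw2 : b ≠ w₂ := fun h => G.loopless.irrefl w₂ (h ▸ hGadj2b)
  have hD2w1 : ((G.deleteEdges F).neighborSet w₁).ncard = 2 := hpair.1.2.2 w₁ hw₁
  have hD2w2 : ((G.deleteEdges F).neighborSet w₂).ncard = 2 := hpair.1.2.2 w₂ hw₂
  have hTN1 : (G.deleteEdges F).neighborSet w₁ = G.neighborSet w₁ :=
    Set.eq_of_subset_of_ncard_le (fun x hx => (deleteEdges_le _) hx)
      (by rw [hdeg1, hD2w1]) (Set.toFinite _)
  have hTN2 : (G.deleteEdges F).neighborSet w₂ = G.neighborSet w₂ :=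
    Set.eq_of_subset_of_ncard_le (fun x hx => (deleteEdges_le _) hx)
      (by rw [hdeg2, hD2w2]) (Set.toFinite _)
  have hTadj1a : (G.deleteEdges F).Adj w₁ a := by
    have : a ∈ (G.deleteEdges F).neighborSet w₁ := by
      rw [hTN1, hNa]; exact Set.mem_insert_of_mem _ rfl
    exact this
  have hTadj2b : (G.deleteEdges F).Adj w₂ b := by
    have : b ∈ (G.deleteEdges F).neighborSet w₂ := by
      rw [hTN2, hNb]; exact Set.mem_insert_of_mem _ rfl
    exact this
  have hab : a ≠ b := by
    intro hcon
    have hbr := (isAcyclic_iff_forall_adj_isBridge.1 hTacyc) hadj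
    refine (isBridge_iff.1 hbr) ?_
    refine (Adj.reachable ((delAdj (G.deleteEdges F) s(w₁, w₂) w₁ a).2 ⟨hTadj1a, ?_⟩)).trans
      (Adj.reachable ((delAdj (G.deleteEdges F) s(w₁, w₂) a w₂).2
        ⟨(hcon.symm ▸ hTadj2b).symm, ?_⟩))
    · intro hc2
      rcases Sym2.eq_iff.1 hc2 with ⟨-, e2⟩ | ⟨e1, -⟩
      · exact haw2 e2
      · exact hne e1
    · intro hc2
      rcases Sym2.eq_iff.1 hc2 with ⟨e1, -⟩ | ⟨e1, -⟩
      · exact haw1 e1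
      · exact haw2 e1
  constructor
  · rintro ⟨S, hKS, hTree⟩
    by_cases h1 : w₁ ∈ S <;> by_cases h2 : w₂ ∈ S
    · refine ⟨glueSet w₁ w₂ S, ?_, (glue_core hGadj hNa hNb haw2 hbw1 hab S h1 h2).1 hTree⟩
      rintro z (⟨x, rfl, hxK⟩ | ⟨rfl, -⟩)
      · exact Or.inl ⟨x, rfl, hKS hxK⟩
      · exact Or.inr rfl
    · -- w₁ ∈ S, w₂ ∉ S
      have hKn : w₁ ∉ K ∧ w₂ ∉ K := by
        rcases hK with ⟨hk1, hk2⟩ | h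
        · exact absurd (hKS hk2) h2
        · exact h
      by_cases hex : ∃ z : ↥S, z.1 ≠ w₁
      · obtain ⟨z₀, hz₀⟩ := hex
        have hreach := ((isTree_iff _).1 hTree).1.preconnected ⟨w₁, h1⟩ z₀
        obtain ⟨z, -, hadjz, -⟩ := firstStepPath hreach
          (fun hcc => hz₀ (Subtype.ext_iff.1 hcc).symm)
        have hz' : G.Adj w₁ z.1 := hadjz
        have hza : z.1 = a := by
          have hmem : z.1 ∈ G.neighborSet w₁ := hz'
          rw [hNa] at hmem
          rcases Set.mem_insert_iff.1 hmem with h' | h'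
          · exact absurd (h' ▸ z.2) h2
          · exact h'
        have haS : a ∈ S := hza ▸ z.2
        have hT2 : (G.induce (S \ {w₁})).IsTree := by
          refine leafRemoval hTree haS haw1 ?_
          intro x hxS hadjx
          have hmem : x ∈ G.neighborSet w₁ := hadjx
          rw [hNa] at hmem
          rcases Set.mem_insert_iff.1 hmem with h' | h'
          · exact absurd (h' ▸ hxS) h2
          · exact h'
        refine ⟨inlSet w₁ w₂ (S \ {w₁}), ?_, isTreeMap (isoNone G w₁ w₂ (S \ {w₁})
          (fun hc => hc.2 rfl) (fun hc => h2 hc.1)) hT2⟩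
        rintro z' (⟨x, rfl, hxK⟩ | ⟨rfl, hw1K⟩)
        · exact ⟨x, rfl, ⟨hKS hxK, fun hcc => x.2.1 hcc⟩⟩
        · exact absurd hw1K hKn.1
      · push_neg at hex
        refine ⟨{Sum.inr ()}, ?_, singletonTree _ _⟩
        rintro z (⟨x, rfl, hxK⟩ | ⟨rfl, hw1K⟩)
        · exact absurd (hex ⟨x.1, hKS hxK⟩) x.2.1
        · exact absurd hw1K hKn.1
    · -- w₂ ∈ S, w₁ ∉ S
      have hKn : w₁ ∉ K ∧ w₂ ∉ K := by
        rcases hK with ⟨hk1, hk2⟩ | h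
        · exact absurd (hKS hk1) h1
        · exact h
      by_cases hex : ∃ z : ↥S, z.1 ≠ w₂
      · obtain ⟨z₀, hz₀⟩ := hex
        have hreach := ((isTree_iff _).1 hTree).1.preconnected ⟨w₂, h2⟩ z₀
        obtain ⟨z, -, hadjz, -⟩ := firstStepPath hreach
          (fun hcc => hz₀ (Subtype.ext_iff.1 hcc).symm)
        have hz' : G.Adj w₂ z.1 := hadjz
        have hzb : z.1 = b := by
          have hmem : z.1 ∈ G.neighborSet w₂ := hz'
          rw [hNb] at hmem
          rcases Set.mem_insert_iff.1 hmem with h' | h'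
          · exact absurd (h' ▸ z.2) h1
          · exact h'
        have hbS : b ∈ S := hzb ▸ z.2
        have hT2 : (G.induce (S \ {w₂})).IsTree := by
          refine leafRemoval hTree hbS hbw2 ?_
          intro x hxS hadjx
          have hmem : x ∈ G.neighborSet w₂ := hadjx
          rw [hNb] at hmem
          rcases Set.mem_insert_iff.1 hmem with h' | h'
          · exact absurd (h' ▸ hxS) h1
          · exact h'
        refine ⟨inlSet w₁ w₂ (S \ {w₂}), ?_, isTreeMap (isoNone G w₁ w₂ (S \ {w₂})
          (fun hc => h1 hc.1) (fun hc => hc.2 rfl)) hT2⟩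
        rintro z' (⟨x, rfl, hxK⟩ | ⟨rfl, hw1K⟩)
        · exact ⟨x, rfl, ⟨hKS hxK, fun hcc => x.2.2 hcc⟩⟩
        · exact absurd hw1K hKn.1
      · push_neg at hex
        refine ⟨{Sum.inr ()}, ?_, singletonTree _ _⟩
        rintro z (⟨x, rfl, hxK⟩ | ⟨rfl, hw1K⟩)
        · exact absurd (hex ⟨x.1, hKS hxK⟩) x.2.2
        · exact absurd hw1K hKn.1
    · refine ⟨inlSet w₁ w₂ S, ?_, isTreeMap (isoNone G w₁ w₂ S h1 h2) hTree⟩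
      rintro z (⟨x, rfl, hxK⟩ | ⟨rfl, hw1K⟩)
      · exact ⟨x, rfl, hKS hxK⟩
      · exact absurd (hKS hw1K) h1
  · rintro ⟨S', hK'S', hT'⟩
    by_cases hin : Sum.inr () ∈ S'
    · refine ⟨{x | ∃ h : x ≠ w₁ ∧ x ≠ w₂, Sum.inl ⟨x, h⟩ ∈ S'} ∪ {w₁, w₂}, ?_, ?_⟩
      · intro k hk
        by_cases hk1 : k = w₁
        · exact Or.inr (Or.inl hk1)
        by_cases hk2 : k = w₂
        · exact Or.inr (Or.inr hk2)
        · exact Or.inl ⟨⟨hk1, hk2⟩, hK'S' (Or.inl ⟨⟨k, hk1, hk2⟩, rfl, hk⟩)⟩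
      · have hSeq : S' = glueSet w₁ w₂
            ({x | ∃ h : x ≠ w₁ ∧ x ≠ w₂, Sum.inl ⟨x, h⟩ ∈ S'} ∪ {w₁, w₂}) := by
          ext z
          rcases z with x | ⟨⟩
          · rw [mem_glueSet_inl]
            constructor
            · intro hz
              exact Or.inl ⟨x.2, hz⟩
            · rintro (⟨h, hz⟩ | hp)
              · exact hz
              · rcases hp with hp | hp
                · exact absurd hp x.2.1
                · exact absurd hp x.2.2
          · exact ⟨fun _ => mem_glueSet_inr w₁ w₂ _, fun _ => hin⟩
        refine (glue_core hGadj hNa hNb haw2 hbw1 hab _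
          (Or.inr (Or.inl rfl)) (Or.inr (Or.inr rfl))).2 ?_
        rw [← hSeq]
        exact hT'
    · have hw1S : w₁ ∉ {x | ∃ h : x ≠ w₁ ∧ x ≠ w₂, Sum.inl ⟨x, h⟩ ∈ S'} :=
        fun ⟨h, _⟩ => h.1 rfl
      have hw2S : w₂ ∉ {x | ∃ h : x ≠ w₁ ∧ x ≠ w₂, Sum.inl ⟨x, h⟩ ∈ S'} :=
        fun ⟨h, _⟩ => h.2 rfl
      have hw1K : w₁ ∉ K := fun hk => hin (hK'S' (Or.inr ⟨rfl, hk⟩))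
      have hw2K : w₂ ∉ K := by
        rcases hK with ⟨hk1, -⟩ | ⟨-, hk2⟩
        · exact absurd hk1 hw1K
        · exact hk2
      refine ⟨{x | ∃ h : x ≠ w₁ ∧ x ≠ w₂, Sum.inl ⟨x, h⟩ ∈ S'}, ?_, ?_⟩
      · intro k hk
        have hk1 : k ≠ w₁ := fun h => hw1K (h ▸ hk)
        have hk2 : k ≠ w₂ := fun h => hw2K (h ▸ hk)
        exact ⟨⟨hk1, hk2⟩, hK'S' (Or.inl ⟨⟨k, hk1, hk2⟩, rfl, hk⟩)⟩
      · have hSeq : S' = inlSet w₁ w₂ {x | ∃ h : x ≠ w₁ ∧ x ≠ w₂, Sum.inl ⟨x, h⟩ ∈ S'} := by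
          ext z
          rcases z with x | ⟨⟩
          · constructor
            · intro hz
              exact ⟨x, rfl, x.2, hz⟩
            · rintro ⟨x', he, h, hz⟩
              cases Sum.inl.inj he
              exact hz
          · exact ⟨fun hz => absurd hz hin, fun h' => by obtain ⟨x', he, _⟩ := h'; exact nomatch he⟩
        refine isTreeMap (isoNone G w₁ w₂ _ hw1S hw2S).symm ?_
        rw [← hSeq]
        exact hT'
end
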